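/- arXiv:1704.08730 — 8 statements merged into one kernel-verified Lean document; each statement's English description precedes it below -/
import Mathlib

section
/- Let c = (c₁,c₂,c₃) ∈ ℝ³ and suppose the ODE (★) admits a C¹ solution on (-1,1). Then c₁ ≥ -1, c₂ ≥ -1, and c₃ ≥ c̄₃(c₁,c₂); that is, c ∈ J. -/
open Set Filter Real Topology

noncomputable section

/-- The Riccati-type ODE (★):
`(1-x²)U'(x) + 2x·U(x) + (1/2)U(x)² = c₁(1-x) + c₂(1+x) + c₃(1-x²)` at the point `x`. -/
def StarEq (c₁ c₂ c₃ : ℝ) (U : ℝ → ℝ) (x : ℝ) : Prop :=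
  (1 - x ^ 2) * deriv U x + 2 * x * U x + (1 / 2) * (U x) ^ 2
    = c₁ * (1 - x) + c₂ * (1 + x) + c₃ * (1 - x ^ 2)

/-- `U` is a C¹ solution of (★) on the set `s`. -/
def IsSolOn (c₁ c₂ c₃ : ℝ) (U : ℝ → ℝ) (s : Set ℝ) : Prop :=
  ContDiffOn ℝ 1 U s ∧ ∀ x ∈ s, StarEq c₁ c₂ c₃ U x

/-- `c̄₃(c₁,c₂) = -(1/2)(√(1+c₁)+√(1+c₂))(√(1+c₁)+√(1+c₂)+2)`. -/
def cbar (c₁ c₂ : ℝ) : ℝ :=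
  -(1 / 2) * (Real.sqrt (1 + c₁) + Real.sqrt (1 + c₂)) *
    (Real.sqrt (1 + c₁) + Real.sqrt (1 + c₂) + 2)

/-- `J = {c ∈ ℝ³ : c₁ ≥ -1, c₂ ≥ -1, c₃ ≥ c̄₃(c₁,c₂)}`. -/
def Jset : Set (ℝ × ℝ × ℝ) := {c | -1 ≤ c.1 ∧ -1 ≤ c.2.1 ∧ cbar c.1 c.2.1 ≤ c.2.2}

def tau1 (c₁ : ℝ) : ℝ := 2 - 2 * Real.sqrt (1 + c₁)
def tau2 (c₁ : ℝ) : ℝ := 2 + 2 * Real.sqrt (1 + c₁)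
def tau1' (c₂ : ℝ) : ℝ := -2 - 2 * Real.sqrt (1 + c₂)
def tau2' (c₂ : ℝ) : ℝ := -2 + 2 * Real.sqrt (1 + c₂)



set_option maxHeartbeats 1000000 in
lemma blowLeft (f F : ℝ → ℝ) (β K B : ℝ) (hβ : -1 < β) (hK : 0 < K)
    (hcont : ContinuousOn f (Ioc (-1) β))
    (hder : ∀ x ∈ Ioo (-1:ℝ) β, HasDerivAt f (F x) x)
    (hF : ∀ x ∈ Ioo (-1:ℝ) β, F x ≤ -(K/(1+x)))
    (hB : ∀ x ∈ Ioc (-1:ℝ) β, f x ≤ B) : False := by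
  set h : ℝ → ℝ := fun x => f x + K * Real.log (1+x) with hh
  have hlogc : ContinuousOn (fun x : ℝ => K * Real.log (1+x)) (Ioc (-1) β) := by
    apply ContinuousOn.mul continuousOn_const
    apply ContinuousOn.log (by fun_prop)
    intro x hx
    have := hx.1
    nlinarith [hx.1]
  have hanti : AntitoneOn h (Ioc (-1) β) := by
    apply antitoneOn_of_deriv_nonpos (convex_Ioc _ _) (hcont.add hlogc)
    · intro x hx
      rw [interior_Ioc] at hx
      have h1 : (0:ℝ) < 1 + x := by nlinarith [hx.1]
      exact ((hder x hx).add (((Real.hasDerivAt_log h1.ne').comp x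
        (((hasDerivAt_id x).const_add 1))).const_mul K)).differentiableAt.differentiableWithinAt
    · intro x hx
      rw [interior_Ioc] at hx
      have h1 : (0:ℝ) < 1 + x := by nlinarith [hx.1]
      have hd : HasDerivAt h (F x + K * ((1+x)⁻¹ * 1)) x :=
        (hder x hx).add (((Real.hasDerivAt_log h1.ne').comp x
          (((hasDerivAt_id x).const_add 1))).const_mul K)
      rw [(show HasDerivAt (f + fun x => K * Real.log (1 + x)) (F x + K * ((1+x)⁻¹ * 1)) x from hd).deriv]
      have := hF x hx
      rw [div_eq_mul_inv] at this
      nlinarith [this]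
  -- choose x close to -1
  set x₀ : ℝ := -1 + (1+β) * Real.exp (-(B - f β + 1)/K) with hx₀
  have hexp_pos : 0 < Real.exp (-(B - f β + 1)/K) := Real.exp_pos _
  have hexp_le : Real.exp (-(B - f β + 1)/K) ≤ 1 := by
    apply Real.exp_le_one_iff.mpr
    have hfβ : f β ≤ B := hB β ⟨hβ, le_refl _⟩
    apply div_nonpos_of_nonpos_of_nonneg (by linarith) hK.le
  have hβ1 : (0:ℝ) < 1 + β := by linarith
  have hx₀mem : x₀ ∈ Ioc (-1:ℝ) β := by
    constructor
    · simp only [hx₀]; nlinarith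
    · simp only [hx₀]; nlinarith
  have hlog : Real.log (1 + x₀) = Real.log (1+β) + (-(B - f β + 1)/K) := by
    simp only [hx₀]
    rw [show 1 + (-1 + (1+β) * Real.exp (-(B - f β + 1)/K)) = (1+β) * Real.exp (-(B - f β + 1)/K) by ring,
      Real.log_mul hβ1.ne' hexp_pos.ne', Real.log_exp]
    
  have hmono := hanti hx₀mem ⟨hβ, le_refl _⟩ hx₀mem.2
  simp only [hh] at hmono
  rw [hlog] at hmono
  have hfx₀ : f x₀ ≤ B := hB x₀ hx₀mem
  have : K * (-(B - f β + 1)/K) = -(B - f β + 1) := by field_simp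
  nlinarith [hmono]

set_option maxHeartbeats 1000000 in
lemma blowRight (f F : ℝ → ℝ) (α K B : ℝ) (hα : α < 1) (hK : 0 < K)
    (hcont : ContinuousOn f (Ico α 1))
    (hder : ∀ x ∈ Ioo α (1:ℝ), HasDerivAt f (F x) x)
    (hF : ∀ x ∈ Ioo α (1:ℝ), K/(1-x) ≤ F x)
    (hB : ∀ x ∈ Ico α (1:ℝ), f x ≤ B) : False := by
  set h : ℝ → ℝ := fun x => f x + K * Real.log (1-x) with hh
  have hlogc : ContinuousOn (fun x : ℝ => K * Real.log (1-x)) (Ico α (1:ℝ)) := by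
    apply ContinuousOn.mul continuousOn_const
    apply ContinuousOn.log (by fun_prop)
    intro x hx
    nlinarith [hx.2]
  have hmono : MonotoneOn h (Ico α 1) := by
    apply monotoneOn_of_deriv_nonneg (convex_Ico _ _) (hcont.add hlogc)
    · intro x hx
      rw [interior_Ico] at hx
      have h1 : (0:ℝ) < 1 - x := by nlinarith [hx.2]
      exact ((hder x hx).add (((Real.hasDerivAt_log h1.ne').comp x
        (((hasDerivAt_id x).neg.const_add 1))).const_mul K)).differentiableAt.differentiableWithinAt
    · intro x hx
      rw [interior_Ico] at hx
      have h1 : (0:ℝ) < 1 - x := by nlinarith [hx.2]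
      have hd : HasDerivAt h (F x + K * ((1-x)⁻¹ * (-1))) x :=
        (hder x hx).add (((Real.hasDerivAt_log h1.ne').comp x
          (((hasDerivAt_id x).neg.const_add 1))).const_mul K)
      rw [(show HasDerivAt (f + fun x => K * Real.log (1 - x)) (F x + K * ((1-x)⁻¹ * (-1))) x from hd).deriv]
      have := hF x hx
      rw [div_eq_mul_inv] at this
      nlinarith [this]
  set x₀ : ℝ := 1 - (1-α) * Real.exp (-(B - f α + 1)/K) with hx₀
  have hexp_pos : 0 < Real.exp (-(B - f α + 1)/K) := Real.exp_pos _
  have hexp_le : Real.exp (-(B - f α + 1)/K) ≤ 1 := by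
    apply Real.exp_le_one_iff.mpr
    have hfα : f α ≤ B := hB α ⟨le_refl _, hα⟩
    apply div_nonpos_of_nonpos_of_nonneg (by linarith) hK.le
  have hα1 : (0:ℝ) < 1 - α := by linarith
  have hx₀mem : x₀ ∈ Ico α (1:ℝ) := by
    constructor
    · simp only [hx₀]; nlinarith
    · simp only [hx₀]; nlinarith
  have hlog : Real.log (1 - x₀) = Real.log (1-α) + (-(B - f α + 1)/K) := by
    simp only [hx₀]
    rw [show 1 - (1 - (1-α) * Real.exp (-(B - f α + 1)/K)) = (1-α) * Real.exp (-(B - f α + 1)/K) by ring,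
      Real.log_mul hα1.ne' hexp_pos.ne', Real.log_exp]
  have hm := hmono ⟨le_refl _, hα⟩ hx₀mem hx₀mem.1
  simp only [hh] at hm
  rw [hlog] at hm
  have hfx₀ : f x₀ ≤ B := hB x₀ hx₀mem
  have : K * (-(B - f α + 1)/K) = -(B - f α + 1) := by field_simp
  nlinarith [hm]

set_option maxHeartbeats 1000000 in
lemma reflect (c₁ c₂ c₃ : ℝ) (U : ℝ → ℝ)
    (hU : IsSolOn c₁ c₂ c₃ U (Ioo (-1 : ℝ) 1)) :
    IsSolOn c₂ c₁ c₃ (fun x => -U (-x)) (Ioo (-1 : ℝ) 1) := by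
  have hmaps : MapsTo (fun x : ℝ => -x) (Ioo (-1:ℝ) 1) (Ioo (-1:ℝ) 1) := by
    intro x hx
    constructor <;> simp <;> [linarith [hx.2]; linarith [hx.1]]
  have hdiff : ∀ x ∈ Ioo (-1:ℝ) 1, HasDerivAt U (deriv U x) x := by
    intro x hx
    exact ((hU.1.differentiableOn one_ne_zero).differentiableAt (isOpen_Ioo.mem_nhds hx)).hasDerivAt
  constructor
  · exact (hU.1.comp (contDiff_neg.contDiffOn) hmaps).neg
  · intro x hx
    have hnx : -x ∈ Ioo (-1:ℝ) 1 := hmaps hx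
    have hd : HasDerivAt (fun z : ℝ => -U (-z)) (deriv U (-x)) x := by
      have h1 : HasDerivAt (fun z : ℝ => U (-z)) (deriv U (-x) * (-1)) x :=
        (hdiff (-x) hnx).comp x (hasDerivAt_neg x)
      have h2 := h1.neg
      rw [mul_neg_one, neg_neg] at h2
      exact h2
    have hstar := hU.2 (-x) hnx
    rw [StarEq] at hstar ⊢
    rw [hd.deriv]
    linear_combination hstar

set_option maxHeartbeats 1000000 in
lemma part1 (c₁ c₂ c₃ : ℝ) (U : ℝ → ℝ)
    (hU : IsSolOn c₁ c₂ c₃ U (Ioo (-1 : ℝ) 1)) : -1 ≤ c₁ := by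
  by_contra hc
  push_neg at hc
  set δ : ℝ := -1 - c₁ with hδdef
  have hδpos : 0 < δ := by simp only [hδdef]; linarith
  set C : ℝ := 5 + |c₁| + |c₂| + 2*|c₃| with hCdef
  have hC5 : 5 ≤ C := by
    simp only [hCdef]
    have := abs_nonneg c₁; have := abs_nonneg c₂; have := abs_nonneg c₃; linarith
  have hCpos : 0 < C := by linarith
  have hδC : δ < C := by
    have h1 := le_abs_self (-c₁); rw [abs_neg] at h1
    have := abs_nonneg c₂; have := abs_nonneg c₃
    simp only [hδdef, hCdef]; linarith
  set β : ℝ := -1 + δ/C with hβdef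
  have hβmem : -1 < β ∧ β < 0 := by
    constructor
    · simp only [hβdef]; have : 0 < δ/C := div_pos hδpos hCpos; linarith
    · simp only [hβdef]; have : δ/C < 1 := (div_lt_one hCpos).mpr hδC; linarith
  have hsub : Ioc (-1:ℝ) β ⊆ Ioo (-1:ℝ) 1 := fun x hx => ⟨hx.1, lt_of_le_of_lt hx.2 (by linarith [hβmem.2])⟩
  have hsub' : Ioo (-1:ℝ) β ⊆ Ioo (-1:ℝ) 1 := fun x hx => hsub ⟨hx.1, hx.2.le⟩
  have hdiff : ∀ x ∈ Ioo (-1:ℝ) 1, HasDerivAt U (deriv U x) x := by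
    intro x hx
    have := (hU.1.differentiableOn one_ne_zero).differentiableAt
      (isOpen_Ioo.mem_nhds hx)
    exact this.hasDerivAt
  have hUcont : ContinuousOn U (Ioo (-1:ℝ) 1) := hU.1.continuousOn
  -- basic bounds on Ioc (-1) β
  have hbnd : ∀ x ∈ Ioc (-1:ℝ) β, 0 < 1+x ∧ (1+x)*C ≤ δ ∧ 1 < 1-x ∧ 1-x < 2 := by
    intro x hx
    have h1 : -1 < x := hx.1
    have h2 : x ≤ β := hx.2
    refine ⟨by linarith, ?_, by linarith [lt_of_le_of_lt h2 hβmem.2], by linarith⟩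
    have : 1 + x ≤ δ/C := by simp only [hβdef] at h2; linarith
    calc (1+x)*C ≤ (δ/C)*C := by nlinarith
    _ = δ := by field_simp
  -- Def2 lower bound
  set Def2 : ℝ → ℝ := fun x => 2 + 4*x - (c₁*(1-x) + c₂*(1+x) + c₃*(1-x^2)) with hD2
  have hDef : ∀ x ∈ Ioc (-1:ℝ) β, δ ≤ Def2 x := by
    intro x hx
    obtain ⟨h1, h2, h3, h4⟩ := hbnd x hx
    have he : -C ≤ 4 + c₁ - c₂ - c₃*(1-x) := by
      simp only [hCdef]
      have g1 := neg_abs_le c₁; have g2 := le_abs_self c₂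
      have g3 := neg_abs_le c₃; have g4 := le_abs_self c₃
      nlinarith
    have hkey : Def2 x = 2*δ + (1+x)*(4 + c₁ - c₂ - c₃*(1-x)) := by
      simp only [hD2, hδdef]; ring
    have : (1+x)*(4 + c₁ - c₂ - c₃*(1-x)) ≥ (1+x)*(-C) := by nlinarith
    nlinarith
  -- the function y and its derivative
  set y : ℝ → ℝ := fun x => (U x - 2)/(2*(1-x)^2) with hy
  have hyder : ∀ x ∈ Ioo (-1:ℝ) β, HasDerivAt y
      (-(y x)^2*(1-x)/(1+x) - Def2 x/(2*(1+x)*(1-x)^3)) x := by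
    intro x hx
    have hx1 := hsub' hx
    obtain ⟨h1, h2, h3, h4⟩ := hbnd x ⟨hx.1, hx.2.le⟩
    have hden : (2*(1-x)^2) ≠ 0 := by positivity
    have hd1 : HasDerivAt (fun z => U z - 2) (deriv U x) x := (hdiff x hx1).sub_const 2
    have hd0 : HasDerivAt (fun z : ℝ => (1-z)) (0-1) x := (hasDerivAt_const x 1).sub (hasDerivAt_id x)
    have hd2 := (hd0.pow 2).const_mul 2
    have h := hd1.div hd2 hden
    refine HasDerivAt.congr_deriv h ?_
    symm
    simp only [Pi.pow_apply, Pi.mul_apply]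
    have hstar := hU.2 x hx1
    rw [StarEq] at hstar
    have hx2 : (0:ℝ) < 1 - x^2 := by nlinarith
    have hu' : deriv U x = (c₁*(1-x) + c₂*(1+x) + c₃*(1-x^2) - 2*x*U x - (1/2)*(U x)^2)/(1-x^2) := by
      field_simp
      linarith [hstar]
    simp only [hy, hD2]
    rw [hu']
    have e1 : (1:ℝ)-x ≠ 0 := by linarith
    have e2 : (1:ℝ)+x ≠ 0 := by linarith
    have e3 : (1:ℝ)-x^2 ≠ 0 := ne_of_gt hx2
    field_simp
    ring
  -- y is antitone on Ioc (-1) β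
  have hycont : ContinuousOn y (Ioc (-1) β) := by
    apply ContinuousOn.div ((hUcont.mono hsub).sub continuousOn_const) (by fun_prop)
    intro x hx
    have := (hbnd x hx).2.2.1
    positivity
  clear_value δ C β Def2 y
  have hanti : AntitoneOn y (Ioc (-1) β) := by
    apply antitoneOn_of_deriv_nonpos (convex_Ioc _ _) hycont
    · intro x hx
      rw [interior_Ioc] at hx
      exact (hyder x hx).differentiableAt.differentiableWithinAt
    · intro x hx
      rw [interior_Ioc] at hx
      rw [(hyder x hx).deriv]
      obtain ⟨h1, h2, h3, h4⟩ := hbnd x ⟨hx.1, hx.2.le⟩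
      have hd := hDef x ⟨hx.1, hx.2.le⟩
      have t1 : -y x ^ 2 * (1 - x) / (1 + x) ≤ 0 := by
        apply div_nonpos_of_nonpos_of_nonneg ?_ h1.le
        nlinarith [sq_nonneg (y x)]
      have t2 : (0:ℝ) < Def2 x/(2*(1+x)*(1-x)^3) := by
        apply div_pos (by linarith)
        positivity
      linarith [t1, t2]
  by_cases hcase : ∃ x₁ ∈ Ioc (-1:ℝ) β, 0 < y x₁
  · -- case (i): y positive somewhere
    obtain ⟨x₁, hx₁mem, hx₁pos⟩ := hcase
    have hx₁β : x₁ ≤ β := hx₁mem.2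
    have hmem' : ∀ x ∈ Ioc (-1:ℝ) x₁, x ∈ Ioc (-1:ℝ) β := fun x hx => ⟨hx.1, le_trans hx.2 hx₁β⟩
    have hylb : ∀ x ∈ Ioc (-1:ℝ) x₁, y x₁ ≤ y x := by
      intro x hx
      exact hanti (hmem' x hx) hx₁mem hx.2
    have hypos : ∀ x ∈ Ioc (-1:ℝ) x₁, 0 < y x := fun x hx => lt_of_lt_of_le hx₁pos (hylb x hx)
    apply blowLeft (fun x => -(y x)⁻¹)
      (fun x => ((-(y x)^2*(1-x)/(1+x) - Def2 x/(2*(1+x)*(1-x)^3))/(y x)^2)) x₁ 1 0 hx₁mem.1 one_pos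
    · exact ((hycont.mono (fun z hz => ⟨hz.1, le_trans hz.2 hx₁β⟩)).inv₀
        (fun x hx => (hypos x hx).ne')).neg
    · intro x hx
      have hx' : x ∈ Ioo (-1:ℝ) β := ⟨hx.1, lt_of_lt_of_le hx.2 hx₁β⟩
      have hyne : y x ≠ 0 := (hypos x ⟨hx.1, hx.2.le⟩).ne'
      have h := ((hyder x hx').inv hyne).neg
      refine HasDerivAt.congr_deriv h ?_
      symm
      rw [neg_div, neg_neg]
    · intro x hx
      have hx' : x ∈ Ioo (-1:ℝ) β := ⟨hx.1, lt_of_lt_of_le hx.2 hx₁β⟩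
      obtain ⟨h1, h2, h3, h4⟩ := hbnd x (hmem' x ⟨hx.1, hx.2.le⟩)
      have hd := hDef x (hmem' x ⟨hx.1, hx.2.le⟩)
      have hyx := hypos x ⟨hx.1, hx.2.le⟩
      have hyne : y x ≠ 0 := hyx.ne'
      have e1 : (-(y x)^2*(1-x)/(1+x) - Def2 x/(2*(1+x)*(1-x)^3))/(y x)^2
          = -((1-x)/(1+x)) - (Def2 x/(2*(1+x)*(1-x)^3))/(y x)^2 := by
        have e2 : (1:ℝ)+x ≠ 0 := by linarith
        have e3 : (1:ℝ)-x ≠ 0 := by linarith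
        field_simp
      rw [e1]
      have e4 : 0 ≤ (Def2 x/(2*(1+x)*(1-x)^3))/(y x)^2 := by
        apply div_nonneg (div_nonneg (by linarith [hδpos]) (by positivity)) (by positivity)
      have e5 : 1/(1+x) ≤ (1-x)/(1+x) := by
        rw [div_le_div_iff₀ h1 h1]; nlinarith
      linarith
    · intro x hx
      have := hypos x hx
      rw [neg_nonpos]
      positivity
  · -- case (ii): U ≤ 2 on Ioc (-1) β
    push_neg at hcase
    have hU2 : ∀ x ∈ Ioc (-1:ℝ) β, U x ≤ 2 := by
      intro x hx
      have hy0 := hcase x hx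
      obtain ⟨h1, h2, h3, h4⟩ := hbnd x hx
      simp only [hy] at hy0
      rw [div_nonpos_iff] at hy0
      rcases hy0 with ⟨ha, hb⟩ | ⟨ha, hb⟩
      · nlinarith
      · linarith
    apply blowLeft U (deriv U) β (δ/4) 2 hβmem.1 (by positivity)
      (hUcont.mono hsub) (fun x hx => hdiff x (hsub' hx)) _ hU2
    intro x hx
    have hxIoc : x ∈ Ioc (-1:ℝ) β := ⟨hx.1, hx.2.le⟩
    obtain ⟨h1, h2, h3, h4⟩ := hbnd x hxIoc
    have hd := hDef x hxIoc
    have hstar := hU.2 x (hsub' hx)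
    rw [StarEq] at hstar
    have hkey : (1-x^2)*deriv U x = -(1/2)*(U x - 2 + 2*(1+x))^2 + 2*(1+x)^2 - Def2 x := by
      simp only [hD2]; linear_combination hstar
    have h5 : (0:ℝ) < 1 - x^2 := by nlinarith
    have hxle : 1 + x ≤ 1 := by nlinarith [hβmem.2, hx.2]
    have hq : (1+x)^2 ≤ (1+x) := by nlinarith
    have hC' : (1+x)*5 ≤ (1+x)*C := by nlinarith
    have hup : (1-x^2)*deriv U x ≤ -(δ/2) := by
      nlinarith [sq_nonneg (U x - 2 + 2*(1+x)), hkey, hq, hC', h2, hd, hδpos]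
    have hderneg : deriv U x ≤ 0 := by nlinarith [hup, h5]
    rw [show -((δ/4)/(1+x)) = (-(δ/4))/(1+x) by ring, le_div_iff₀ h1]
    have ht : (1-x)*((1+x)*deriv U x) ≤ -(δ/2) := by nlinarith [hup]
    have ht2 : (1+x)*deriv U x ≤ 0 := mul_nonpos_of_nonneg_of_nonpos h1.le hderneg
    nlinarith [mul_le_mul_of_nonpos_right h4.le ht2]

set_option maxHeartbeats 1000000 in
lemma part2 (c₁ c₂ c₃ : ℝ) (U : ℝ → ℝ)
    (hU : IsSolOn c₁ c₂ c₃ U (Ioo (-1 : ℝ) 1)) (hc1 : -1 ≤ c₁) (hc2 : -1 ≤ c₂) :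
    cbar c₁ c₂ ≤ c₃ := by
  by_contra hcon
  push_neg at hcon
  set s : ℝ := Real.sqrt (1+c₁) with hsdef
  set t : ℝ := Real.sqrt (1+c₂) with htdef
  have hs0 : 0 ≤ s := Real.sqrt_nonneg _
  have ht0 : 0 ≤ t := Real.sqrt_nonneg _
  have hs2 : s^2 = 1 + c₁ := Real.sq_sqrt (by linarith)
  have ht2 : t^2 = 1 + c₂ := Real.sq_sqrt (by linarith)
  have hcbar : cbar c₁ c₂ = -(1/2)*(s+t)*(s+t+2) := by
    rw [cbar, hsdef, htdef]
  set ε : ℝ := cbar c₁ c₂ - c₃ with hεdef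
  have hεpos : 0 < ε := by simp only [hεdef]; linarith
  have hc3 : c₃ = -(1/2)*(s+t)*(s+t+2) - ε := by
    simp only [hεdef, hcbar]; ring
  have hc1' : c₁ = s^2 - 1 := by linarith
  have hc2' : c₂ = t^2 - 1 := by linarith
  set U₀ : ℝ → ℝ := fun x => (s-t) - (s+t+2)*x with hU₀
  set y : ℝ → ℝ := fun x => (1-x)^t * (1+x)^s * (U x - U₀ x)/2 with hy
  have hdiff : ∀ x ∈ Ioo (-1:ℝ) 1, HasDerivAt U (deriv U x) x := by
    intro x hx
    exact ((hU.1.differentiableOn one_ne_zero).differentiableAt (isOpen_Ioo.mem_nhds hx)).hasDerivAt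
  have hUcont : ContinuousOn U (Ioo (-1:ℝ) 1) := hU.1.continuousOn
  -- the derivative identity
  have hyder : ∀ x ∈ Ioo (-1:ℝ) 1, HasDerivAt y
      (-(y x)^2 / ((1-x)^t * (1+x)^s * ((1-x)*(1+x)))
        - (ε/2) * ((1-x)^t * (1+x)^s)) x := by
    intro x hx
    have h1x : (0:ℝ) < 1 - x := by linarith [hx.2]
    have h2x : (0:ℝ) < 1 + x := by linarith [hx.1]
    have hA : HasDerivAt (fun z : ℝ => (1-z)^t) (t * (1-x)^(t-1) * (0-1)) x :=
      (Real.hasDerivAt_rpow_const (Or.inl h1x.ne')).comp x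
        ((hasDerivAt_const x 1).sub (hasDerivAt_id x))
    have hB : HasDerivAt (fun z : ℝ => (1+z)^s) (s * (1+x)^(s-1) * 1) x :=
      (Real.hasDerivAt_rpow_const (Or.inl h2x.ne')).comp x
        ((hasDerivAt_id x).const_add 1)
    have hD : HasDerivAt (fun z : ℝ => U z - U₀ z) (deriv U x - -(s+t+2)) x := by
      apply (hdiff x hx).sub
      simpa using ((hasDerivAt_id x).const_mul (s+t+2)).const_sub (s-t)
    have hprod := ((hA.mul hB).mul hD).div_const 2
    refine HasDerivAt.congr_deriv hprod ?_
    symm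
    simp only [Pi.pow_apply, Pi.mul_apply]
    have hstar := hU.2 x hx
    rw [StarEq] at hstar
    have hx2 : (0:ℝ) < 1 - x^2 := by nlinarith
    have hu' : deriv U x = ((s^2-1)*(1-x) + (t^2-1)*(1+x)
        + (-(1/2)*(s+t)*(s+t+2) - ε)*(1-x^2) - 2*x*U x - (1/2)*(U x)^2)/(1-x^2) := by
      rw [eq_div_iff hx2.ne']
      rw [hc1', hc2', hc3] at hstar
      linarith [hstar]
    have ha : (1-x)^t = (1-x)^(t-1) * (1-x) := by
      rw [show t = (t-1)+1 by ring, Real.rpow_add h1x, Real.rpow_one]; ring_nf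
    have hb : (1+x)^s = (1+x)^(s-1) * (1+x) := by
      rw [show s = (s-1)+1 by ring, Real.rpow_add h2x, Real.rpow_one]; ring_nf
    have hapos : (0:ℝ) < (1-x)^(t-1) := Real.rpow_pos_of_pos h1x _
    have hbpos : (0:ℝ) < (1+x)^(s-1) := Real.rpow_pos_of_pos h2x _
    simp only [hy, hU₀]
    rw [hu', ha, hb]
    field_simp
    ring
  -- continuity of y on Ioo (-1) 1
  have hycont : ContinuousOn y (Ioo (-1:ℝ) 1) := by
    simp only [hy]
    apply ContinuousOn.div_const
    apply ContinuousOn.mul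
    · apply ContinuousOn.mul
      · apply ContinuousOn.rpow_const (by fun_prop)
        intro x hx; left; nlinarith [hx.2]
      · apply ContinuousOn.rpow_const (by fun_prop)
        intro x hx; left; nlinarith [hx.1]
    · exact hUcont.sub (by fun_prop)
  have hppos : ∀ x ∈ Ioo (-1:ℝ) 1, (0:ℝ) < (1-x)^t * (1+x)^s * ((1-x)*(1+x)) := by
    intro x hx
    have h1x : (0:ℝ) < 1 - x := by linarith [hx.2]
    have h2x : (0:ℝ) < 1 + x := by linarith [hx.1]
    have := Real.rpow_pos_of_pos h1x t
    have := Real.rpow_pos_of_pos h2x s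
    positivity
  have hydneg : ∀ x ∈ Ioo (-1:ℝ) 1,
      (-(y x)^2 / ((1-x)^t * (1+x)^s * ((1-x)*(1+x))) - (ε/2) * ((1-x)^t * (1+x)^s)) < 0 := by
    intro x hx
    have h1x : (0:ℝ) < 1 - x := by linarith [hx.2]
    have h2x : (0:ℝ) < 1 + x := by linarith [hx.1]
    have e1 : (0:ℝ) < (1-x)^t := Real.rpow_pos_of_pos h1x t
    have e2 : (0:ℝ) < (1+x)^s := Real.rpow_pos_of_pos h2x s
    have e3 : -(y x)^2 / ((1-x)^t * (1+x)^s * ((1-x)*(1+x))) ≤ 0 := by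
      apply div_nonpos_of_nonpos_of_nonneg (by nlinarith [sq_nonneg (y x)]) (hppos x hx).le
    nlinarith [mul_pos e1 e2]
  clear_value y
  have hanti : StrictAntiOn y (Ioo (-1:ℝ) 1) := by
    apply strictAntiOn_of_deriv_neg (convex_Ioo _ _) hycont
    intro x hx
    rw [interior_Ioo] at hx
    rw [(hyder x hx).deriv]
    exact hydneg x hx
  have hmem0 : (0:ℝ) ∈ Ioo (-1:ℝ) 1 := by norm_num
  have hmemh : (1/2:ℝ) ∈ Ioo (-1:ℝ) 1 := by norm_num
  by_cases hcase : y (1/2) < 0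
  · -- right-end contradiction on [1/2, 1)
    have hIsub : Ico (1/2:ℝ) 1 ⊆ Ioo (-1:ℝ) 1 := fun z hz => ⟨by linarith [hz.1], hz.2⟩
    have hyneg : ∀ x ∈ Ico (1/2:ℝ) 1, y x ≤ y (1/2) := by
      intro x hx
      rcases eq_or_lt_of_le hx.1 with h | h
      · rw [← h]
      · exact (hanti hmemh (hIsub hx) h).le
    have hK : (0:ℝ) < ((2:ℝ)^s * 2)⁻¹ := by
      have : (0:ℝ) < (2:ℝ)^s := Real.rpow_pos_of_pos (by norm_num) s
      positivity
    apply blowRight (fun x => (y x)⁻¹)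
      (fun x => -(-(y x)^2 / ((1-x)^t * (1+x)^s * ((1-x)*(1+x))) - (ε/2) * ((1-x)^t * (1+x)^s))/(y x)^2)
      (1/2) ((2:ℝ)^s * 2)⁻¹ 0 (by norm_num) hK
    · apply ContinuousOn.inv₀ (hycont.mono hIsub)
      intro x hx
      exact ne_of_lt (lt_of_le_of_lt (hyneg x hx) hcase)
    · intro x hx
      have hxI : x ∈ Ioo (-1:ℝ) 1 := hIsub ⟨hx.1.le, hx.2⟩
      have hyne : y x ≠ 0 := ne_of_lt (lt_of_le_of_lt (hyneg x ⟨hx.1.le, hx.2⟩) hcase)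
      have := (hyder x hxI).inv hyne
      refine HasDerivAt.congr_deriv this ?_
      symm
      try ring
    · intro x hx
      have hxI : x ∈ Ioo (-1:ℝ) 1 := hIsub ⟨hx.1.le, hx.2⟩
      have h1x : (0:ℝ) < 1 - x := by linarith [hx.2]
      have h2x : (0:ℝ) < 1 + x := by linarith [hxI.1]
      have hyne2 : (0:ℝ) < (y x)^2 := by
        have h := ne_of_lt (lt_of_le_of_lt (hyneg x ⟨hx.1.le, hx.2⟩) hcase)
        exact lt_of_le_of_ne (sq_nonneg _) (Ne.symm (pow_ne_zero 2 h))
      have e1 : (0:ℝ) < (1-x)^t := Real.rpow_pos_of_pos h1x t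
      have e2 : (0:ℝ) < (1+x)^s := Real.rpow_pos_of_pos h2x s
      have hP : (0:ℝ) < (1-x)^t * (1+x)^s * ((1-x)*(1+x)) := hppos x hxI
      -- F x = 1/(P) + (ε/2) P'/(y x)^2 ≥ 1/P ≥ K/(1-x)
      have hsplit : -(-(y x)^2 / ((1-x)^t * (1+x)^s * ((1-x)*(1+x))) - (ε/2) * ((1-x)^t * (1+x)^s))/(y x)^2
          = 1/((1-x)^t * (1+x)^s * ((1-x)*(1+x))) + ((ε/2) * ((1-x)^t * (1+x)^s))/(y x)^2 := by
        have hyx0 : y x ≠ 0 := fun h0 => by simp [h0] at hyne2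
        field_simp
        ring
      rw [hsplit]
      have hterm2 : 0 ≤ ((ε/2) * ((1-x)^t * (1+x)^s))/(y x)^2 := by positivity
      have h2s : (0:ℝ) < (2:ℝ)^s := Real.rpow_pos_of_pos (by norm_num) s
      have hPbound : (1-x)^t * (1+x)^s * ((1-x)*(1+x)) ≤ (2:ℝ)^s * 2 * (1-x) := by
        have b1 : (1-x)^t ≤ 1 := Real.rpow_le_one h1x.le (by linarith [hx.1]) ht0
        have b2 : (1+x)^s ≤ (2:ℝ)^s := Real.rpow_le_rpow h2x.le (by linarith [hx.2]) hs0
        have m1 : (1-x)^t * (1+x)^s ≤ 1 * (2:ℝ)^s := mul_le_mul b1 b2 e2.le zero_le_one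
        calc (1-x)^t * (1+x)^s * ((1-x)*(1+x)) ≤ (1 * (2:ℝ)^s) * ((1-x)*(1+x)) :=
              mul_le_mul_of_nonneg_right m1 (by positivity)
          _ = ((2:ℝ)^s*(1-x))*(1+x) := by ring
          _ ≤ ((2:ℝ)^s*(1-x))*2 := mul_le_mul_of_nonneg_left (by linarith) (by positivity)
          _ = (2:ℝ)^s * 2 * (1-x) := by ring
      have hmain : ((2:ℝ)^s * 2)⁻¹/(1-x) ≤ 1/((1-x)^t * (1+x)^s * ((1-x)*(1+x))) := by
        rw [div_le_div_iff₀ h1x hP, inv_mul_le_iff₀ (by positivity)]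
        calc (1-x)^t * (1+x)^s * ((1-x)*(1+x)) ≤ (2:ℝ)^s * 2 * (1-x) := hPbound
          _ = ((2:ℝ)^s * 2) * (1 * (1-x)) := by ring
      linarith [hterm2, hmain]
    · intro x hx
      have := lt_of_le_of_lt (hyneg x hx) hcase
      have : (y x)⁻¹ < 0 := inv_neg''.mpr this
      linarith
  · -- left-end contradiction on (-1, 0]
    push_neg at hcase
    have hy0pos : 0 < y 0 := lt_of_le_of_lt hcase (hanti hmem0 hmemh (by norm_num))
    have hIsub : Ioc (-1:ℝ) 0 ⊆ Ioo (-1:ℝ) 1 := fun z hz => ⟨hz.1, by linarith [hz.2]⟩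
    have hypos : ∀ x ∈ Ioc (-1:ℝ) 0, y 0 ≤ y x := by
      intro x hx
      rcases eq_or_lt_of_le hx.2 with h | h
      · rw [h]
      · exact (hanti (hIsub hx) hmem0 h).le
    have hK : (0:ℝ) < ((2:ℝ)^t * 2)⁻¹ := by
      have : (0:ℝ) < (2:ℝ)^t := Real.rpow_pos_of_pos (by norm_num) t
      positivity
    apply blowLeft (fun x => -(y x)⁻¹)
      (fun x => (-(y x)^2 / ((1-x)^t * (1+x)^s * ((1-x)*(1+x))) - (ε/2) * ((1-x)^t * (1+x)^s))/(y x)^2)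
      0 ((2:ℝ)^t * 2)⁻¹ 0 (by norm_num) hK
    · apply ContinuousOn.neg
      apply ContinuousOn.inv₀ (hycont.mono hIsub)
      intro x hx
      exact (lt_of_lt_of_le hy0pos (hypos x hx)).ne'
    · intro x hx
      have hxI : x ∈ Ioo (-1:ℝ) 1 := hIsub ⟨hx.1, hx.2.le⟩
      have hyne : y x ≠ 0 := (lt_of_lt_of_le hy0pos (hypos x ⟨hx.1, hx.2.le⟩)).ne'
      have := ((hyder x hxI).inv hyne).neg
      refine HasDerivAt.congr_deriv this ?_
      symm
      try ring
    · intro x hx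
      have hxI : x ∈ Ioo (-1:ℝ) 1 := hIsub ⟨hx.1, hx.2.le⟩
      have h1x : (0:ℝ) < 1 - x := by linarith [hxI.2]
      have h2x : (0:ℝ) < 1 + x := by linarith [hx.1]
      have hyx : 0 < y x := lt_of_lt_of_le hy0pos (hypos x ⟨hx.1, hx.2.le⟩)
      have e1 : (0:ℝ) < (1-x)^t := Real.rpow_pos_of_pos h1x t
      have e2 : (0:ℝ) < (1+x)^s := Real.rpow_pos_of_pos h2x s
      have hP : (0:ℝ) < (1-x)^t * (1+x)^s * ((1-x)*(1+x)) := hppos x hxI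
      have hsplit : (-(y x)^2 / ((1-x)^t * (1+x)^s * ((1-x)*(1+x))) - (ε/2) * ((1-x)^t * (1+x)^s))/(y x)^2
          = -(1/((1-x)^t * (1+x)^s * ((1-x)*(1+x)))) - ((ε/2) * ((1-x)^t * (1+x)^s))/(y x)^2 := by
        field_simp
      rw [hsplit]
      have hterm2 : 0 ≤ ((ε/2) * ((1-x)^t * (1+x)^s))/(y x)^2 := by positivity
      have h2t : (0:ℝ) < (2:ℝ)^t := Real.rpow_pos_of_pos (by norm_num) t
      have hPbound : (1-x)^t * (1+x)^s * ((1-x)*(1+x)) ≤ (2:ℝ)^t * 2 * (1+x) := by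
        have b1 : (1+x)^s ≤ 1 := Real.rpow_le_one h2x.le (by linarith [hx.2]) hs0
        have b2 : (1-x)^t ≤ (2:ℝ)^t := Real.rpow_le_rpow h1x.le (by linarith [hx.1]) ht0
        have m1 : (1-x)^t * (1+x)^s ≤ (2:ℝ)^t * 1 := mul_le_mul b2 b1 e2.le h2t.le
        calc (1-x)^t * (1+x)^s * ((1-x)*(1+x)) ≤ ((2:ℝ)^t * 1) * ((1-x)*(1+x)) :=
              mul_le_mul_of_nonneg_right m1 (by positivity)
          _ = ((2:ℝ)^t*(1+x))*(1-x) := by ring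
          _ ≤ ((2:ℝ)^t*(1+x))*2 := mul_le_mul_of_nonneg_left (by linarith) (by positivity)
          _ = (2:ℝ)^t * 2 * (1+x) := by ring
      have hmain : ((2:ℝ)^t * 2)⁻¹/(1+x) ≤ 1/((1-x)^t * (1+x)^s * ((1-x)*(1+x))) := by
        rw [div_le_div_iff₀ h2x hP, inv_mul_le_iff₀ (by positivity)]
        calc (1-x)^t * (1+x)^s * ((1-x)*(1+x)) ≤ (2:ℝ)^t * 2 * (1+x) := hPbound
          _ = ((2:ℝ)^t * 2) * (1 * (1+x)) := by ring
      have : -(1/((1-x)^t * (1+x)^s * ((1-x)*(1+x)))) ≤ -(((2:ℝ)^t * 2)⁻¹/(1+x)) := by linarith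
      linarith
    · intro x hx
      have := lt_of_lt_of_le hy0pos (hypos x hx)
      rw [neg_nonpos]
      positivity

/-- if (★) has a C¹ solution on (-1,1) then `c ∈ J`. -/
theorem statement2 (c₁ c₂ c₃ : ℝ) (U : ℝ → ℝ)
    (hU : IsSolOn c₁ c₂ c₃ U (Ioo (-1 : ℝ) 1)) :
    -1 ≤ c₁ ∧ -1 ≤ c₂ ∧ cbar c₁ c₂ ≤ c₃ := by
  have h1 : -1 ≤ c₁ := part1 c₁ c₂ c₃ U hU
  have h2 : -1 ≤ c₂ := part1 c₂ c₁ c₃ (fun x => -U (-x)) (reflect c₁ c₂ c₃ U hU)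
  exact ⟨h1, h2, part2 c₁ c₂ c₃ U hU h1 h2⟩
end
end

section
/- Let 0 < δ ≤ 2, let c₁, c₂, c₃ ∈ ℝ, and let U ∈ C¹((-1,-1+δ)) satisfy (★) on (-1,-1+δ). Then c₁ ≥ -1, the limit lim_{x→-1⁺} U(x) exists and is finite, and this limit equals either τ₁(c₁) or τ₂(c₁). -/
open Set Filter Real Topology

noncomputable section

lemma slope_signs {f : ℝ → ℝ} {x d : ℝ} (h : HasDerivAt f d x) (hd : d < 0) :
    (∀ᶠ y in 𝓝[<] x, f x < f y) ∧ (∀ᶠ y in 𝓝[>] x, f y < f x) := by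
  have hs : Tendsto (slope f x) (𝓝[≠] x) (𝓝 d) := hasDerivAt_iff_tendsto_slope.mp h
  have hneg : ∀ᶠ y in 𝓝[≠] x, slope f x y < 0 := hs.eventually (eventually_lt_nhds hd)
  constructor
  · have h1 : 𝓝[<] x ≤ 𝓝[≠] x := nhdsWithin_mono x (fun y hy => ne_of_lt hy)
    filter_upwards [h1 hneg, self_mem_nhdsWithin] with y hy (h2 : y < x)
    rw [slope_def_field, div_neg_iff] at hy
    rcases hy with ⟨_, h4⟩ | ⟨h3, _⟩
    · linarith
    · linarith
  · have h1 : 𝓝[>] x ≤ 𝓝[≠] x := nhdsWithin_mono x (fun y hy => ne_of_gt hy)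
    filter_upwards [h1 hneg, self_mem_nhdsWithin] with y hy (h2 : x < y)
    rw [slope_def_field, div_neg_iff] at hy
    rcases hy with ⟨_, h4⟩ | ⟨h3, _⟩
    · linarith
    · linarith

/-- Barrier lemma: if `f` has strictly negative derivative wherever it crosses level `L`
on `[a,b]`, and `f b ≥ L`, then `f a ≥ L`. -/
lemma barrier {f : ℝ → ℝ} {a b L : ℝ} (hab : a ≤ b)
    (hc : ContinuousOn f (Icc a b))
    (hder : ∀ x ∈ Icc a b, f x = L → ∃ d, HasDerivAt f d x ∧ d < 0)
    (hfb : L ≤ f b) : L ≤ f a := by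
  by_contra hfa
  push_neg at hfa
  have hab' : a < b := by
    rcases eq_or_lt_of_le hab with rfl | h
    · linarith
    · exact h
  set S := {x ∈ Icc a b | f x < L} with hSdef
  have haS : a ∈ S := ⟨⟨le_rfl, hab⟩, hfa⟩
  have hSne : S.Nonempty := ⟨a, haS⟩
  have hSbd : BddAbove S := ⟨b, fun x hx => hx.1.2⟩
  set s := sSup S with hs
  have hsmem : s ∈ Icc a b := ⟨le_csSup hSbd haS, csSup_le hSne fun x hx => hx.1.2⟩
  have hub : ∀ x ∈ S, x ≤ s := fun x hx => le_csSup hSbd hx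
  have hscl : s ∈ closure S := csSup_mem_closure hSne hSbd
  have hfs_le : f s ≤ L := by
    have hT : IsClosed (Icc a b ∩ f ⁻¹' (Iic L)) :=
      hc.preimage_isClosed_of_isClosed isClosed_Icc isClosed_Iic
    have hsub : S ⊆ Icc a b ∩ f ⁻¹' (Iic L) := fun x hx => ⟨hx.1, le_of_lt hx.2⟩
    exact (hT.closure_subset ((closure_mono hsub) hscl)).2
  -- helper: if s < b and eventually (in 𝓝[>] s) f y < L, contradiction
  have hright : s < b → ¬ (∀ᶠ y in 𝓝[>] s, f y < L) := by
    intro hsb hev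
    have hmem : Ioc s b ∈ 𝓝[>] s := Ioc_mem_nhdsGT hsb
    have : ∀ᶠ y in 𝓝[>] s, y ∈ S ∧ s < y := by
      filter_upwards [hev, hmem, self_mem_nhdsWithin] with y h1 h2 (h3 : s < y)
      exact ⟨⟨⟨le_trans hsmem.1 (le_of_lt h3), h2.2⟩, h1⟩, h3⟩
    obtain ⟨y, hyS, hys⟩ := this.exists
    exact absurd (hub y hyS) (not_le.mpr hys)
  rcases lt_or_eq_of_le hfs_le with hlt | heq
  · -- f s < L
    have hsb : s < b := lt_of_le_of_ne hsmem.2 (by intro hh; rw [hh] at hlt; linarith)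
    apply hright hsb
    have hcw : ContinuousWithinAt f (Icc a b) s := hc s hsmem
    have hev : ∀ᶠ y in 𝓝[Icc a b] s, f y < L := hcw (Iio_mem_nhds hlt)
    have : 𝓝[Ioc s b] s ≤ 𝓝[Icc a b] s :=
      nhdsWithin_mono s (fun y hy => ⟨le_trans hsmem.1 (le_of_lt hy.1), hy.2⟩)
    rw [← nhdsWithin_Ioc_eq_nhdsGT hsb]
    exact this hev
  · obtain ⟨d, hd, hdneg⟩ := hder s hsmem heq
    obtain ⟨hleft, hright'⟩ := slope_signs hd hdneg
    by_cases hsb : s < b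
    · exact hright hsb (by filter_upwards [hright'] with y hy; rw [← heq]; exact hy)
    · -- s = b : points of S accumulate from the left, but f > L just left of s
      have hsnS : s ∉ S := fun h => by
        rw [hSdef] at h; exact absurd h.2 (by rw [← heq]; exact lt_irrefl _)
      have hSlt : S ⊆ Iio s := fun x hx =>
        lt_of_le_of_ne (hub x hx) (fun h => hsnS (h ▸ hx))
      have hne : (𝓝[S] s).NeBot := mem_closure_iff_nhdsWithin_neBot.mp hscl
      have hmono : 𝓝[S] s ≤ 𝓝[<] s := nhdsWithin_mono s hSlt
      have h1 : ∀ᶠ y in 𝓝[S] s, f s < f y := hmono hleft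
      have h2 : ∀ᶠ y in 𝓝[S] s, f y < L := by
        filter_upwards [self_mem_nhdsWithin] with y hy; exact hy.2
      obtain ⟨y, hy1, hy2⟩ := (h1.and h2).exists
      rw [heq] at hy1; linarith

/-- Dual barrier: positive derivative at crossings of `L`, `f b ≤ L` implies `f a ≤ L`. -/
lemma barrier' {f : ℝ → ℝ} {a b L : ℝ} (hab : a ≤ b)
    (hc : ContinuousOn f (Icc a b))
    (hder : ∀ x ∈ Icc a b, f x = L → ∃ d, HasDerivAt f d x ∧ 0 < d)
    (hfb : f b ≤ L) : f a ≤ L := by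
  have := barrier (f := fun x => -f x) (L := -L) hab (hc.neg)
    (fun x hx hfx => by
      obtain ⟨d, hd, hdpos⟩ := hder x hx (by linarith [neg_eq_iff_eq_neg.mp hfx] )
      exact ⟨-d, hd.neg, by linarith⟩)
    (by simpa using hfb)
  simpa using this

/-- Comparison via nonnegative derivative: `f a ≤ f b`. -/
lemma le_of_hasDerivAt_nonneg {f g : ℝ → ℝ} {a b : ℝ} (hab : a ≤ b)
    (hder : ∀ x ∈ Icc a b, HasDerivAt f (g x) x)
    (hpos : ∀ x ∈ Icc a b, 0 ≤ g x) : f a ≤ f b := by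
  have hmono : MonotoneOn f (Icc a b) := by
    apply monotoneOn_of_deriv_nonneg (convex_Icc a b)
    · exact fun x hx => (hder x hx).continuousAt.continuousWithinAt
    · intro x hx
      rw [interior_Icc] at hx
      exact ((hder x (Ioo_subset_Icc_self hx)).differentiableAt).differentiableWithinAt
    · intro x hx
      rw [interior_Icc] at hx
      rw [(hder x (Ioo_subset_Icc_self hx)).deriv]
      exact hpos x (Ioo_subset_Icc_self hx)
  exact hmono ⟨le_rfl, hab⟩ ⟨hab, le_rfl⟩ hab

/-- Negative drift lemma: if `f' ≤ -η/(1+x)` on `(-1, x₁]` then `f` cannot be bounded above. -/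
lemma drift_neg {f g : ℝ → ℝ} {x₁ η B : ℝ} (hx₁ : -1 < x₁) (hη : 0 < η)
    (hder : ∀ x ∈ Ioc (-1:ℝ) x₁, HasDerivAt f (g x) x)
    (hineq : ∀ x ∈ Ioc (-1:ℝ) x₁, g x ≤ -η / (1 + x))
    (hbd : ∀ x ∈ Ioc (-1:ℝ) x₁, f x ≤ B) : False := by
  set V : ℝ → ℝ := fun y => f y + η * Real.log (1 + y) with hV
  have hVder : ∀ x ∈ Ioc (-1:ℝ) x₁, HasDerivAt V (g x + η * (1 / (1 + x))) x := by
    intro x hx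
    have h1 : (0:ℝ) < 1 + x := by linarith [hx.1]
    have hlog : HasDerivAt (fun y : ℝ => Real.log (1 + y)) (1 / (1 + x)) x := by
      have := ((hasDerivAt_id x).const_add 1).log (ne_of_gt h1)
      simpa using this
    exact (hder x hx).add (hlog.const_mul η)
  -- V is antitone on (-1, x₁]
  have hmono : ∀ x ∈ Ioc (-1:ℝ) x₁, V x₁ ≤ V x := by
    intro x hx
    have := le_of_hasDerivAt_nonneg (f := fun y => -V y)
      (g := fun y => -(g y + η * (1 / (1 + y)))) hx.2
      (fun y hy => by
        have hy' : y ∈ Ioc (-1:ℝ) x₁ := ⟨lt_of_lt_of_le hx.1 hy.1, hy.2⟩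
        exact (hVder y hy').neg)
      (fun y hy => by
        have hy' : y ∈ Ioc (-1:ℝ) x₁ := ⟨lt_of_lt_of_le hx.1 hy.1, hy.2⟩
        have h1 : (0:ℝ) < 1 + y := by linarith [hy'.1]
        have := hineq y hy'
        have : g y + η * (1 / (1 + y)) ≤ 0 := by
          rw [div_eq_mul_one_div] at this; nlinarith [one_div_pos.mpr h1]
        linarith)
    simpa using this
  -- now pick x close to -1
  set t : ℝ := min (x₁ + 1) (Real.exp ((V x₁ - B - 1) / η)) with ht
  have htpos : 0 < t := lt_min (by linarith) (Real.exp_pos _)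
  set x : ℝ := -1 + t with hxdef
  have hxgt : (-1:ℝ) < x := by rw [hxdef]; linarith
  have hxle : x ≤ x₁ := by
    have : t ≤ x₁ + 1 := min_le_left _ _
    rw [hxdef]; linarith
  have hxmem : x ∈ Ioc (-1:ℝ) x₁ := ⟨hxgt, hxle⟩
  have h1x : 1 + x = t := by rw [hxdef]; ring
  have hlogt : Real.log t ≤ (V x₁ - B - 1) / η := by
    calc Real.log t ≤ Real.log (Real.exp ((V x₁ - B - 1) / η)) :=
          Real.log_le_log htpos (min_le_right _ _)
      _ = (V x₁ - B - 1) / η := Real.log_exp _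
  have h2 := hmono x hxmem
  have h3 := hbd x hxmem
  have h5 : V x = f x + η * Real.log t := by rw [hV]; simp only; rw [h1x]
  have h4 : η * Real.log t ≤ V x₁ - B - 1 := by
    have := (le_div_iff₀ hη).mp hlogt
    linarith [this, mul_comm (Real.log t) η]
  rw [h5] at h2
  linarith

/-- Blow-up exclusion: `f ≥ 1` with `f' ≤ -f²/(8(1+x))` on `(-1,x₁]` is impossible. -/
lemma blowup {f g : ℝ → ℝ} {x₁ : ℝ} (hx₁ : -1 < x₁)
    (hder : ∀ x ∈ Ioc (-1:ℝ) x₁, HasDerivAt f (g x) x)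
    (h1 : ∀ x ∈ Ioc (-1:ℝ) x₁, 1 ≤ f x)
    (hineq : ∀ x ∈ Ioc (-1:ℝ) x₁, g x ≤ -(f x)^2 / (8 * (1 + x))) : False := by
  set W : ℝ → ℝ := fun y => (f y)⁻¹ - (1/8) * Real.log (1 + y) with hW
  have hWder : ∀ x ∈ Ioc (-1:ℝ) x₁,
      HasDerivAt W (-(g x) / (f x)^2 - (1/8) * (1 / (1 + x))) x := by
    intro x hx
    have h1x : (0:ℝ) < 1 + x := by linarith [hx.1]
    have hfx : f x ≠ 0 := by have := h1 x hx; positivity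
    have hlog : HasDerivAt (fun y : ℝ => Real.log (1 + y)) (1 / (1 + x)) x := by
      have := ((hasDerivAt_id x).const_add 1).log (ne_of_gt h1x)
      simpa using this
    exact ((hder x hx).inv hfx).sub (hlog.const_mul (1/8))
  have hWpos : ∀ x ∈ Ioc (-1:ℝ) x₁, 0 ≤ -(g x) / (f x)^2 - (1/8) * (1 / (1 + x)) := by
    intro x hx
    have h1x : (0:ℝ) < 1 + x := by linarith [hx.1]
    have hf1 := h1 x hx
    have hf2 : (0:ℝ) < (f x)^2 := by positivity
    have hfx : f x ≠ 0 := by positivity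
    have h2 := hineq x hx
    rw [neg_div] at h2
    have h3 : (f x)^2 / (8 * (1 + x)) ≤ -(g x) := by linarith
    have h4 : (f x)^2 / (8 * (1 + x)) / (f x)^2 ≤ -(g x) / (f x)^2 :=
      (div_le_div_iff_of_pos_right hf2).mpr h3
    have h5 : (f x)^2 / (8 * (1 + x)) / (f x)^2 = (1/8) * (1 / (1 + x)) := by
      field_simp
    linarith [h4, h5.symm.le.trans h4]
  have hmono : ∀ x ∈ Ioc (-1:ℝ) x₁, W x ≤ W x₁ := by
    intro x hx
    exact le_of_hasDerivAt_nonneg hx.2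
      (fun y hy => hWder y ⟨lt_of_lt_of_le hx.1 hy.1, hy.2⟩)
      (fun y hy => hWpos y ⟨lt_of_lt_of_le hx.1 hy.1, hy.2⟩)
  set t : ℝ := min (x₁ + 1) (Real.exp (-8 * W x₁ - 1)) with ht
  have htpos : 0 < t := lt_min (by linarith) (Real.exp_pos _)
  set x : ℝ := -1 + t with hxdef
  have hxgt : (-1:ℝ) < x := by rw [hxdef]; linarith
  have hxle : x ≤ x₁ := by
    have : t ≤ x₁ + 1 := min_le_left _ _
    rw [hxdef]; linarith
  have hxmem : x ∈ Ioc (-1:ℝ) x₁ := ⟨hxgt, hxle⟩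
  have h1x : 1 + x = t := by rw [hxdef]; ring
  have hlogt : Real.log t ≤ -8 * W x₁ - 1 := by
    calc Real.log t ≤ Real.log (Real.exp (-8 * W x₁ - 1)) :=
          Real.log_le_log htpos (min_le_right _ _)
      _ = -8 * W x₁ - 1 := Real.log_exp _
  have hWx : W x = (f x)⁻¹ - (1/8) * Real.log t := by rw [hW]; simp only; rw [h1x]
  have hfinv : (0:ℝ) ≤ (f x)⁻¹ := by
    have := h1 x hxmem; positivity
  have h2 := hmono x hxmem
  rw [hWx] at h2
  clear_value W t x
  linarith [hlogt, h2, hfinv]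


def Phi (c₁ c₂ c₃ : ℝ) (x u : ℝ) : ℝ :=
  c₁*(1-x) + c₂*(1+x) + c₃*(1-x^2) - 2*x*u - u^2/2

set_option maxHeartbeats 4000000 in
/-- behavior at the left endpoint `-1`. -/
theorem statement8 (δ c₁ c₂ c₃ : ℝ) (hδ : 0 < δ) (hδ2 : δ ≤ 2) (U : ℝ → ℝ)
    (hU : IsSolOn c₁ c₂ c₃ U (Ioo (-1 : ℝ) (-1 + δ))) :
    -1 ≤ c₁ ∧ ∃ L : ℝ, Tendsto U (𝓝[>] (-1 : ℝ)) (𝓝 L) ∧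
      (L = tau1 c₁ ∨ L = tau2 c₁) := by
  obtain ⟨hU1, hU2⟩ := hU
  set I : Set ℝ := Ioo (-1 : ℝ) (-1 + δ) with hIdef
  have hIopen : IsOpen I := isOpen_Ioo
  have hIbd : ∀ x ∈ I, -1 < x ∧ x < 1 := fun x hx => ⟨hx.1, lt_of_lt_of_le hx.2 (by linarith)⟩
  have hder : ∀ x ∈ I, HasDerivAt U (deriv U x) x := by
    intro x hx
    exact ((hU1.differentiableOn one_ne_zero).differentiableAt (hIopen.mem_nhds hx)).hasDerivAt
  have hpos : ∀ x ∈ I, 0 < 1 - x^2 := by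
    intro x hx
    obtain ⟨h1, h2⟩ := hIbd x hx
    nlinarith
  have hcontU : ContinuousOn U I := hU1.continuousOn
  have hΦU : ∀ y ∈ I, deriv U y = Phi c₁ c₂ c₃ y (U y) / (1 - y^2) := by
    intro y hy
    have heq := hU2 y hy
    unfold StarEq at heq
    rw [eq_div_iff (ne_of_gt (hpos y hy))]
    unfold Phi
    linarith [heq]
  -- constants
  set C₀ : ℝ := 2*|c₁| + 2*|c₂| + 2*|c₃| with hC₀
  have hC₀0 : 0 ≤ C₀ := by positivity
  set M₀ : ℝ := 10 + 2*C₀ with hM₀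
  have hM₀10 : 10 ≤ M₀ := by linarith
  set x₀ : ℝ := -1 + δ/2 with hx₀def
  have hx₀gt : (-1:ℝ) < x₀ := by rw [hx₀def]; linarith
  have hx₀I : x₀ ∈ I := ⟨hx₀gt, by rw [hx₀def]; linarith⟩
  have hIoc : Ioc (-1:ℝ) x₀ ⊆ I := fun x hx => ⟨hx.1, lt_of_le_of_lt hx.2 hx₀I.2⟩
  -- quadratic bound: for |u| ≥ M₀, Phi x u ≤ -u²/4
  have hquad : ∀ x ∈ I, ∀ u : ℝ, M₀ ≤ |u| → Phi c₁ c₂ c₃ x u ≤ -u^2/4 := by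
    intro x hx u hu
    obtain ⟨hx1, hx2⟩ := hIbd x hx
    have habs : |x| ≤ 1 := abs_le.mpr ⟨le_of_lt hx1, le_of_lt hx2⟩
    have hsq : u^2 = |u|^2 := (sq_abs u).symm
    have h1 : c₁ * (1-x) ≤ 2*|c₁| := by
      nlinarith [mul_nonneg (sub_nonneg.mpr (le_abs_self c₁)) (by linarith : (0:ℝ) ≤ 1-x),
        mul_nonneg (abs_nonneg c₁) (by linarith : (0:ℝ) ≤ 1+x)]
    have h2 : c₂ * (1+x) ≤ 2*|c₂| := by
      nlinarith [mul_nonneg (sub_nonneg.mpr (le_abs_self c₂)) (by linarith : (0:ℝ) ≤ 1+x),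
        mul_nonneg (abs_nonneg c₂) (by linarith : (0:ℝ) ≤ 1-x)]
    have h3 : c₃ * (1-x^2) ≤ 2*|c₃| := by
      have hx2' : (0:ℝ) ≤ 1 - x^2 := le_of_lt (hpos x hx)
      nlinarith [mul_nonneg (sub_nonneg.mpr (le_abs_self c₃)) hx2',
        mul_nonneg (abs_nonneg c₃) (sq_nonneg x), abs_nonneg c₃]
    have h4 : -(2*x*u) ≤ 2*|u| := by
      calc -(2*x*u) ≤ |-(2*x*u)| := le_abs_self _
        _ = (2*|x|)*|u| := by rw [abs_neg, abs_mul, abs_mul, abs_two]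
        _ ≤ 2*|u| := by nlinarith [abs_nonneg u]
    have hfin : |u|^2/4 ≥ 2*|u| + C₀ := by
      nlinarith [mul_nonneg (sub_nonneg.mpr hu) (abs_nonneg u),
        mul_nonneg (sub_nonneg.mpr hu) hC₀0, hC₀0]
    unfold Phi
    nlinarith [h1, h2, h3, h4, hfin]
  -- derivative comparison keys
  have hkey : ∀ y ∈ I, ∀ A : ℝ, 0 ≤ A → Phi c₁ c₂ c₃ y (U y) ≤ -A →
      deriv U y ≤ -(A/2)/(1+y) := by
    intro y hy A hA hPA
    have h1 := hpos y hy
    obtain ⟨hy1, hy2⟩ := hIbd y hy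
    have h2 : (0:ℝ) < 1 + y := by linarith
    have h3 : 1 - y^2 ≤ 2*(1+y) := by nlinarith
    rw [hΦU y hy]
    have step1 : Phi c₁ c₂ c₃ y (U y) / (1-y^2) ≤ (-A)/(1-y^2) := by
      exact div_le_div_of_nonneg_right hPA h1.le
    have step2 : (-A)/(1-y^2) ≤ (-A)/(2*(1+y)) := by
      rw [div_le_div_iff₀ h1 (by positivity)]
      nlinarith [mul_nonneg hA (sq_nonneg (1+y))]
    have h2' : (1+y) ≠ 0 := ne_of_gt h2
    have step3 : (-A)/(2*(1+y)) = -(A/2)/(1+y) := by field_simp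
    linarith [step1, step2, step3.le, step3.ge]
  have hkey' : ∀ y ∈ I, ∀ A : ℝ, 0 ≤ A → A ≤ Phi c₁ c₂ c₃ y (U y) →
      (A/2)/(1+y) ≤ deriv U y := by
    intro y hy A hA hPA
    have h1 := hpos y hy
    obtain ⟨hy1, hy2⟩ := hIbd y hy
    have h2 : (0:ℝ) < 1 + y := by linarith
    rw [hΦU y hy]
    have step1 : A/(1-y^2) ≤ Phi c₁ c₂ c₃ y (U y) / (1-y^2) := by
      exact div_le_div_of_nonneg_right hPA h1.le
    have step2 : A/(2*(1+y)) ≤ A/(1-y^2) := by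
      rw [div_le_div_iff₀ (by positivity) h1]
      nlinarith [mul_nonneg hA (sq_nonneg (1+y))]
    have h2' : (1+y) ≠ 0 := ne_of_gt h2
    have step3 : A/(2*(1+y)) = (A/2)/(1+y) := by field_simp
    linarith [step1, step2, step3.le, step3.ge]
  -- upper bound for U near -1
  have hub : ∀ x ∈ Ioc (-1:ℝ) x₀, U x < M₀ := by
    by_contra hcon
    push_neg at hcon
    obtain ⟨x₂, hx₂mem, hx₂⟩ := hcon
    have hIoc₂ : Ioc (-1:ℝ) x₂ ⊆ I := fun y hy => hIoc ⟨hy.1, le_trans hy.2 hx₂mem.2⟩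
    have hIcc₂ : ∀ x ∈ Ioc (-1:ℝ) x₂, Icc x x₂ ⊆ I := fun x hx y hy =>
      hIoc₂ ⟨lt_of_lt_of_le hx.1 hy.1, hy.2⟩
    have hbar : ∀ x ∈ Ioc (-1:ℝ) x₂, U x₂ ≤ U x := by
      intro x hx
      apply barrier hx.2 (hcontU.mono (hIcc₂ x hx))
      · intro y hy hUy
        refine ⟨deriv U y, hder y (hIcc₂ x hx hy), ?_⟩
        rw [hΦU y (hIcc₂ x hx hy), hUy]
        apply div_neg_of_neg_of_pos _ (hpos y (hIcc₂ x hx hy))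
        have habs : M₀ ≤ |U x₂| := le_trans hx₂ (le_abs_self _)
        have := hquad y (hIcc₂ x hx hy) (U x₂) habs
        nlinarith [this, sq_nonneg (U x₂)]
      · exact le_rfl
    refine blowup (f := U) (g := deriv U) hx₂mem.1
      (fun y hy => hder y (hIoc₂ hy)) (fun y hy => ?_) (fun y hy => ?_)
    · linarith [hbar y hy, hx₂, hM₀10]
    · have hUy : M₀ ≤ |U y| := by
        have := hbar y hy
        have : M₀ ≤ U y := le_trans hx₂ this
        exact le_trans this (le_abs_self _)
      have hq := hquad y (hIoc₂ hy) (U y) hUy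
      have hk := hkey y (hIoc₂ hy) ((U y)^2/4) (by positivity) (by linarith)
      have h2 : (0:ℝ) < 1 + y := by linarith [hy.1]
      have h2' : (1+y) ≠ 0 := ne_of_gt h2
      have heq2 : -((U y)^2/4/2)/(1+y) = -(U y)^2/(8*(1+y)) := by rw [← div_div]; ring
      linarith [hk, heq2.le, heq2.ge]
  -- lower bound
  set m₁ : ℝ := min (-M₀) (U x₀) with hm₁def
  have hm₁neg : m₁ ≤ -M₀ := min_le_left _ _
  have hlb : ∀ x ∈ Ioc (-1:ℝ) x₀, m₁ ≤ U x := by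
    intro x hx
    have hIcc₀ : Icc x x₀ ⊆ I := fun y hy => hIoc ⟨lt_of_lt_of_le hx.1 hy.1, hy.2⟩
    apply barrier hx.2 (hcontU.mono hIcc₀)
    · intro y hy hUy
      refine ⟨deriv U y, hder y (hIcc₀ hy), ?_⟩
      rw [hΦU y (hIcc₀ hy), hUy]
      apply div_neg_of_neg_of_pos _ (hpos y (hIcc₀ hy))
      have habs : M₀ ≤ |m₁| := by
        rw [abs_of_nonpos (by linarith : m₁ ≤ 0)]
        linarith
      have := hquad y (hIcc₀ hy) m₁ habs
      nlinarith [this]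
    · exact min_le_right _ _
  -- perturbation bounds
  set CR : ℝ := |c₁| + |c₂| + 2*|c₃| + 2*(max |m₁| M₀) + 1 with hCRdef
  have hmax0 : (0:ℝ) ≤ max |m₁| M₀ := le_trans (abs_nonneg m₁) (le_max_left _ _)
  have hCR : 0 < CR := by positivity
  have hRbound : ∀ x ∈ I, ∀ u : ℝ, m₁ ≤ u → u ≤ M₀ →
      |c₂ - c₁ + c₃*(1-x) - 2*u| ≤ CR := by
    intro x hx u hu1 hu2
    obtain ⟨hx1, hx2⟩ := hIbd x hx
    have hc3a : c₃*(1-x) ≤ 2*|c₃| := by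
      nlinarith [mul_nonneg (sub_nonneg.mpr (le_abs_self c₃)) (by linarith : (0:ℝ) ≤ 1-x),
        mul_nonneg (abs_nonneg c₃) (by linarith : (0:ℝ) ≤ 1+x)]
    have hc3b : -(2*|c₃|) ≤ c₃*(1-x) := by
      nlinarith [mul_nonneg (sub_nonneg.mpr (neg_abs_le c₃)) (by linarith : (0:ℝ) ≤ 1-x),
        mul_nonneg (abs_nonneg c₃) (by linarith : (0:ℝ) ≤ 1+x)]
    have hu3 : |u| ≤ max |m₁| M₀ := by
      rw [abs_le]
      constructor
      · have : -|m₁| ≤ m₁ := neg_abs_le m₁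
        have h' : |m₁| ≤ max |m₁| M₀ := le_max_left _ _
        linarith
      · exact le_trans hu2 (le_max_right _ _)
    rw [abs_le]
    constructor
    · have := abs_le.mp hu3
      linarith [neg_abs_le c₁, le_abs_self c₁, neg_abs_le c₂, le_abs_self c₂]
    · have := abs_le.mp hu3
      linarith [neg_abs_le c₁, le_abs_self c₁, neg_abs_le c₂, le_abs_self c₂]
  have hpert_up : ∀ x ∈ I, ∀ u : ℝ, m₁ ≤ u → u ≤ M₀ →
      Phi c₁ c₂ c₃ x u ≤ Phi c₁ c₂ c₃ (-1) u + (1+x)*CR := by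
    intro x hx u hu1 hu2
    have hid : Phi c₁ c₂ c₃ x u = Phi c₁ c₂ c₃ (-1) u + (1+x)*(c₂ - c₁ + c₃*(1-x) - 2*u) := by
      unfold Phi; ring
    have hb := (abs_le.mp (hRbound x hx u hu1 hu2)).2
    have hx1 : (0:ℝ) ≤ 1 + x := by linarith [(hIbd x hx).1]
    nlinarith [mul_le_mul_of_nonneg_left hb hx1]
  have hpert_lo : ∀ x ∈ I, ∀ u : ℝ, m₁ ≤ u → u ≤ M₀ →
      Phi c₁ c₂ c₃ (-1) u - (1+x)*CR ≤ Phi c₁ c₂ c₃ x u := by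
    intro x hx u hu1 hu2
    have hid : Phi c₁ c₂ c₃ x u = Phi c₁ c₂ c₃ (-1) u + (1+x)*(c₂ - c₁ + c₃*(1-x) - 2*u) := by
      unfold Phi; ring
    have hb := (abs_le.mp (hRbound x hx u hu1 hu2)).1
    have hx1 : (0:ℝ) ≤ 1 + x := by linarith [(hIbd x hx).1]
    nlinarith [mul_le_mul_of_nonneg_left hb hx1]
  -- filter setup
  have hevI : Ioc (-1:ℝ) x₀ ∈ 𝓝[>] (-1:ℝ) := Ioc_mem_nhdsGT hx₀gt
  have hsmall : ∀ ε : ℝ, 0 < ε → ∀ᶠ x in 𝓝[>] (-1:ℝ), (1+x)*CR ≤ ε := by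
    intro ε hε
    have hmem : Ioc (-1:ℝ) (-1 + ε/CR) ∈ 𝓝[>] (-1:ℝ) :=
      Ioc_mem_nhdsGT (by have := div_pos hε hCR; linarith)
    filter_upwards [hmem] with x hx
    have h1 : 1 + x ≤ ε/CR := by linarith [hx.2]
    calc (1+x)*CR ≤ (ε/CR)*CR := mul_le_mul_of_nonneg_right h1 hCR.le
      _ = ε := by field_simp
  have hconv : ∀ {P : ℝ → Prop}, (∀ᶠ x in 𝓝[>] (-1:ℝ), P x) →
      ∃ x₁, -1 < x₁ ∧ x₁ ≤ x₀ ∧ ∀ x ∈ Ioc (-1:ℝ) x₁, P x := by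
    intro P hP
    obtain ⟨u, hu, hsub⟩ := mem_nhdsGT_iff_exists_Ioc_subset.mp hP
    exact ⟨min u x₀, lt_min hu hx₀gt, min_le_right _ _,
      fun x hx => hsub ⟨hx.1, le_trans hx.2 (min_le_left _ _)⟩⟩
  -- step: c₁ ≥ -1
  have hc₁ : -1 ≤ c₁ := by
    by_contra hc
    push_neg at hc
    set η₀ : ℝ := -(1+c₁) with hη₀def
    have hη₀ : 0 < η₀ := by rw [hη₀def]; linarith
    have hupPhi : ∀ u : ℝ, Phi c₁ c₂ c₃ (-1) u ≤ -2*η₀ := by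
      intro u
      unfold Phi
      rw [hη₀def]
      nlinarith [sq_nonneg (u-2)]
    have hev : ∀ᶠ x in 𝓝[>] (-1:ℝ), Phi c₁ c₂ c₃ x (U x) ≤ -η₀ := by
      filter_upwards [hsmall η₀ hη₀, hevI] with x h1 h2
      have hxI := hIoc h2
      have := hpert_up x hxI (U x) (hlb x h2) (le_of_lt (hub x h2))
      linarith [hupPhi (U x)]
    obtain ⟨x₁, hx₁gt, hx₁le, hP⟩ := hconv hev
    refine drift_neg (f := U) (g := deriv U) (η := η₀/2) (B := M₀) hx₁gt (by positivity)
      (fun x hx => hder x (hIoc ⟨hx.1, le_trans hx.2 hx₁le⟩)) (fun x hx => ?_)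
      (fun x hx => le_of_lt (hub x ⟨hx.1, le_trans hx.2 hx₁le⟩))
    have hxI := hIoc ⟨hx.1, le_trans hx.2 hx₁le⟩
    have := hkey x hxI η₀ hη₀.le (hP x hx)
    linarith
  -- roots
  have hsqrt : Real.sqrt (1+c₁) ^ 2 = 1 + c₁ := Real.sq_sqrt (by linarith)
  have hsqrt0 : 0 ≤ Real.sqrt (1+c₁) := Real.sqrt_nonneg _
  set τ₁ : ℝ := tau1 c₁ with hτ₁def
  set τ₂ : ℝ := tau2 c₁ with hτ₂def
  have hτfact : ∀ u : ℝ, Phi c₁ c₂ c₃ (-1) u = -(1/2)*(u - τ₁)*(u - τ₂) := by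
    intro u
    rw [hτ₁def, hτ₂def]
    unfold Phi tau1 tau2
    linear_combination (-2:ℝ) * hsqrt
  have hτ12 : τ₁ ≤ τ₂ := by rw [hτ₁def, hτ₂def]; unfold tau1 tau2; linarith
  have hτ₁le2 : τ₁ ≤ 2 := by rw [hτ₁def]; unfold tau1; linarith
  have hτ₂ge2 : 2 ≤ τ₂ := by rw [hτ₂def]; unfold tau2; linarith
  -- liminf / limsup
  have hevUB : ∀ᶠ x in 𝓝[>] (-1:ℝ), U x ≤ M₀ := by
    filter_upwards [hevI] with x hx; exact le_of_lt (hub x hx)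
  have hevLB : ∀ᶠ x in 𝓝[>] (-1:ℝ), m₁ ≤ U x := by
    filter_upwards [hevI] with x hx; exact hlb x hx
  have hbdd_le : IsBoundedUnder (· ≤ ·) (𝓝[>] (-1:ℝ)) U :=
    isBoundedUnder_of_eventually_le hevUB
  have hbdd_ge : IsBoundedUnder (· ≥ ·) (𝓝[>] (-1:ℝ)) U :=
    isBoundedUnder_of_eventually_ge hevLB
  have hcob_le : IsCoboundedUnder (· ≤ ·) (𝓝[>] (-1:ℝ)) U := hbdd_ge.isCoboundedUnder_le
  have hcob_ge : IsCoboundedUnder (· ≥ ·) (𝓝[>] (-1:ℝ)) U := hbdd_le.isCoboundedUnder_ge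
  set ll : ℝ := liminf U (𝓝[>] (-1:ℝ)) with hlldef
  set ss : ℝ := limsup U (𝓝[>] (-1:ℝ)) with hssdef
  have hls : ll ≤ ss := liminf_le_limsup hbdd_le hbdd_ge
  have hllm : m₁ ≤ ll := le_liminf_of_le hcob_ge hevLB
  have hssM : ss ≤ M₀ := limsup_le_of_le hcob_le hevUB
  have hllM : ll ≤ M₀ := le_trans hls hssM
  have hssm : m₁ ≤ ss := le_trans hllm hls
  -- invariance tools
  have hT1 : ∀ L : ℝ, m₁ ≤ L → L ≤ M₀ → Phi c₁ c₂ c₃ (-1) L < 0 →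
      (∃ᶠ x in 𝓝[>] (-1:ℝ), L ≤ U x) → ∀ᶠ x in 𝓝[>] (-1:ℝ), L ≤ U x := by
    intro L hL1 hL2 hLneg hfreq
    have hev : ∀ᶠ x in 𝓝[>] (-1:ℝ), Phi c₁ c₂ c₃ x L < 0 ∧ x ∈ Ioc (-1:ℝ) x₀ := by
      filter_upwards [hsmall (-Phi c₁ c₂ c₃ (-1) L/2) (by linarith), hevI] with x h1 h2
      refine ⟨?_, h2⟩
      have hp := hpert_up x (hIoc h2) L hL1 hL2
      clear_value CR m₁ M₀ C₀ x₀
      linarith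
    obtain ⟨x₁, hx₁gt, hx₁le, hP⟩ := hconv hev
    obtain ⟨x₂, hx₂U, hx₂P⟩ :=
      (hfreq.and_eventually (eventually_mem_set.mpr (Ioc_mem_nhdsGT hx₁gt))).exists
    have hinv : ∀ x ∈ Ioc (-1:ℝ) x₂, L ≤ U x := by
      intro x hx
      have hIcc : Icc x x₂ ⊆ Ioc (-1:ℝ) x₁ := fun y hy =>
        ⟨lt_of_lt_of_le hx.1 hy.1, le_trans hy.2 hx₂P.2⟩
      have hIccI : Icc x x₂ ⊆ I := fun y hy =>
        hIoc ⟨(hIcc hy).1, le_trans (hIcc hy).2 hx₁le⟩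
      apply barrier hx.2 (hcontU.mono hIccI) _ hx₂U
      intro y hy hUy
      refine ⟨deriv U y, hder y (hIccI hy), ?_⟩
      rw [hΦU y (hIccI hy), hUy]
      exact div_neg_of_neg_of_pos ((hP y (hIcc hy)).1) (hpos y (hIccI hy))
    filter_upwards [Ioc_mem_nhdsGT hx₂P.1] with x hx
    exact hinv x hx
  have hT2 : ∀ L : ℝ, m₁ ≤ L → L ≤ M₀ → 0 < Phi c₁ c₂ c₃ (-1) L →
      (∃ᶠ x in 𝓝[>] (-1:ℝ), U x ≤ L) → ∀ᶠ x in 𝓝[>] (-1:ℝ), U x ≤ L := by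
    intro L hL1 hL2 hLpos hfreq
    have hev : ∀ᶠ x in 𝓝[>] (-1:ℝ), 0 < Phi c₁ c₂ c₃ x L ∧ x ∈ Ioc (-1:ℝ) x₀ := by
      filter_upwards [hsmall (Phi c₁ c₂ c₃ (-1) L/2) (by linarith), hevI] with x h1 h2
      refine ⟨?_, h2⟩
      have hp := hpert_lo x (hIoc h2) L hL1 hL2
      clear_value CR m₁ M₀ C₀ x₀
      linarith
    obtain ⟨x₁, hx₁gt, hx₁le, hP⟩ := hconv hev
    obtain ⟨x₂, hx₂U, hx₂P⟩ :=
      (hfreq.and_eventually (eventually_mem_set.mpr (Ioc_mem_nhdsGT hx₁gt))).exists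
    have hinv : ∀ x ∈ Ioc (-1:ℝ) x₂, U x ≤ L := by
      intro x hx
      have hIcc : Icc x x₂ ⊆ Ioc (-1:ℝ) x₁ := fun y hy =>
        ⟨lt_of_lt_of_le hx.1 hy.1, le_trans hy.2 hx₂P.2⟩
      have hIccI : Icc x x₂ ⊆ I := fun y hy =>
        hIoc ⟨(hIcc hy).1, le_trans (hIcc hy).2 hx₁le⟩
      apply barrier' hx.2 (hcontU.mono hIccI) _ hx₂U
      intro y hy hUy
      refine ⟨deriv U y, hder y (hIccI hy), ?_⟩
      rw [hΦU y (hIccI hy), hUy]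
      exact div_pos ((hP y (hIcc hy)).1) (hpos y (hIccI hy))
    filter_upwards [Ioc_mem_nhdsGT hx₂P.1] with x hx
    exact hinv x hx
  have hT3 : ∀ η : ℝ, 0 < η → (∀ᶠ x in 𝓝[>] (-1:ℝ), Phi c₁ c₂ c₃ (-1) (U x) ≤ -2*η) →
      False := by
    intro η hη hevP
    have hev : ∀ᶠ x in 𝓝[>] (-1:ℝ), Phi c₁ c₂ c₃ x (U x) ≤ -η ∧ x ∈ Ioc (-1:ℝ) x₀ := by
      filter_upwards [hsmall η hη, hevI, hevP] with x h1 h2 h3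
      refine ⟨?_, h2⟩
      have hp := hpert_up x (hIoc h2) (U x) (hlb x h2) (le_of_lt (hub x h2))
      linarith
    obtain ⟨x₁, hx₁gt, hx₁le, hP⟩ := hconv hev
    refine drift_neg (f := U) (g := deriv U) (η := η/2) (B := M₀) hx₁gt (by positivity)
      (fun x hx => hder x (hIoc ⟨hx.1, le_trans hx.2 hx₁le⟩)) (fun x hx => ?_)
      (fun x hx => le_of_lt (hub x ⟨hx.1, le_trans hx.2 hx₁le⟩))
    have hxI := hIoc ⟨hx.1, le_trans hx.2 hx₁le⟩
    have := hkey x hxI η hη.le (hP x hx).1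
    linarith
  have hT4 : ∀ η : ℝ, 0 < η → (∀ᶠ x in 𝓝[>] (-1:ℝ), 2*η ≤ Phi c₁ c₂ c₃ (-1) (U x)) →
      False := by
    intro η hη hevP
    have hev : ∀ᶠ x in 𝓝[>] (-1:ℝ), η ≤ Phi c₁ c₂ c₃ x (U x) ∧ x ∈ Ioc (-1:ℝ) x₀ := by
      filter_upwards [hsmall η hη, hevI, hevP] with x h1 h2 h3
      refine ⟨?_, h2⟩
      have hp := hpert_lo x (hIoc h2) (U x) (hlb x h2) (le_of_lt (hub x h2))
      linarith
    obtain ⟨x₁, hx₁gt, hx₁le, hP⟩ := hconv hev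
    refine drift_neg (f := fun y => -U y) (g := fun y => -deriv U y) (η := η/2) (B := -m₁)
      hx₁gt (by positivity)
      (fun x hx => (hder x (hIoc ⟨hx.1, le_trans hx.2 hx₁le⟩)).neg) (fun x hx => ?_)
      (fun x hx => by
        show -U x ≤ -m₁
        linarith [hlb x ⟨hx.1, le_trans hx.2 hx₁le⟩])
    have hxI := hIoc ⟨hx.1, le_trans hx.2 hx₁le⟩
    have := hkey' x hxI η hη.le (hP x hx).1
    have h2 : (0:ℝ) < 1 + x := by linarith [hx.1]
    rw [neg_div]
    clear_value CR m₁ M₀ C₀ x₀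
    linarith
  -- limsup ≤ τ₂
  have hsU : ss ≤ τ₂ := by
    by_contra hcon
    push_neg at hcon
    obtain ⟨L, hLdef⟩ : ∃ L : ℝ, L = (τ₂ + ss)/2 := ⟨_, rfl⟩
    have hLτ₂ : τ₂ < L := by rw [hLdef]; linarith
    have hLss : L < ss := by rw [hLdef]; linarith
    have hLm : m₁ ≤ L := by linarith [hm₁neg, hM₀10, hτ₂ge2]
    have hLM : L ≤ M₀ := by linarith
    have hφL : Phi c₁ c₂ c₃ (-1) L < 0 := by
      rw [hτfact L]
      nlinarith [mul_pos (by linarith : (0:ℝ) < L - τ₁) (by linarith : (0:ℝ) < L - τ₂)]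
    have hfreq : ∃ᶠ x in 𝓝[>] (-1:ℝ), L ≤ U x := by
      have h' : L < limsup U (𝓝[>] (-1:ℝ)) := by rw [← hssdef]; exact hLss
      exact (frequently_lt_of_lt_limsup hcob_le h').mono (fun x hx => hx.le)
    have hev := hT1 L hLm hLM hφL hfreq
    apply hT3 ((L-τ₁)*(L-τ₂)/4)
      (by nlinarith [mul_pos (by linarith : (0:ℝ) < L - τ₁) (by linarith : (0:ℝ) < L - τ₂)])
    filter_upwards [hev] with x h1
    rw [hτfact (U x)]
    have key : (L-τ₁)*(L-τ₂) ≤ (U x-τ₁)*(U x-τ₂) := by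
      nlinarith [mul_nonneg (by linarith : (0:ℝ) ≤ U x - L) (by linarith : (0:ℝ) ≤ U x - τ₂),
        mul_nonneg (by linarith : (0:ℝ) ≤ U x - L) (by linarith : (0:ℝ) ≤ L - τ₁)]
    linarith
  -- τ₁ ≤ liminf
  have hlτ : τ₁ ≤ ll := by
    by_contra hcon
    push_neg at hcon
    obtain ⟨L, hLdef⟩ : ∃ L : ℝ, L = (ll + τ₁)/2 := ⟨_, rfl⟩
    have hLll : ll < L := by rw [hLdef]; linarith
    have hLτ₁ : L < τ₁ := by rw [hLdef]; linarith
    have hLm : m₁ ≤ L := by linarith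
    have hLM : L ≤ M₀ := by linarith [hτ₁le2, hM₀10]
    have hφL : Phi c₁ c₂ c₃ (-1) L < 0 := by
      rw [hτfact L]
      nlinarith [mul_pos (by linarith : (0:ℝ) < τ₁ - L) (by linarith : (0:ℝ) < τ₂ - L)]
    have hnofreq : ¬ ∃ᶠ x in 𝓝[>] (-1:ℝ), L ≤ U x := by
      intro hf
      have hev := hT1 L hLm hLM hφL hf
      have h' : L ≤ ll := by rw [hlldef]; exact le_liminf_of_le hcob_ge hev
      linarith
    have hevlt : ∀ᶠ x in 𝓝[>] (-1:ℝ), U x < L := by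
      have := not_frequently.mp hnofreq
      filter_upwards [this] with x hx
      exact not_le.mp hx
    apply hT3 ((τ₁-L)*(τ₂-L)/4)
      (by nlinarith [mul_pos (by linarith : (0:ℝ) < τ₁ - L) (by linarith : (0:ℝ) < τ₂ - L)])
    filter_upwards [hevlt] with x h1
    rw [hτfact (U x)]
    have key : (τ₁-L)*(τ₂-L) ≤ (U x-τ₁)*(U x-τ₂) := by
      nlinarith [mul_nonneg (by linarith : (0:ℝ) ≤ L - U x) (by linarith : (0:ℝ) ≤ τ₂ - U x),
        mul_nonneg (by linarith : (0:ℝ) ≤ L - U x) (by linarith : (0:ℝ) ≤ τ₁ - L)]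
    linarith
  -- liminf = limsup
  have heqls : ll = ss := by
    by_contra hne
    have hlt : ll < ss := lt_of_le_of_ne hls hne
    obtain ⟨L, hLdef⟩ : ∃ L : ℝ, L = (ll + ss)/2 := ⟨_, rfl⟩
    have hLll : ll < L := by rw [hLdef]; linarith
    have hLss : L < ss := by rw [hLdef]; linarith
    have hφL : 0 < Phi c₁ c₂ c₃ (-1) L := by
      rw [hτfact L]
      nlinarith [mul_pos (by linarith : (0:ℝ) < L - τ₁) (by linarith : (0:ℝ) < τ₂ - L)]
    have hfreq : ∃ᶠ x in 𝓝[>] (-1:ℝ), U x ≤ L := by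
      have h' : liminf U (𝓝[>] (-1:ℝ)) < L := by rw [← hlldef]; exact hLll
      exact (frequently_lt_of_liminf_lt hcob_ge h').mono (fun x hx => hx.le)
    have hev := hT2 L (by linarith) (by linarith) hφL hfreq
    have h' : ss ≤ L := by rw [hssdef]; exact limsup_le_of_le hcob_le hev
    linarith
  -- conclusion
  have htend : Tendsto U (𝓝[>] (-1:ℝ)) (𝓝 ll) := by
    apply tendsto_of_liminf_eq_limsup hlldef.symm _ hbdd_le hbdd_ge
    rw [← hssdef, heqls]
  refine ⟨hc₁, ll, htend, ?_⟩
  by_contra hno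
  push_neg at hno
  obtain ⟨hno1, hno2⟩ := hno
  have hlt1 : τ₁ < ll := lt_of_le_of_ne hlτ (fun h => hno1 (by rw [← h, hτ₁def]))
  have hlt2 : ll < τ₂ := by
    have h' : ll ≤ τ₂ := by rw [heqls]; exact hsU
    exact lt_of_le_of_ne h' (fun h => hno2 (by rw [h, hτ₂def]))
  obtain ⟨ε, hεdef⟩ : ∃ e : ℝ, e = min ((ll-τ₁)/2) ((τ₂-ll)/2) := ⟨_, rfl⟩
  have hεpos : 0 < ε := by rw [hεdef]; exact lt_min (by linarith) (by linarith)
  have hε1 : ε ≤ (ll-τ₁)/2 := by rw [hεdef]; exact min_le_left _ _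
  have hε2 : ε ≤ (τ₂-ll)/2 := by rw [hεdef]; exact min_le_right _ _
  apply hT4 ((ll-τ₁)*(τ₂-ll)/16)
    (by nlinarith [mul_pos (by linarith : (0:ℝ) < ll - τ₁) (by linarith : (0:ℝ) < τ₂ - ll)])
  have hball : ∀ᶠ x in 𝓝[>] (-1:ℝ), dist (U x) ll < ε :=
    (Metric.tendsto_nhds.mp htend) ε hεpos
  filter_upwards [hball] with x hx
  have hx' := abs_lt.mp (by rwa [Real.dist_eq] at hx)
  rw [hτfact (U x)]
  nlinarith [mul_nonneg (by linarith [hx'.1, hx'.2] : (0:ℝ) ≤ U x - τ₁ - (ll-τ₁)/2)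
      (by linarith [hx'.1, hx'.2] : (0:ℝ) ≤ τ₂ - U x),
    mul_nonneg (by linarith : (0:ℝ) ≤ (ll-τ₁)/2)
      (by linarith [hx'.1, hx'.2] : (0:ℝ) ≤ τ₂ - U x - (τ₂-ll)/2)]
end
end

section
/- Let 0 < δ ≤ 2, let c₁, c₂, c₃ ∈ ℝ, and let U ∈ C¹((1-δ,1)) satisfy (★) on (1-δ,1). Then c₂ ≥ -1, the limit lim_{x→1⁻} U(x) exists and is finite, and this limit equals either τ₁'(c₂) or τ₂'(c₂). -/
open Set Filter Real Topology

noncomputable section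

set_option maxHeartbeats 1000000


lemma barrier_lt (U : ℝ → ℝ) (x₀ x₂ B : ℝ) (hx : x₀ ≤ x₂)
    (hcont : ContinuousOn U (Icc x₀ x₂))
    (hder : ∀ y ∈ Ico x₀ x₂, U y = B → ∃ d, d < 0 ∧ HasDerivAt U d y)
    (h0 : U x₀ ≤ B) : U x₂ ≤ B := by
  by_contra hc
  push_neg at hc
  set S : Set ℝ := Icc x₀ x₂ ∩ U ⁻¹' Iic B with hS
  have hSne : S.Nonempty := ⟨x₀, ⟨le_rfl, hx⟩, h0⟩
  have hScl : IsClosed S := hcont.preimage_isClosed_of_isClosed isClosed_Icc isClosed_Iic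
  have hScpt : IsCompact S := isCompact_Icc.of_isClosed_subset hScl inter_subset_left
  set x₁ := sSup S with hx₁
  have hx₁S : x₁ ∈ S := hScpt.sSup_mem hSne
  have hub : ∀ y ∈ S, y ≤ x₁ := fun y hy => le_csSup hScpt.bddAbove hy
  have h12 : x₁ < x₂ := by
    rcases lt_or_eq_of_le hx₁S.1.2 with h | h
    · exact h
    · exact absurd (h ▸ hx₁S.2) (not_le.2 hc)
  have hnb : (𝓝[Ioo x₁ x₂] x₁).NeBot := by
    rw [← mem_closure_iff_nhdsWithin_neBot, closure_Ioo h12.ne]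
    exact ⟨le_rfl, h12.le⟩
  have hA : ∀ y ∈ Ioo x₁ x₂, B < U y := by
    intro y hy
    by_contra hyB
    push_neg at hyB
    have : y ∈ S := ⟨⟨hx₁S.1.1.trans hy.1.le, hy.2.le⟩, hyB⟩
    exact absurd (hub y this) (not_le.2 hy.1)
  have hUx₁ : U x₁ = B := by
    have hle : U x₁ ≤ B := hx₁S.2
    rcases lt_or_eq_of_le hle with h | h
    · exfalso
      have hcw : ContinuousWithinAt U (Icc x₀ x₂) x₁ := hcont x₁ hx₁S.1
      have hev : ∀ᶠ y in 𝓝[Icc x₀ x₂] x₁, U y < B :=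
        Filter.Tendsto.eventually_lt_const h hcw
      have hev2 : ∀ᶠ y in 𝓝[Ioo x₁ x₂] x₁, U y < B :=
        hev.filter_mono (nhdsWithin_mono x₁ (Ioo_subset_Icc_self.trans
          (Icc_subset_Icc hx₁S.1.1 le_rfl)))
      obtain ⟨y, hy1, hy2⟩ := (hev2.and self_mem_nhdsWithin).exists
      exact absurd hy1 (not_lt.2 (hA y hy2).le)
    · exact h
  obtain ⟨d, hd, hD⟩ := hder x₁ ⟨hx₁S.1.1, h12⟩ hUx₁
  have hslope := hasDerivAt_iff_tendsto_slope.1 hD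
  have hev : ∀ᶠ y in 𝓝[≠] x₁, slope U x₁ y < 0 :=
    Filter.Tendsto.eventually_lt_const hd hslope
  have hsub : Ioo x₁ x₂ ⊆ {y | y ≠ x₁} := fun y hy => ne_of_gt hy.1
  have hev2 : ∀ᶠ y in 𝓝[Ioo x₁ x₂] x₁, slope U x₁ y < 0 :=
    hev.filter_mono (nhdsWithin_mono x₁ hsub)
  obtain ⟨y, hy1, hy2⟩ := (hev2.and self_mem_nhdsWithin).exists
  have hUy : U y < U x₁ := by
    have h1 : (0:ℝ) < y - x₁ := sub_pos.2 hy2.1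
    have := hy1
    rw [slope_def_field] at this
    have h2 : (U y - U x₁) = (U y - U x₁)/(y - x₁) * (y - x₁) := by
      field_simp
    nlinarith [this, h2, mul_neg_of_neg_of_pos this h1]
  exact absurd (hUx₁ ▸ hUy) (not_lt.2 (hA y hy2).le)


lemma barrier_gt (U : ℝ → ℝ) (x₀ x₂ B : ℝ) (hx : x₀ ≤ x₂)
    (hcont : ContinuousOn U (Icc x₀ x₂))
    (hder : ∀ y ∈ Ico x₀ x₂, U y = B → ∃ d, 0 < d ∧ HasDerivAt U d y)
    (h0 : B ≤ U x₀) : B ≤ U x₂ := by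
  have h := barrier_lt (fun x => -U x) x₀ x₂ (-B) hx hcont.neg ?_ (neg_le_neg h0)
  · have h' : -U x₂ ≤ -B := h; linarith [h']
  · intro y hy hUy
    have hUyB : U y = B := by have : -U y = -B := hUy; linarith
    obtain ⟨d, hd, hD⟩ := hder y hy hUyB
    exact ⟨-d, neg_neg_of_pos hd, hD.neg⟩

lemma log_hasDeriv {x : ℝ} (hx : x < 1) :
    HasDerivAt (fun y => Real.log (1 - y)) (-(1 - x)⁻¹) x := by
  have h1 : (1:ℝ) - x ≠ 0 := by linarith
  have h2 : HasDerivAt (fun y : ℝ => 1 - y) (-1) x := by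
    simpa using ((hasDerivAt_id x).const_sub 1)
  have := (Real.hasDerivAt_log h1).comp x h2
  simpa [mul_comm, Function.comp_def] using this

lemma grow (φ : ℝ → ℝ) (x₄ : ℝ) (hx₄ : x₄ < 1) (ρ : ℝ) (hρ : 0 < ρ)
    (hd : ∀ x ∈ Ico x₄ (1:ℝ), ∃ d, HasDerivAt φ d x ∧ ρ / (1 - x) ≤ d) (C : ℝ) :
    ∃ x ∈ Ioo x₄ (1:ℝ), C ≤ φ x := by
  set h : ℝ → ℝ := fun x => φ x + ρ * Real.log (1 - x) with hh
  have hder : ∀ x ∈ Ico x₄ (1:ℝ), ∃ d', HasDerivAt h d' x ∧ 0 ≤ d' := by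
    intro x hx
    obtain ⟨d, hD, hdge⟩ := hd x hx
    refine ⟨d + ρ * (-(1 - x)⁻¹), hD.add ((log_hasDeriv hx.2).const_mul ρ), ?_⟩
    have h1 : (0:ℝ) < 1 - x := by linarith [hx.2]
    have : ρ / (1 - x) = ρ * (1 - x)⁻¹ := by rw [div_eq_mul_inv]
    linarith [hdge, this ▸ hdge]
  set t : ℝ := min (Real.exp ((h x₄ - C) / ρ)) ((1 - x₄) / 2) with ht
  have htpos : 0 < t := lt_min (Real.exp_pos _) (by linarith)
  have htlt : t < 1 - x₄ := lt_of_le_of_lt (min_le_right _ _) (by linarith)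
  set x₃ : ℝ := 1 - t with hx₃
  have hx₃1 : x₃ < 1 := by simp [hx₃]; linarith
  have hx₄3 : x₄ < x₃ := by simp [hx₃]; linarith
  have hsub : Icc x₄ x₃ ⊆ Ico x₄ (1:ℝ) := fun y hy => ⟨hy.1, lt_of_le_of_lt hy.2 hx₃1⟩
  have hdiff : ∀ y ∈ Icc x₄ x₃, DifferentiableAt ℝ h y := by
    intro y hy
    obtain ⟨d', hD, _⟩ := hder y (hsub hy)
    exact hD.differentiableAt
  have hmono : MonotoneOn h (Icc x₄ x₃) := by
    apply monotoneOn_of_deriv_nonneg (convex_Icc x₄ x₃)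
    · exact fun y hy => (hdiff y hy).continuousAt.continuousWithinAt
    · intro y hy
      rw [interior_Icc] at hy
      exact (hdiff y (Ioo_subset_Icc_self hy)).differentiableWithinAt
    · intro y hy
      rw [interior_Icc] at hy
      obtain ⟨d', hD, hd'⟩ := hder y (hsub (Ioo_subset_Icc_self hy))
      rw [hD.deriv]; exact hd'
  have hle : h x₄ ≤ h x₃ := hmono ⟨le_rfl, hx₄3.le⟩ ⟨hx₄3.le, le_rfl⟩ hx₄3.le
  have hlog : Real.log t ≤ (h x₄ - C) / ρ := by
    rw [Real.log_le_iff_le_exp htpos]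
    exact min_le_left _ _
  refine ⟨x₃, ⟨hx₄3, hx₃1⟩, ?_⟩
  have h3 : h x₃ = φ x₃ + ρ * Real.log t := by simp [hh, hx₃]
  have h4 : ρ * Real.log t ≤ h x₄ - C := by
    have := mul_le_mul_of_nonneg_left hlog hρ.le
    rwa [mul_div_cancel₀ _ hρ.ne'] at this
  have := hle
  rw [h3] at this
  linarith


lemma aux_inv {P q D t : ℝ} (ht : 0 < t) (hD : 0 < D) (hD2 : D ≤ 2*t) (hq : 0 < q)
    (hP : P ≤ -(q/4)) : 1/8/t ≤ -(P/D)/q := by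
  have e : -(P/D)/q = (-P)/(D*q) := by ring
  rw [e, div_le_div_iff₀ ht (by positivity)]
  nlinarith [mul_nonneg ht.le (by linarith : 0 ≤ -P - q/4),
    mul_nonneg hq.le (by linarith : 0 ≤ 2*t - D)]

lemma aux_pos {P D t ρ : ℝ} (ht : 0 < t) (hD : 0 < D) (hD2 : D ≤ 2*t) (hρ : 0 < ρ)
    (hP : 2*ρ ≤ P) : ρ/t ≤ P/D := by
  rw [div_le_div_iff₀ ht hD]
  nlinarith [mul_nonneg hρ.le (by linarith : 0 ≤ 2*t - D),
    mul_nonneg ht.le (by linarith : 0 ≤ P - 2*ρ)]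

lemma aux_neg {P D t ρ : ℝ} (ht : 0 < t) (hD : 0 < D) (hD2 : D ≤ 2*t) (hρ : 0 < ρ)
    (hP : P ≤ -(2*ρ)) : ρ/t ≤ -(P/D) := by
  rw [← neg_div, div_le_div_iff₀ ht hD]
  nlinarith [mul_nonneg hρ.le (by linarith : 0 ≤ 2*t - D),
    mul_nonneg ht.le (by linarith : 0 ≤ -P - 2*ρ)]

lemma key (c₁ c₂ c₃ : ℝ) (U : ℝ → ℝ) (a : ℝ) (ha2 : 1/2 ≤ a) (ha1 : a < 1)
    (hasD : ∀ x ∈ Ioo a (1:ℝ), HasDerivAt U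
      ((c₁*(1-x) + c₂*(1+x) + c₃*(1-x^2) - 2*x*U x - (1/2)*(U x)^2) / (1 - x^2)) x) :
    ∃ L : ℝ, Tendsto U (𝓝[<] (1:ℝ)) (𝓝 L) ∧ 2*c₂ - 2*L - (1/2)*L^2 = 0 := by
  have hmem : ∀ x ∈ Ioo a (1:ℝ), 1/2 < x ∧ x < 1 ∧ 0 < 1 - x ∧ 0 < 1 - x^2 ∧
      1 - x^2 ≤ 2*(1-x) := by
    intro x hx
    obtain ⟨hx1, hx2⟩ := hx
    have h1 : 1/2 < x := lt_of_le_of_lt ha2 hx1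
    refine ⟨h1, hx2, by linarith, by nlinarith, by nlinarith⟩
  -- the fundamental quadratic bound
  obtain ⟨K, hK8, hFb⟩ : ∃ K : ℝ, 8 ≤ K ∧ ∀ x ∈ Ioo a (1:ℝ), ∀ u : ℝ, K ≤ |u| →
      c₁*(1-x) + c₂*(1+x) + c₃*(1-x^2) - 2*x*u - (1/2)*u^2 ≤ -(u^2/4) := by
    refine ⟨8 + (|c₁| + 2*|c₂| + |c₃|), by linarith [abs_nonneg c₁, abs_nonneg c₂, abs_nonneg c₃], ?_⟩
    intro x hx u hu
    obtain ⟨h1, h2, h3, h4, h5⟩ := hmem x hx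
    have e1 : c₁*(1-x) ≤ |c₁| := by
      nlinarith [le_abs_self c₁, abs_nonneg c₁]
    have e2 : c₂*(1+x) ≤ 2*|c₂| := by
      nlinarith [le_abs_self c₂, abs_nonneg c₂]
    have e3 : c₃*(1-x^2) ≤ |c₃| := by
      nlinarith [le_abs_self c₃, abs_nonneg c₃]
    have e4 : -(2*x*u) ≤ 2*|u| := by
      nlinarith [le_abs_self u, neg_abs_le u, abs_nonneg u]
    nlinarith [sq_abs u, mul_le_mul_of_nonneg_left hu (abs_nonneg u), abs_nonneg c₁,
      abs_nonneg c₂, abs_nonneg c₃, abs_nonneg u]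
  have hKpos : (0:ℝ) < K := by linarith
  have hcontOn : ∀ x₀ x₂ : ℝ, a < x₀ → x₂ < 1 → ContinuousOn U (Icc x₀ x₂) := by
    intro x₀ x₂ h0 h2 y hy
    exact ((hasD y ⟨lt_of_lt_of_le h0 hy.1, lt_of_le_of_lt hy.2 h2⟩).differentiableAt
      ).continuousAt.continuousWithinAt
  -- Step A: lower bound -K
  have hlow : ∀ x ∈ Ioo a (1:ℝ), -K < U x := by
    by_contra hcon
    push_neg at hcon
    obtain ⟨x₀, hx₀, hU₀⟩ := hcon
    have hstay : ∀ x ∈ Ico x₀ (1:ℝ), U x ≤ -K := by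
      intro x hx
      rcases eq_or_lt_of_le hx.1 with h | h
      · exact h ▸ hU₀
      · refine barrier_lt U x₀ x (-K) h.le (hcontOn x₀ x hx₀.1 hx.2) ?_ hU₀
        intro y hy hUy
        have hyI : y ∈ Ioo a (1:ℝ) := ⟨lt_of_lt_of_le hx₀.1 hy.1, lt_trans hy.2 hx.2⟩
        obtain ⟨_, _, _, h4, _⟩ := hmem y hyI
        have hFle := hFb y hyI (U y) (by rw [hUy, abs_neg, abs_of_pos hKpos])
        refine ⟨_, div_neg_of_neg_of_pos ?_ h4, hasD y hyI⟩
        nlinarith [hFle, hUy, hKpos, hK8]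
    have hgrow := grow (fun x => (U x)⁻¹) x₀ hx₀.2 (1/8) (by norm_num) ?_ 0
    · obtain ⟨x₃, hx₃, hx₃2⟩ := hgrow
      have hU₃ : U x₃ ≤ -K := hstay x₃ ⟨hx₃.1.le, hx₃.2⟩
      have hinv : (U x₃)⁻¹ < 0 := inv_lt_zero.2 (by linarith)
      exact absurd hx₃2 (not_le.2 hinv)
    · intro x hx
      have hxI : x ∈ Ioo a (1:ℝ) := ⟨lt_of_lt_of_le hx₀.1 hx.1, hx.2⟩
      obtain ⟨h1, h2, h3, h4, h5⟩ := hmem x hxI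
      have hUx : U x ≤ -K := hstay x hx
      have hUne : U x ≠ 0 := by linarith
      refine ⟨_, (hasD x hxI).inv hUne, ?_⟩
      have hFle : c₁*(1-x) + c₂*(1+x) + c₃*(1-x^2) - 2*x*U x - (1/2)*(U x)^2
          ≤ -((U x)^2/4) := hFb x hxI (U x) (by rw [abs_of_neg (by linarith)]; linarith)
      exact aux_inv h3 h4 h5 (by positivity) hFle
  -- Step B: upper bound Bu
  set x₀ : ℝ := (a+1)/2 with hx₀def
  have hx₀ : x₀ ∈ Ioo a (1:ℝ) :=
    ⟨by simp only [hx₀def]; linarith, by simp only [hx₀def]; linarith⟩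
  set Bu : ℝ := max (U x₀) K with hBu
  have hBuK : K ≤ Bu := le_max_right _ _
  have hupp : ∀ x ∈ Ico x₀ (1:ℝ), U x ≤ Bu := by
    intro x hx
    rcases eq_or_lt_of_le hx.1 with h | h
    · exact h ▸ le_max_left _ _
    · refine barrier_lt U x₀ x Bu h.le (hcontOn x₀ x hx₀.1 hx.2) ?_ (le_max_left _ _)
      intro y hy hUy
      have hyI : y ∈ Ioo a (1:ℝ) := ⟨lt_of_lt_of_le hx₀.1 hy.1, lt_trans hy.2 hx.2⟩
      obtain ⟨_, _, _, h4, _⟩ := hmem y hyI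
      have hFle := hFb y hyI (U y)
        (by rw [hUy, abs_of_pos (lt_of_lt_of_le hKpos hBuK)]; exact hBuK)
      refine ⟨_, div_neg_of_neg_of_pos ?_ h4, hasD y hyI⟩
      nlinarith [hFle, hUy, hKpos, hK8, hBuK]
  -- boundedness along the filter
  have hIoo : Ioo x₀ (1:ℝ) ∈ 𝓝[<] (1:ℝ) := Ioo_mem_nhdsLT_of_mem ⟨hx₀.2, le_rfl⟩
  have hevupp : ∀ᶠ x in 𝓝[<] (1:ℝ), U x ≤ Bu := by
    filter_upwards [hIoo] with x hx using hupp x ⟨hx.1.le, hx.2⟩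
  have hevlow : ∀ᶠ x in 𝓝[<] (1:ℝ), -K ≤ U x := by
    filter_upwards [hIoo] with x hx using (hlow x ⟨lt_trans hx₀.1 hx.1, hx.2⟩).le
  have hbdd_le : IsBoundedUnder (· ≤ ·) (𝓝[<] (1:ℝ)) U := ⟨Bu, eventually_map.2 hevupp⟩
  have hbdd_ge : IsBoundedUnder (· ≥ ·) (𝓝[<] (1:ℝ)) U := ⟨-K, eventually_map.2 hevlow⟩
  -- dichotomy
  have hdich : ∀ v : ℝ, 2*c₂ - 2*v - (1/2)*v^2 ≠ 0 →
      (∀ᶠ x in 𝓝[<] (1:ℝ), v ≤ U x) ∨ (∀ᶠ x in 𝓝[<] (1:ℝ), U x ≤ v) := by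
    intro v hv
    have hx1 : Tendsto (fun x : ℝ => x) (𝓝[<] (1:ℝ)) (𝓝 1) :=
      tendsto_id.mono_right nhdsWithin_le_nhds
    have hFv : Tendsto (fun x => c₁*(1-x) + c₂*(1+x) + c₃*(1-x^2) - 2*x*v - (1/2)*v^2)
        (𝓝[<] (1:ℝ)) (𝓝 (2*c₂ - 2*v - (1/2)*v^2)) := by
      have hc : Continuous (fun x : ℝ =>
          c₁*(1-x) + c₂*(1+x) + c₃*(1-x^2) - 2*x*v - (1/2)*v^2) := by fun_prop
      have h2 := (hc.tendsto 1).comp hx1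
      have hval : c₁*(1-(1:ℝ)) + c₂*(1+(1:ℝ)) + c₃*(1-(1:ℝ)^2) - 2*1*v - (1/2)*v^2
          = 2*c₂ - 2*v - (1/2)*v^2 := by ring
      rw [← hval]
      exact h2
    rcases lt_or_gt_of_ne hv with hneg | hpos
    · -- limit < 0 : use barrier_lt
      have hev : ∀ᶠ x in 𝓝[<] (1:ℝ),
          c₁*(1-x) + c₂*(1+x) + c₃*(1-x^2) - 2*x*v - (1/2)*v^2 < 0 :=
        Filter.Tendsto.eventually_lt_const hneg hFv
      obtain ⟨xv', hxv', hsub⟩ := mem_nhdsLT_iff_exists_Ioo_subset.1 (hev.and hIoo)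
      have hxv1 : max xv' x₀ < 1 := max_lt hxv' hx₀.2
      have hsub2 : ∀ y ∈ Ioo (max xv' x₀) (1:ℝ),
          (c₁*(1-y) + c₂*(1+y) + c₃*(1-y^2) - 2*y*v - (1/2)*v^2 < 0) ∧ y ∈ Ioo x₀ (1:ℝ) :=
        fun y hy => hsub ⟨lt_of_le_of_lt (le_max_left _ _) hy.1, hy.2⟩
      by_cases hex : ∃ x₁ ∈ Ioo (max xv' x₀) (1:ℝ), U x₁ ≤ v
      · right
        obtain ⟨x₁, hx₁, hUx₁⟩ := hex
        filter_upwards [Ioo_mem_nhdsLT_of_mem (⟨hx₁.2, le_rfl⟩ : (1:ℝ) ∈ Ioc x₁ 1)]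
          with x hx
        refine barrier_lt U x₁ x v hx.1.le
          (hcontOn x₁ x (lt_trans hx₀.1 (hsub2 x₁ hx₁).2.1) hx.2) ?_ hUx₁
        intro y hy hUy
        have hyv : y ∈ Ioo (max xv' x₀) (1:ℝ) :=
          ⟨lt_of_lt_of_le hx₁.1 hy.1, lt_trans hy.2 hx.2⟩
        have hyI : y ∈ Ioo a (1:ℝ) := ⟨lt_trans hx₀.1 (hsub2 y hyv).2.1, hyv.2⟩
        obtain ⟨_, _, _, h4, _⟩ := hmem y hyI
        refine ⟨_, div_neg_of_neg_of_pos ?_ h4, hasD y hyI⟩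
        rw [hUy]
        exact (hsub2 y hyv).1
      · left
        push_neg at hex
        filter_upwards [Ioo_mem_nhdsLT_of_mem (⟨hxv1, le_rfl⟩ : (1:ℝ) ∈ Ioc (max xv' x₀) 1)]
          with x hx using (hex x hx).le
    · -- limit > 0 : use barrier_gt
      have hev : ∀ᶠ x in 𝓝[<] (1:ℝ),
          0 < c₁*(1-x) + c₂*(1+x) + c₃*(1-x^2) - 2*x*v - (1/2)*v^2 :=
        Filter.Tendsto.eventually_const_lt hpos hFv
      obtain ⟨xv', hxv', hsub⟩ := mem_nhdsLT_iff_exists_Ioo_subset.1 (hev.and hIoo)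
      have hxv1 : max xv' x₀ < 1 := max_lt hxv' hx₀.2
      have hsub2 : ∀ y ∈ Ioo (max xv' x₀) (1:ℝ),
          (0 < c₁*(1-y) + c₂*(1+y) + c₃*(1-y^2) - 2*y*v - (1/2)*v^2) ∧ y ∈ Ioo x₀ (1:ℝ) :=
        fun y hy => hsub ⟨lt_of_le_of_lt (le_max_left _ _) hy.1, hy.2⟩
      by_cases hex : ∃ x₁ ∈ Ioo (max xv' x₀) (1:ℝ), v ≤ U x₁
      · left
        obtain ⟨x₁, hx₁, hUx₁⟩ := hex
        filter_upwards [Ioo_mem_nhdsLT_of_mem (⟨hx₁.2, le_rfl⟩ : (1:ℝ) ∈ Ioc x₁ 1)]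
          with x hx
        refine barrier_gt U x₁ x v hx.1.le
          (hcontOn x₁ x (lt_trans hx₀.1 (hsub2 x₁ hx₁).2.1) hx.2) ?_ hUx₁
        intro y hy hUy
        have hyv : y ∈ Ioo (max xv' x₀) (1:ℝ) :=
          ⟨lt_of_lt_of_le hx₁.1 hy.1, lt_trans hy.2 hx.2⟩
        have hyI : y ∈ Ioo a (1:ℝ) := ⟨lt_trans hx₀.1 (hsub2 y hyv).2.1, hyv.2⟩
        obtain ⟨_, _, _, h4, _⟩ := hmem y hyI
        refine ⟨_, div_pos ?_ h4, hasD y hyI⟩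
        rw [hUy]
        exact (hsub2 y hyv).1
      · right
        push_neg at hex
        filter_upwards [Ioo_mem_nhdsLT_of_mem (⟨hxv1, le_rfl⟩ : (1:ℝ) ∈ Ioc (max xv' x₀) 1)]
          with x hx using (hex x hx).le
  -- liminf = limsup
  set A : ℝ := liminf U (𝓝[<] (1:ℝ)) with hA
  set B' : ℝ := limsup U (𝓝[<] (1:ℝ)) with hB'
  have hAB : A = B' := by
    by_contra hne
    have hlt : A < B' := lt_of_le_of_ne (liminf_le_limsup hbdd_le hbdd_ge) hne
    have hroot : ∃ v : ℝ, A < v ∧ v < B' ∧ 2*c₂ - 2*v - (1/2)*v^2 ≠ 0 := by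
      by_contra hall
      push_neg at hall
      have hg1 := hall (A + (B'-A)/4) (by linarith) (by linarith)
      have hg2 := hall (A + (B'-A)/2) (by linarith) (by linarith)
      have hg3 := hall (A + 3*(B'-A)/4) (by linarith) (by linarith)
      nlinarith [hg1, hg2, hg3, mul_pos (sub_pos.2 hlt) (sub_pos.2 hlt)]
    obtain ⟨v, hv1, hv2, hv3⟩ := hroot
    rcases hdich v hv3 with h | h
    · have : v ≤ A := le_liminf_of_le (hbdd_le.isCoboundedUnder_flip) h
      linarith
    · have : B' ≤ v := limsup_le_of_le (hbdd_ge.isCoboundedUnder_flip) h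
      linarith
  have hT : Tendsto U (𝓝[<] (1:ℝ)) (𝓝 A) :=
    tendsto_of_liminf_eq_limsup rfl hAB.symm hbdd_le hbdd_ge
  refine ⟨A, hT, ?_⟩
  -- Step D : the limit satisfies the quadratic
  by_contra hgA
  have hx1 : Tendsto (fun x : ℝ => x) (𝓝[<] (1:ℝ)) (𝓝 1) :=
    tendsto_id.mono_right nhdsWithin_le_nhds
  have hFt : Tendsto (fun x => c₁*(1-x) + c₂*(1+x) + c₃*(1-x^2) - 2*x*U x - (1/2)*(U x)^2)
      (𝓝[<] (1:ℝ)) (𝓝 (2*c₂ - 2*A - (1/2)*A^2)) := by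
    have hc : Continuous (fun p : ℝ × ℝ =>
        c₁*(1-p.1) + c₂*(1+p.1) + c₃*(1-p.1^2) - 2*p.1*p.2 - (1/2)*p.2^2) := by fun_prop
    have h2 := (hc.tendsto (1, A)).comp (hx1.prodMk_nhds hT)
    have hval : c₁*(1-(1:ℝ)) + c₂*(1+(1:ℝ)) + c₃*(1-(1:ℝ)^2) - 2*1*A - (1/2)*A^2
        = 2*c₂ - 2*A - (1/2)*A^2 := by ring
    rw [← hval]
    exact h2
  rcases lt_or_gt_of_ne hgA with hneg | hpos
  · -- negative limit of the numerator : U driven below -K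
    have hev : ∀ᶠ x in 𝓝[<] (1:ℝ),
        c₁*(1-x) + c₂*(1+x) + c₃*(1-x^2) - 2*x*U x - (1/2)*(U x)^2
          < (2*c₂ - 2*A - (1/2)*A^2)/2 :=
      Filter.Tendsto.eventually_lt_const (by linarith) hFt
    obtain ⟨x₄', hx₄', hsub⟩ := mem_nhdsLT_iff_exists_Ioo_subset.1 (hev.and hIoo)
    have hm1 : max x₄' x₀ < 1 := max_lt hx₄' hx₀.2
    have hx₅1 : (max x₄' x₀ + 1)/2 < 1 := by linarith
    have hx₅gt : max x₄' x₀ < (max x₄' x₀ + 1)/2 := by linarith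
    have hIco : ∀ x ∈ Ico ((max x₄' x₀ + 1)/2) (1:ℝ),
        (c₁*(1-x) + c₂*(1+x) + c₃*(1-x^2) - 2*x*U x - (1/2)*(U x)^2
          < (2*c₂ - 2*A - (1/2)*A^2)/2) ∧ x ∈ Ioo x₀ (1:ℝ) := by
      intro x hx
      exact hsub ⟨lt_of_le_of_lt (le_max_left _ _) (lt_of_lt_of_le hx₅gt hx.1), hx.2⟩
    have hgrow := grow (fun x => -(U x)) ((max x₄' x₀ + 1)/2) hx₅1
      (-(2*c₂ - 2*A - (1/2)*A^2)/4) (by linarith) ?_ (K + 1)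
    · obtain ⟨x₃, hx₃, hx₃2⟩ := hgrow
      have hx₃I : x₃ ∈ Ioo a (1:ℝ) :=
        ⟨lt_trans hx₀.1 (hIco x₃ ⟨hx₃.1.le, hx₃.2⟩).2.1, hx₃.2⟩
      have := hlow x₃ hx₃I
      have hx₃2' : K + 1 ≤ -(U x₃) := hx₃2
      linarith
    · intro x hx
      obtain ⟨hFx, hxI0⟩ := hIco x hx
      have hxI : x ∈ Ioo a (1:ℝ) := ⟨lt_trans hx₀.1 hxI0.1, hx.2⟩
      obtain ⟨h1, h2, h3, h4, h5⟩ := hmem x hxI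
      refine ⟨_, (hasD x hxI).neg, ?_⟩
      exact aux_neg h3 h4 h5 (by linarith) (by linarith)
  · -- positive limit of the numerator : U driven above Bu
    have hev : ∀ᶠ x in 𝓝[<] (1:ℝ),
        (2*c₂ - 2*A - (1/2)*A^2)/2
          < c₁*(1-x) + c₂*(1+x) + c₃*(1-x^2) - 2*x*U x - (1/2)*(U x)^2 :=
      Filter.Tendsto.eventually_const_lt (by linarith) hFt
    obtain ⟨x₄', hx₄', hsub⟩ := mem_nhdsLT_iff_exists_Ioo_subset.1 (hev.and hIoo)
    have hm1 : max x₄' x₀ < 1 := max_lt hx₄' hx₀.2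
    have hx₅1 : (max x₄' x₀ + 1)/2 < 1 := by linarith
    have hx₅gt : max x₄' x₀ < (max x₄' x₀ + 1)/2 := by linarith
    have hIco : ∀ x ∈ Ico ((max x₄' x₀ + 1)/2) (1:ℝ),
        ((2*c₂ - 2*A - (1/2)*A^2)/2
          < c₁*(1-x) + c₂*(1+x) + c₃*(1-x^2) - 2*x*U x - (1/2)*(U x)^2) ∧
          x ∈ Ioo x₀ (1:ℝ) := by
      intro x hx
      exact hsub ⟨lt_of_le_of_lt (le_max_left _ _) (lt_of_lt_of_le hx₅gt hx.1), hx.2⟩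
    have hgrow := grow U ((max x₄' x₀ + 1)/2) hx₅1
      ((2*c₂ - 2*A - (1/2)*A^2)/4) (by linarith) ?_ (Bu + 1)
    · obtain ⟨x₃, hx₃, hx₃2⟩ := hgrow
      have hx₃0 : x₃ ∈ Ico x₀ (1:ℝ) := ⟨(hIco x₃ ⟨hx₃.1.le, hx₃.2⟩).2.1.le, hx₃.2⟩
      have := hupp x₃ hx₃0
      linarith
    · intro x hx
      obtain ⟨hFx, hxI0⟩ := hIco x hx
      have hxI : x ∈ Ioo a (1:ℝ) := ⟨lt_trans hx₀.1 hxI0.1, hx.2⟩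
      obtain ⟨h1, h2, h3, h4, h5⟩ := hmem x hxI
      refine ⟨_, hasD x hxI, ?_⟩
      exact aux_pos h3 h4 h5 (by linarith) (by linarith)


/-- behavior at the right endpoint `1`. -/
theorem statement9 (δ c₁ c₂ c₃ : ℝ) (hδ : 0 < δ) (hδ2 : δ ≤ 2) (U : ℝ → ℝ)
    (hU : IsSolOn c₁ c₂ c₃ U (Ioo (1 - δ) (1 : ℝ))) :
    -1 ≤ c₂ ∧ ∃ L : ℝ, Tendsto U (𝓝[<] (1 : ℝ)) (𝓝 L) ∧
      (L = tau1' c₂ ∨ L = tau2' c₂) := by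
  obtain ⟨hC1, hStar⟩ := hU
  have ha2 : (1:ℝ)/2 ≤ max (1 - δ/2) (1/2) := le_max_right _ _
  have ha1 : max (1 - δ/2) (1/2) < 1 := max_lt (by linarith) (by norm_num)
  have hasD : ∀ x ∈ Ioo (max (1 - δ/2) (1/2)) (1:ℝ), HasDerivAt U
      ((c₁*(1-x) + c₂*(1+x) + c₃*(1-x^2) - 2*x*U x - (1/2)*(U x)^2) / (1 - x^2)) x := by
    intro x hx
    have hx12 : 1/2 < x := lt_of_le_of_lt ha2 hx.1
    have hxs : x ∈ Ioo (1 - δ) (1:ℝ) := by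
      constructor
      · have : 1 - δ/2 ≤ max (1 - δ/2) (1/2) := le_max_left _ _
        have := lt_of_le_of_lt this hx.1
        linarith
      · exact hx.2
    have hdiff : DifferentiableAt ℝ U x :=
      (hC1.differentiableOn one_ne_zero).differentiableAt (isOpen_Ioo.mem_nhds hxs)
    have heq := hStar x hxs
    rw [StarEq] at heq
    have hx2 : (0:ℝ) < 1 - x^2 := by nlinarith [hx.2]
    have hder : (c₁*(1-x) + c₂*(1+x) + c₃*(1-x^2) - 2*x*U x - (1/2)*(U x)^2) / (1 - x^2)
        = deriv U x := by
      rw [div_eq_iff hx2.ne']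
      linear_combination -heq
    rw [hder]
    exact hdiff.hasDerivAt
  obtain ⟨L, hT, hq⟩ := key c₁ c₂ c₃ U (max (1 - δ/2) (1/2)) ha2 ha1 hasD
  have h4 : 1 + c₂ = ((L+2)/2)^2 := by linear_combination hq/2
  have hc₂ : -1 ≤ c₂ := by nlinarith [sq_nonneg ((L+2)/2)]
  have hsq : Real.sqrt (1+c₂) = |L+2|/2 := by
    rw [h4, Real.sqrt_sq_eq_abs, abs_div]
    norm_num
  refine ⟨hc₂, L, hT, ?_⟩
  rcases le_or_gt 0 (L+2) with h | h
  · right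
    simp only [tau2']
    rw [hsq, abs_of_nonneg h]
    ring
  · left
    simp only [tau1']
    rw [hsq, abs_of_neg h]
    ring
end
end

section
/- For every A > 0 there exists a constant C > 0, depending only on A, such that for every c = (c₁,c₂,c₃) ∈ ℝ³ with |c₁| + |c₂| + |c₃| ≤ A and every C¹ solution U of (★) on (-1,1), one has |U(x)| ≤ C for all x ∈ (-1,1). -/
open Set Filter Real Topology

noncomputable section

/-- Left-local increase from a negative derivative. -/
lemma left_gt_of_deriv_neg {f : ℝ → ℝ} {a f' : ℝ} (hf : HasDerivAt f f' a) (hf' : f' < 0) :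
    ∀ᶠ y in 𝓝[<] a, f a < f y := by
  rw [hasDerivAt_iff_tendsto_slope] at hf
  have h1 : ∀ᶠ y in 𝓝[≠] a, slope f a y < 0 := hf.eventually_lt_const hf'
  have h2 : 𝓝[<] a ≤ 𝓝[≠] a := nhdsWithin_mono a fun y hy => ne_of_lt hy
  filter_upwards [h2 h1, self_mem_nhdsWithin] with y hy hya
  have hya' : y - a < 0 := sub_neg.mpr hya
  rw [slope_def_field, div_neg_iff] at hy
  rcases hy with ⟨h, h'⟩ | ⟨h, h'⟩ <;> linarith

set_option maxHeartbeats 1000000 in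
lemma riccati_upper (A : ℝ) (hA : 0 < A) (c₁ c₂ c₃ : ℝ) (hc : |c₁| + |c₂| + |c₃| ≤ A)
    (U : ℝ → ℝ) (hU : IsSolOn c₁ c₂ c₃ U (Ioo (-1 : ℝ) 1)) :
    ∀ x ∈ Ioo (-1 : ℝ) 1, U x ≤ 8 + 2 * A := by
  have hdiff : ∀ y ∈ Ioo (-1:ℝ) 1, DifferentiableAt ℝ U y := fun y hy =>
    (hU.1.differentiableOn one_ne_zero).differentiableAt (isOpen_Ioo.mem_nhds hy)
  have hcont : ContinuousOn U (Ioo (-1:ℝ) 1) := hU.1.continuousOn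
  have hder : ∀ y ∈ Ioo (-1:ℝ) 1, 8 + 2 * A ≤ U y →
      deriv U y * (4 * (1 - y ^ 2)) ≤ -(U y) ^ 2 := by
    intro y hy hUy
    obtain ⟨hy1, hy2⟩ := hy
    have hstar := hU.2 y ⟨hy1, hy2⟩
    unfold StarEq at hstar
    have hb1 : c₁ * (1 - y) ≤ |c₁| * 2 := by
      have := le_abs_self c₁; have := abs_nonneg c₁; nlinarith
    have hb2 : c₂ * (1 + y) ≤ |c₂| * 2 := by
      have := le_abs_self c₂; have := abs_nonneg c₂; nlinarith
    have hb3 : c₃ * (1 - y ^ 2) ≤ |c₃| * 2 := by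
      have h0 : 0 ≤ 1 - y ^ 2 := by nlinarith
      have h1 : 1 - y ^ 2 ≤ 2 := by nlinarith [sq_nonneg y]
      have h2 := mul_le_mul_of_nonneg_right (le_abs_self c₃) h0
      nlinarith [abs_nonneg c₃]
    have hUpos : 0 < U y := by linarith
    have hx : -(2 * y * U y) ≤ 2 * U y := by nlinarith
    nlinarith [sq_nonneg (U y - 8 - 2 * A)]
  intro x₀ hx₀
  by_contra hcon
  push_neg at hcon
  obtain ⟨B, hB⟩ : ∃ B, U x₀ = B := ⟨U x₀, rfl⟩
  rw [hB] at hcon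
  -- propagation: U ≥ B to the left of x₀
  have claim : ∀ x ∈ Ioo (-1:ℝ) 1, x ≤ x₀ → B ≤ U x := by
    intro x hx hxle
    by_contra hul
    push_neg at hul
    have hxlt : x < x₀ := hxle.lt_of_ne (fun h => by rw [h, hB] at hul; exact lt_irrefl _ hul)
    set E := {y | y ∈ Icc x x₀ ∧ U y < B} with hE
    have hEne : E.Nonempty := ⟨x, ⟨le_rfl, hxle⟩, hul⟩
    have hEbdd : BddAbove E := ⟨x₀, fun y hy => hy.1.2⟩
    set t := sSup E with ht
    have htmem : t ∈ Icc x x₀ :=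
      ⟨le_csSup hEbdd ⟨⟨le_rfl, hxle⟩, hul⟩, csSup_le hEne fun y hy => hy.1.2⟩
    have htIoo : t ∈ Ioo (-1:ℝ) 1 := ⟨lt_of_lt_of_le hx.1 htmem.1, lt_of_le_of_lt htmem.2 hx₀.2⟩
    have hUright : ∀ y, t < y → y ≤ x₀ → B ≤ U y := by
      intro y hty hyx₀
      by_contra h; push_neg at h
      have hyE : y ∈ E := ⟨⟨le_trans htmem.1 hty.le, hyx₀⟩, h⟩
      exact absurd (le_csSup hEbdd hyE) (not_le.mpr hty)
    have hUt : U t ≤ B := by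
      by_contra h; push_neg at h
      have hcontt : ContinuousAt U t := (hdiff t htIoo).continuousAt
      have hev : ∀ᶠ y in 𝓝 t, B < U y := hcontt.eventually_const_lt h
      obtain ⟨δ, hδ, hball⟩ := Metric.eventually_nhds_iff.mp hev
      obtain ⟨y, hyE, hyt⟩ := exists_lt_of_lt_csSup hEne (show t - δ < t by linarith)
      have hyle : y ≤ t := le_csSup hEbdd hyE
      have : B < U y := hball (show dist y t < δ by rw [Real.dist_eq, abs_of_nonpos (by linarith)]; linarith)
      exact absurd hyE.2 (not_lt.mpr this.le)
    rcases eq_or_lt_of_le htmem.2 with hteq | htlt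
    · -- t = x₀
      have hUtB : U t = B := by rw [hteq, hB]
      have hd := hder t htIoo (by rw [hUtB]; exact hcon.le)
      have ht1 : 0 < 1 + t := by linarith [htIoo.1]
      have ht2 : 0 < 1 - t := by linarith [htIoo.2]
      have hUtpos : 0 < U t := by rw [hUtB]; linarith
      have hdneg : deriv U t < 0 := by
        by_contra hge; push_neg at hge
        have h4 : (0:ℝ) < 4 * (1 - t ^ 2) := by nlinarith
        have := mul_nonneg hge h4.le
        nlinarith [pow_pos hUtpos 2]
      have hev := left_gt_of_deriv_neg ((hdiff t htIoo).hasDerivAt) hdneg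
      rw [eventually_nhdsWithin_iff] at hev
      obtain ⟨δ, hδ, hball⟩ := Metric.eventually_nhds_iff.mp hev
      obtain ⟨y, hyE, hyt⟩ := exists_lt_of_lt_csSup hEne (show t - δ < t by linarith)
      have hyle : y ≤ t := le_csSup hEbdd hyE
      have hyne : y ≠ t := by
        intro h
        rw [h] at hyE
        exact absurd hyE.2 (not_lt.mpr hUtB.ge)
      have hylt : y < t := lt_of_le_of_ne hyle hyne
      have : U t < U y :=
        hball (show dist y t < δ by rw [Real.dist_eq, abs_of_nonpos (by linarith)]; linarith) hylt
      rw [hUtB] at this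
      exact absurd hyE.2 (not_lt.mpr this.le)
    · -- t < x₀
      have hsub : Icc t x₀ ⊆ Ioo (-1:ℝ) 1 := fun y hy =>
        ⟨lt_of_lt_of_le htIoo.1 hy.1, lt_of_le_of_lt hy.2 hx₀.2⟩
      have hanti : StrictAntiOn U (Icc t x₀) := by
        apply strictAntiOn_of_deriv_neg (convex_Icc t x₀) (hcont.mono hsub)
        intro y hy
        rw [interior_Icc] at hy
        have hyIoo : y ∈ Ioo (-1:ℝ) 1 := hsub ⟨hy.1.le, hy.2.le⟩
        have hBy : B ≤ U y := hUright y hy.1 hy.2.le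
        have hd := hder y hyIoo (le_trans hcon.le hBy)
        have hy1 : 0 < 1 + y := by linarith [hyIoo.1]
        have hy2 : 0 < 1 - y := by linarith [hyIoo.2]
        have hUyp : 0 < U y := by linarith
        by_contra hge; push_neg at hge
        have h4 : (0:ℝ) < 4 * (1 - y ^ 2) := by nlinarith
        have := mul_nonneg hge h4.le
        nlinarith [pow_pos hUyp 2]
      have := hanti (left_mem_Icc.mpr htlt.le) (right_mem_Icc.mpr htlt.le) htlt
      rw [hB] at this
      linarith
  -- choose the contradiction point
  have hBpos : 0 < B := by linarith
  have h1x₀ : 0 < 1 + x₀ := by linarith [hx₀.1]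
  have hexp : 0 < Real.exp (-8 / B) := Real.exp_pos _
  have hexplt : Real.exp (-8 / B) < 1 := by
    rw [Real.exp_lt_one_iff]
    exact div_neg_of_neg_of_pos (by norm_num) hBpos
  obtain ⟨x, h1xeq⟩ : ∃ x : ℝ, 1 + x = (1 + x₀) * (Real.exp (-8 / B) / 2) :=
    ⟨-1 + (1 + x₀) * (Real.exp (-8 / B) / 2), by ring⟩
  have h1x : 0 < 1 + x := by rw [h1xeq]; positivity
  have hxlt : x < x₀ := by
    have h2 : (1 + x₀) * (Real.exp (-8 / B) / 2) < 1 + x₀ :=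
      mul_lt_of_lt_one_right h1x₀ (by linarith)
    linarith [h1xeq]
  have hxIoo : x ∈ Ioo (-1:ℝ) 1 := ⟨by linarith, by linarith [hx₀.2]⟩
  have hIccsub : Icc x x₀ ⊆ Ioo (-1:ℝ) 1 := fun y hy =>
    ⟨lt_of_lt_of_le hxIoo.1 hy.1, lt_of_le_of_lt hy.2 hx₀.2⟩
  have hUB : ∀ y ∈ Icc x x₀, B ≤ U y := fun y hy => claim y (hIccsub hy) hy.2
  have hHd : ∀ y ∈ Icc x x₀,
      HasDerivAt (fun z => (U z)⁻¹ - 1 / 8 * Real.log (1 + z))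
        (-(deriv U y) / (U y) ^ 2 - 1 / 8 * (1 / (1 + y))) y := by
    intro y hy
    have hyIoo := hIccsub hy
    have hUy : 0 < U y := lt_of_lt_of_le hBpos (hUB y hy)
    have h1 := (hdiff y hyIoo).hasDerivAt
    have h2 := h1.inv (ne_of_gt hUy)
    have h3 : HasDerivAt (fun z : ℝ => 1 + z) 1 y := by
      simpa using (hasDerivAt_id y).const_add 1
    have h1y : 0 < 1 + y := by linarith [hyIoo.1]
    have h4 := h3.log (ne_of_gt h1y)
    exact h2.sub (h4.const_mul (1 / 8))
  have hmono : StrictMonoOn (fun z => (U z)⁻¹ - 1 / 8 * Real.log (1 + z)) (Icc x x₀) := by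
    apply strictMonoOn_of_deriv_pos (convex_Icc x x₀)
    · exact fun y hy => ((hHd y hy).continuousAt).continuousWithinAt
    · intro y hy
      rw [interior_Icc] at hy
      have hy' : y ∈ Icc x x₀ := ⟨hy.1.le, hy.2.le⟩
      rw [(hHd y hy').deriv]
      have hyIoo := hIccsub hy'
      have hUy : B ≤ U y := hUB y hy'
      have hd := hder y hyIoo (le_trans hcon.le hUy)
      have h1y : 0 < 1 + y := by linarith [hyIoo.1]
      have h2y : 0 < 1 - y := by linarith [hyIoo.2]
      have hUyp : 0 < U y := lt_of_lt_of_le hBpos hUy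
      have hu' : deriv U y < 0 := by
        by_contra hge; push_neg at hge
        have h4 : (0:ℝ) < 4 * (1 - y ^ 2) := by nlinarith
        have := mul_nonneg hge h4.le
        nlinarith [pow_pos hUyp 2]
      have h8 : (1:ℝ) / 8 * (1 / (1 + y)) = 1 / (8 * (1 + y)) := by
        rw [div_mul_div_comm]; norm_num
      rw [sub_pos, h8, div_lt_div_iff₀ (by positivity) (by positivity)]
      nlinarith [mul_pos (neg_pos.mpr hu') (mul_pos h1y h1y), mul_pos (neg_pos.mpr hu') h1y]
  have hHlt : (U x)⁻¹ - 1 / 8 * Real.log (1 + x) < (U x₀)⁻¹ - 1 / 8 * Real.log (1 + x₀) :=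
    hmono (left_mem_Icc.mpr hxlt.le) (right_mem_Icc.mpr hxlt.le) hxlt
  have hUxpos : 0 < U x := lt_of_lt_of_le hBpos (hUB x (left_mem_Icc.mpr hxlt.le))
  have hlogx : Real.log (1 + x) = Real.log (1 + x₀) + (-8 / B) - Real.log 2 := by
    rw [h1xeq, show (1 + x₀) * (Real.exp (-8 / B) / 2) = (1 + x₀) * Real.exp (-8 / B) / 2 by ring,
      Real.log_div (by positivity) two_ne_zero,
      Real.log_mul (ne_of_gt h1x₀) (Real.exp_ne_zero _), Real.log_exp]
  rw [hlogx] at hHlt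
  have hexp8 : (1:ℝ) / 8 * (Real.log (1 + x₀) + (-8 / B) - Real.log 2)
      = 1 / 8 * Real.log (1 + x₀) - 1 / B - 1 / 8 * Real.log 2 := by
    field_simp
    ring
  rw [hexp8] at hHlt
  have hBi : (U x₀)⁻¹ = 1 / B := by rw [hB, one_div]
  have hlog2 : 0 < Real.log 2 := Real.log_pos one_lt_two
  have hUxi : 0 < (U x)⁻¹ := by positivity
  rw [hBi] at hHlt
  linarith

/-- uniform a priori bound on solutions in terms of a bound on `c`. -/
theorem statement10 (A : ℝ) (hA : 0 < A) :
    ∃ C : ℝ, 0 < C ∧ ∀ c₁ c₂ c₃ : ℝ, |c₁| + |c₂| + |c₃| ≤ A →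
      ∀ U : ℝ → ℝ, IsSolOn c₁ c₂ c₃ U (Ioo (-1 : ℝ) 1) →
        ∀ x ∈ Ioo (-1 : ℝ) 1, |U x| ≤ C := by
  refine ⟨8 + 2 * A, by linarith, ?_⟩
  intro c₁ c₂ c₃ hc U hU x hx
  have h1 := riccati_upper A hA c₁ c₂ c₃ hc U hU x hx
  have hdiff : ∀ y ∈ Ioo (-1:ℝ) 1, DifferentiableAt ℝ U y := fun y hy =>
    (hU.1.differentiableOn one_ne_zero).differentiableAt (isOpen_Ioo.mem_nhds hy)
  have hmaps : MapsTo (fun y : ℝ => -y) (Ioo (-1:ℝ) 1) (Ioo (-1:ℝ) 1) := fun y hy =>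
    ⟨by simpa using neg_lt_neg hy.2, by simpa using neg_lt_neg hy.1⟩
  have hWsol : IsSolOn c₂ c₁ c₃ (fun y => -U (-y)) (Ioo (-1:ℝ) 1) := by
    constructor
    · have h0 : ContDiffOn ℝ 1 (fun y : ℝ => U (-y)) (Ioo (-1:ℝ) 1) :=
        hU.1.comp (contDiff_neg.contDiffOn) hmaps
      exact h0.neg
    · intro y hy
      have hyn : -y ∈ Ioo (-1:ℝ) 1 := hmaps hy
      have hstar := hU.2 (-y) hyn
      unfold StarEq at hstar ⊢
      have hdW : HasDerivAt (fun z => -U (-z)) (deriv U (-y)) y := by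
        have h1 : HasDerivAt U (deriv U (-y)) (-y) := (hdiff _ hyn).hasDerivAt
        have h2 : HasDerivAt (fun z : ℝ => -z) (-1) y := hasDerivAt_neg y
        have h3 := (h1.comp y h2).neg
        exact h3.congr_deriv (by ring)
      rw [hdW.deriv]
      linear_combination hstar
  have h2 := riccati_upper A hA c₂ c₁ c₃ (by linarith) (fun y => -U (-y)) hWsol (-x)
    (hmaps hx)
  simp only [neg_neg] at h2
  rw [abs_le]
  constructor <;> linarith
end
end

section
/- Let 0 < δ < 2 and let U, Ũ be functions that are C¹ on (-1,-1+δ] and continuous on [-1,-1+δ], satisfying (1-x²)U'(x) + 2x·U(x) + (1/2)U(x)² ≥ (1-x²)Ũ'(x) + 2x·Ũ(x) + (1/2)Ũ(x)² for all x ∈ (-1,-1+δ). Assume that either (i) U(-1) ≥ Ũ(-1) > 2, or (ii) U(-1) = Ũ(-1) = 2 and limsup_{x→-1⁺} ∫_{-1+δ}^{x} (U(s) - 2)/(1-s²) ds < +∞. Then either U(x) > Ũ(x) for all x ∈ (-1,-1+δ), or there exists δ' ∈ (0,δ) such that U ≡ Ũ on (-1,-1+δ'). -/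
open Set Filter Real Topology

noncomputable section

set_option maxHeartbeats 1000000 in
/-- comparison lemma near the left endpoint `-1`. Here `V` plays the role of `Ũ`. -/
theorem statement13 (δ : ℝ) (hδ1 : 0 < δ) (hδ2 : δ < 2) (U V : ℝ → ℝ)
    (hU1 : ContDiffOn ℝ 1 U (Ioc (-1 : ℝ) (-1 + δ)))
    (hU0 : ContinuousOn U (Icc (-1 : ℝ) (-1 + δ)))
    (hV1 : ContDiffOn ℝ 1 V (Ioc (-1 : ℝ) (-1 + δ)))
    (hV0 : ContinuousOn V (Icc (-1 : ℝ) (-1 + δ)))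
    (hineq : ∀ x ∈ Ioo (-1 : ℝ) (-1 + δ),
      (1 - x ^ 2) * deriv V x + 2 * x * V x + (1 / 2) * (V x) ^ 2 ≤
      (1 - x ^ 2) * deriv U x + 2 * x * U x + (1 / 2) * (U x) ^ 2)
    (hcond :
      -- (i) U(-1) ≥ Ũ(-1) > 2
      (V (-1) ≤ U (-1) ∧ 2 < V (-1)) ∨
      -- (ii) U(-1) = Ũ(-1) = 2 and limsup_{x→-1⁺} ∫_{-1+δ}^x (U(s)-2)/(1-s²) ds < +∞
      (U (-1) = 2 ∧ V (-1) = 2 ∧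
        Filter.IsBoundedUnder (· ≤ ·) (𝓝[>] (-1 : ℝ))
          (fun x : ℝ => ∫ s in (-1 + δ)..x, (U s - 2) / (1 - s ^ 2)))) :
    (∀ x ∈ Ioo (-1 : ℝ) (-1 + δ), V x < U x) ∨
    (∃ δ' : ℝ, δ' ∈ Ioo (0 : ℝ) δ ∧ EqOn U V (Ioo (-1 : ℝ) (-1 + δ'))) := by
  set a : ℝ := -1 + δ with ha_def
  have ha1 : (-1:ℝ) < a := by simp only [ha_def]; linarith
  have ha2 : a < 1 := by simp only [ha_def]; linarith
  set x₀ : ℝ := (-1 + a) / 2 with hx0_def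
  have hx01 : (-1:ℝ) < x₀ := by simp only [hx0_def]; linarith
  have hx02 : x₀ < a := by simp only [hx0_def]; linarith
  have hx0mem : x₀ ∈ Ioo (-1:ℝ) a := ⟨hx01, hx02⟩
  have hpos : ∀ s ∈ Ioo (-1:ℝ) a, 0 < 1 - s ^ 2 := by
    intro s hs; nlinarith [hs.1, hs.2]
  have hposc : ∀ s ∈ Ioc (-1:ℝ) a, 0 < 1 - s ^ 2 := by
    intro s hs; nlinarith [hs.1, hs.2]
  set w : ℝ → ℝ := fun x => U x - V x with hw_def
  have hwc : ContinuousOn w (Icc (-1) a) := hU0.sub hV0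
  have hUioo : ContinuousOn U (Ioo (-1) a) := hU0.mono Ioo_subset_Icc_self
  set p : ℝ → ℝ := fun s => (2 * s + U s) / (1 - s ^ 2) with hp_def
  have hpc : ContinuousOn p (Ioo (-1) a) := by
    apply ContinuousOn.div
    · exact ((continuous_const.mul continuous_id).continuousOn).add hUioo
    · exact (continuous_const.sub (continuous_pow 2)).continuousOn
    · exact fun s hs => (hpos s hs).ne'
  have hiIoo : ∀ x ∈ Ioo (-1:ℝ) a, ∀ y ∈ Ioo (-1:ℝ) a,
      IntervalIntegrable p MeasureTheory.volume x y := by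
    intro x hx y hy
    exact (hpc.mono (Set.ordConnected_Ioo.uIcc_subset hx hy)).intervalIntegrable
  set F : ℝ → ℝ := fun x => ∫ s in x₀..x, p s with hF_def
  have hFd : ∀ x ∈ Ioo (-1:ℝ) a, HasDerivAt F (p x) x := by
    intro x hx
    exact intervalIntegral.integral_hasDerivAt_right (hiIoo _ hx0mem _ hx)
      (hpc.stronglyMeasurableAtFilter isOpen_Ioo x hx)
      (hpc.continuousAt (isOpen_Ioo.mem_nhds hx))
  have hwd : ∀ x ∈ Ioo (-1:ℝ) a, HasDerivAt w (deriv U x - deriv V x) x := by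
    intro x hx
    have hmem : Ioc (-1:ℝ) a ∈ 𝓝 x :=
      mem_of_superset (isOpen_Ioo.mem_nhds hx) Ioo_subset_Ioc_self
    exact (((hU1.contDiffAt hmem).differentiableAt one_ne_zero).hasDerivAt).sub
      (((hV1.contDiffAt hmem).differentiableAt one_ne_zero).hasDerivAt)
  set G : ℝ → ℝ := fun x => Real.exp (F x) * w x with hG_def
  have hGd : ∀ x ∈ Ioo (-1:ℝ) a,
      HasDerivAt G (Real.exp (F x) * p x * w x
        + Real.exp (F x) * (deriv U x - deriv V x)) x := by
    intro x hx
    exact ((hFd x hx).exp).mul (hwd x hx)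
  have hG0 : ∀ x ∈ Ioo (-1:ℝ) a,
      0 ≤ Real.exp (F x) * p x * w x + Real.exp (F x) * (deriv U x - deriv V x) := by
    intro x hx
    have h1 := hpos x hx
    have h2 := hineq x hx
    have key : 0 ≤ (1 - x ^ 2) * (deriv U x - deriv V x) + (2 * x + U x) * w x := by
      simp only [hw_def]
      nlinarith [sq_nonneg (U x - V x)]
    have e1 : p x * w x + (deriv U x - deriv V x)
        = ((1 - x ^ 2) * (deriv U x - deriv V x) + (2 * x + U x) * w x) / (1 - x ^ 2) := by
      simp only [hp_def]
      field_simp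
      ring
    have h3 : 0 ≤ p x * w x + (deriv U x - deriv V x) := by
      rw [e1]; exact div_nonneg key h1.le
    nlinarith [Real.exp_pos (F x), mul_nonneg (Real.exp_pos (F x)).le h3]
  have hmono : MonotoneOn G (Ioo (-1:ℝ) a) := by
    apply monotoneOn_of_deriv_nonneg (convex_Ioo _ _)
    · intro x hx
      exact (hGd x hx).differentiableAt.continuousAt.continuousWithinAt
    · intro x hx
      rw [interior_Ioo] at hx
      exact (hGd x hx).differentiableAt.differentiableWithinAt
    · intro x hx
      rw [interior_Ioo] at hx
      rw [(hGd x hx).deriv]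
      exact hG0 x hx
  have hwt : Tendsto w (𝓝[>] (-1:ℝ)) (𝓝 (w (-1))) := by
    have h1 : ContinuousWithinAt w (Icc (-1) a) (-1) := hwc _ (left_mem_Icc.2 ha1.le)
    exact (h1.mono_of_mem_nhdsWithin (mem_of_superset
      (Ioo_mem_nhdsGT_of_mem ⟨le_rfl, ha1⟩) Ioo_subset_Icc_self)).tendsto
  have claim : ∀ ε > 0, ∀ᶠ x in 𝓝[>] (-1:ℝ), -ε ≤ G x := by
    obtain ⟨M, hM⟩ := isCompact_Icc.exists_bound_of_continuousOn hwc
    have hM0 : 0 ≤ M := le_trans (norm_nonneg _) (hM (-1) (left_mem_Icc.2 ha1.le))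
    rcases hcond with ⟨hVU, hV2⟩ | ⟨hU2, hV2, hbdd⟩
    · -- case (i)
      set η : ℝ := (U (-1) - 2) / 2 with hη_def
      have hη : 0 < η := by simp only [hη_def]; linarith
      have hUt : Tendsto U (𝓝[>] (-1:ℝ)) (𝓝 (U (-1))) := by
        have h1 : ContinuousWithinAt U (Icc (-1) a) (-1) := hU0 _ (left_mem_Icc.2 ha1.le)
        exact (h1.mono_of_mem_nhdsWithin (mem_of_superset
          (Ioo_mem_nhdsGT_of_mem ⟨le_rfl, ha1⟩) Ioo_subset_Icc_self)).tendsto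
      have hev : ∀ᶠ s in 𝓝[>] (-1:ℝ), 2 + η < U s ∧ s ∈ Ioo (-1:ℝ) x₀ := by
        refine (hUt.eventually (eventually_gt_nhds ?_)).and
          (Ioo_mem_nhdsGT_of_mem ⟨le_rfl, hx01⟩)
        simp only [hη_def]; linarith
      obtain ⟨b, hbmem, hbsub⟩ := mem_nhdsGT_iff_exists_Ioo_subset.mp hev
      simp only [mem_Ioi] at hbmem
      set b3 : ℝ := (-1 + min b x₀) / 2 with hb3_def
      have hminb : (-1:ℝ) < min b x₀ := lt_min hbmem hx01
      have hb3gt : (-1:ℝ) < b3 := by simp only [hb3_def]; linarith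
      have hb3b : b3 < b := by
        have : b3 < min b x₀ := by simp only [hb3_def]; linarith
        exact this.trans_le (min_le_left _ _)
      have hb3x0 : b3 < x₀ := by
        have : b3 < min b x₀ := by simp only [hb3_def]; linarith
        exact this.trans_le (min_le_right _ _)
      have hb3mem : b3 ∈ Ioo (-1:ℝ) a := ⟨hb3gt, hb3x0.trans hx02⟩
      set K : ℝ := ∫ s in b3..x₀, p s with hK_def
      set c1 : ℝ := -(η/2 * Real.log (1+b3)) - K with hc1_def
      have hFbound : ∀ᶠ x in 𝓝[>] (-1:ℝ), F x ≤ c1 + η/2 * Real.log (1+x) := by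
        filter_upwards [Ioo_mem_nhdsGT_of_mem ⟨le_rfl, hb3gt⟩] with x hxb3
        have hxa : x ∈ Ioo (-1:ℝ) a := ⟨hxb3.1, (hxb3.2.trans hb3x0).trans hx02⟩
        have hpt : ∀ s ∈ Icc x b3, η/2 * (1/(1+s)) ≤ p s := by
          intro s hs
          have hs1 : -1 < s := lt_of_lt_of_le hxb3.1 hs.1
          have hsb : s ∈ Ioo (-1:ℝ) b := ⟨hs1, lt_of_le_of_lt hs.2 hb3b⟩
          have hUs : 2 + η < U s := (hbsub hsb).1
          have hsx0 : s < x₀ := (hbsub hsb).2.2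
          have h1s : 0 < 1 + s := by linarith
          have hs1' : s < 1 := (hsx0.trans hx02).trans ha2
          have hden : 0 < 1 - s^2 := by nlinarith
          simp only [hp_def]
          rw [div_mul_div_comm, mul_one,
            div_le_div_iff₀ (by positivity) hden]
          nlinarith [mul_le_mul_of_nonneg_right hUs.le h1s.le,
            mul_nonneg (mul_nonneg hη.le h1s.le) h1s.le,
            mul_nonneg h1s.le (show (0:ℝ) ≤ 2*s+2 by linarith)]
        have hgi0 : IntervalIntegrable (fun s => η/2 * (1/(1+s)))
            MeasureTheory.volume x b3 := by
          apply ContinuousOn.intervalIntegrable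
          apply ContinuousOn.mul continuousOn_const
          apply ContinuousOn.div continuousOn_const
            (continuous_const.add continuous_id).continuousOn
          intro s hs
          rw [Set.uIcc_of_le hxb3.2.le] at hs
          have hgt : -1 < s := lt_of_lt_of_le hxb3.1 hs.1
          intro h; simp only [Pi.add_apply, id_eq] at h; linarith
        have hpib : IntervalIntegrable p MeasureTheory.volume x b3 :=
          hiIoo x hxa b3 hb3mem
        have hint1 : (∫ s in x..b3, η/2 * (1/(1+s))) ≤ ∫ s in x..b3, p s :=
          intervalIntegral.integral_mono_on hxb3.2.le hgi0 hpib hpt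
        have hcomp : (∫ s in x..b3, η/2 * (1/(1+s)))
            = η/2 * (Real.log (1+b3) - Real.log (1+x)) := by
          rw [intervalIntegral.integral_const_mul]
          congr 1
          have h1 : (∫ s in x..b3, 1/(1+s)) = ∫ t in 1+x..1+b3, 1/t :=
            intervalIntegral.integral_comp_add_left (fun t => 1/t) 1
          have h0 : (0:ℝ) ∉ uIcc (1+x) (1+b3) := by
            rw [Set.uIcc_of_le (by linarith [hxb3.2])]
            intro hmem
            exact absurd hmem.1 (by push_neg; linarith [hxb3.1])
          rw [h1, integral_one_div h0,
            Real.log_div (by linarith [hxb3.2] : (0:ℝ) < 1+b3).ne'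
              (by linarith [hxb3.1] : (0:ℝ) < 1+x).ne']
        have hglue : (∫ s in x..b3, p s) + K = ∫ s in x..x₀, p s := by
          simp only [hK_def]
          exact intervalIntegral.integral_add_adjacent_intervals
            (hiIoo x hxa b3 hb3mem) (hiIoo b3 hb3mem x₀ hx0mem)
        have hFeq : F x = -∫ s in x..x₀, p s := by
          simp only [hF_def]
          rw [intervalIntegral.integral_symm]
        rw [hFeq, ← hglue]
        rw [hcomp] at hint1
        simp only [hc1_def]
        linarith
      have hFt : Tendsto F (𝓝[>] (-1:ℝ)) atBot := by
        apply tendsto_atBot_mono' _ hFbound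
        have h1p : Tendsto (fun x:ℝ => 1 + x) (𝓝[>] (-1:ℝ)) (𝓝[>] (0:ℝ)) := by
          apply tendsto_nhdsWithin_of_tendsto_nhds_of_eventually_within
          · have h := ((continuous_const (y := (1:ℝ))).add continuous_id).tendsto (-1:ℝ)
            simpa [Pi.add_def] using h.mono_left nhdsWithin_le_nhds
          · filter_upwards [self_mem_nhdsWithin] with x hx
            simp only [mem_Ioi] at hx ⊢; linarith
        have hlog : Tendsto (fun x:ℝ => Real.log (1+x)) (𝓝[>] (-1:ℝ)) atBot :=
          Real.tendsto_log_nhdsGT_zero.comp h1p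
        exact tendsto_atBot_add_const_left _ c1 (hlog.const_mul_atBot (by positivity))
      have hexpF : Tendsto (fun x => Real.exp (F x)) (𝓝[>] (-1:ℝ)) (𝓝 0) :=
        Real.tendsto_exp_atBot.comp hFt
      intro ε hε
      filter_upwards [hexpF.eventually (gt_mem_nhds (show (0:ℝ) < ε/(M+1) by positivity)),
        Ioo_mem_nhdsGT_of_mem ⟨le_rfl, ha1⟩] with x hx1 hx2
      have hwb : -M ≤ w x := by
        have := hM x (Ioo_subset_Icc_self hx2)
        rw [Real.norm_eq_abs] at this
        exact (abs_le.mp this).1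
      have hE : Real.exp (F x) * (M+1) < ε := (lt_div_iff₀ (by positivity)).mp hx1
      simp only [hG_def]
      nlinarith [Real.exp_pos (F x),
        mul_nonneg (Real.exp_pos (F x)).le (show 0 ≤ w x + M by linarith)]
    · -- case (ii)
      obtain ⟨C, hC⟩ := hbdd
      rw [eventually_map] at hC
      set q : ℝ → ℝ := fun s => (U s - 2) / (1 - s ^ 2) with hq_def
      have hqc : ContinuousOn q (Ioc (-1) a) := by
        apply ContinuousOn.div
          ((hU0.mono Ioc_subset_Icc_self).sub continuousOn_const)
          (continuous_const.sub (continuous_pow 2)).continuousOn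
        exact fun s hs => (hposc s hs).ne'
      have hqi : ∀ x ∈ Ioc (-1:ℝ) a, ∀ y ∈ Ioc (-1:ℝ) a,
          IntervalIntegrable q MeasureTheory.volume x y := by
        intro x hx y hy
        exact (hqc.mono (Set.ordConnected_Ioc.uIcc_subset hx hy)).intervalIntegrable
      set K₀ : ℝ := ∫ s in x₀..a, q s with hK0_def
      have hFb : ∀ᶠ x in 𝓝[>] (-1:ℝ), F x ≤ K₀ + C := by
        filter_upwards [hC, Ioo_mem_nhdsGT_of_mem ⟨le_rfl, hx01⟩] with x hx1 hx2
        have hxa : x ∈ Ioo (-1:ℝ) a := ⟨hx2.1, hx2.2.trans hx02⟩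
        have hxc : x ∈ Ioc (-1:ℝ) a := ⟨hx2.1, (hx2.2.trans hx02).le⟩
        have hsub : uIcc x₀ x ⊆ Ioo (-1:ℝ) a :=
          Set.ordConnected_Ioo.uIcc_subset hx0mem hxa
        have hgi : IntervalIntegrable (fun s => 2 / (1 - s))
            MeasureTheory.volume x₀ x := by
          apply ContinuousOn.intervalIntegrable
          apply ContinuousOn.div continuousOn_const
            (continuous_const.sub continuous_id).continuousOn
          intro s hs
          have h2 : s < 1 := (hsub hs).2.trans ha2
          intro h; simp only [Pi.sub_apply, id_eq] at h; linarith
        have hqi' : IntervalIntegrable q MeasureTheory.volume x₀ x :=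
          hqi x₀ ⟨hx01, hx02.le⟩ x hxc
        have hsplit : F x = (∫ s in x₀..x, 2/(1-s)) + ∫ s in x₀..x, q s := by
          simp only [hF_def]
          rw [← intervalIntegral.integral_add hgi hqi']
          apply intervalIntegral.integral_congr
          intro s hs
          have hs' := hsub hs
          have h1 : (0:ℝ) < 1 - s^2 := hpos s hs'
          have h2 : s < 1 := hs'.2.trans ha2
          simp only [hp_def, hq_def]
          have h3 : 1 - s ≠ 0 := by intro h; linarith
          field_simp
          ring
        have hg_le : (∫ s in x₀..x, 2/(1-s)) ≤ 0 := by
          rw [intervalIntegral.integral_symm]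
          have h4 : 0 ≤ ∫ s in x..x₀, 2/(1-s) := by
            apply intervalIntegral.integral_nonneg (le_of_lt hx2.2)
            intro u hu
            have h2 : u < 1 := (lt_of_le_of_lt hu.2 hx02).trans ha2
            have : 0 < 1 - u := by linarith
            positivity
          linarith
        have hq_split : (∫ s in x₀..x, q s) = K₀ + ∫ s in a..x, q s := by
          simp only [hK0_def]
          rw [intervalIntegral.integral_add_adjacent_intervals
            (hqi x₀ ⟨hx01, hx02.le⟩ a ⟨ha1, le_rfl⟩) (hqi a ⟨ha1, le_rfl⟩ x hxc)]
        rw [hsplit, hq_split]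
        linarith
      have hw0 : w (-1) = 0 := by simp only [hw_def]; rw [hU2, hV2]; ring
      intro ε hε
      have hwev : ∀ᶠ x in 𝓝[>] (-1:ℝ), |w x| < ε * Real.exp (-(K₀ + C)) := by
        have h := Metric.tendsto_nhds.mp hwt (ε * Real.exp (-(K₀ + C))) (by positivity)
        simpa [hw0, Real.dist_eq] using h
      filter_upwards [hFb, hwev] with x h1 h2
      simp only [hG_def]
      have hle : Real.exp (F x) ≤ Real.exp (K₀ + C) := Real.exp_le_exp.mpr h1
      have key : Real.exp (K₀ + C) * (ε * Real.exp (-(K₀ + C))) = ε := by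
        rw [Real.exp_neg]
        field_simp
      rcases le_or_gt 0 (w x) with hw | hw
      · have : 0 ≤ Real.exp (F x) * w x := mul_nonneg (Real.exp_pos _).le hw
        linarith
      · have h3 : -(ε * Real.exp (-(K₀ + C))) < w x := (abs_lt.mp h2).1
        have h4 : Real.exp (K₀+C) * w x ≤ Real.exp (F x) * w x :=
          mul_le_mul_of_nonpos_right hle hw.le
        have h5 : Real.exp (K₀+C) * (-(ε * Real.exp (-(K₀ + C))))
            < Real.exp (K₀+C) * w x :=
          mul_lt_mul_of_pos_left h3 (Real.exp_pos _)
        have h6 : Real.exp (K₀+C) * (-(ε * Real.exp (-(K₀ + C)))) = -ε := by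
          rw [mul_neg, key]
        linarith
  have hG_nonneg : ∀ y ∈ Ioo (-1:ℝ) a, 0 ≤ G y := by
    intro y hy
    by_contra hneg
    push_neg at hneg
    have hε : 0 < -G y / 2 := by linarith
    have hev := (claim _ hε).and (Ioo_mem_nhdsGT_of_mem (⟨le_rfl, hy.1⟩ : (-1:ℝ) ∈ Ico (-1) y))
    obtain ⟨x, hx1, hx2⟩ := hev.exists
    have hxmem : x ∈ Ioo (-1:ℝ) a := ⟨hx2.1, hx2.2.trans hy.2⟩
    have := hmono hxmem hy hx2.2.le
    linarith
  have hw_nonneg : ∀ y ∈ Ioo (-1:ℝ) a, 0 ≤ w y := by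
    intro y hy
    have h := hG_nonneg y hy
    simp only [hG_def] at h
    nlinarith [Real.exp_pos (F y)]
  by_cases hex : ∃ z ∈ Ioo (-1:ℝ) a, w z = 0
  · right
    obtain ⟨z, hz, hz0⟩ := hex
    refine ⟨z + 1, ⟨by linarith [hz.1], by simp only [ha_def] at hz; linarith [hz.2]⟩, ?_⟩
    intro y hy
    have hy' : y ∈ Ioo (-1:ℝ) a := ⟨hy.1, by linarith [hy.2, hz.2]⟩
    have hyz : y ≤ z := by linarith [hy.2]
    have h1 : G y ≤ G z := hmono hy' hz hyz
    have h2 : G z = 0 := by simp [hG_def, hz0]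
    have h3 : 0 ≤ G y := hG_nonneg y hy'
    have h4 : w y = 0 := by
      have h5 : G y = 0 := le_antisymm (by linarith) h3
      simp only [hG_def] at h5
      have := Real.exp_pos (F y)
      rcases mul_eq_zero.mp h5 with h | h
      · linarith
      · exact h
    have : U y - V y = 0 := h4
    linarith
  · left
    intro x hx
    push_neg at hex
    have h1 := hw_nonneg x hx
    have h2 := hex x hx
    have : 0 < w x := lt_of_le_of_ne h1 (Ne.symm h2)
    simp only [hw_def] at this
    linarith
end
end

section
/- Let 0 < δ < 2 and let U, Ũ be functions that are C¹ on [1-δ,1) and continuous on [1-δ,1], satisfying (1-x²)U'(x) + 2x·U(x) + (1/2)U(x)² ≥ (1-x²)Ũ'(x) + 2x·Ũ(x) + (1/2)Ũ(x)² for all x ∈ (1-δ,1). Assume that either (i) U(1) ≤ Ũ(1) < -2, or (ii) U(1) = Ũ(1) = -2 and limsup_{x→1⁻} ∫_{1-δ}^{x} (U(s) + 2)/(1-s²) ds < +∞. Then either U(x) < Ũ(x) for all x ∈ (1-δ,1), or there exists δ' ∈ (0,δ) such that U ≡ Ũ on (1-δ',1). -/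
open Set Filter Real Topology

noncomputable section

/-- comparison lemma near the right endpoint `1`. Here `V` plays the role of `Ũ`. -/
theorem statement14 (δ : ℝ) (hδ1 : 0 < δ) (hδ2 : δ < 2) (U V : ℝ → ℝ)
    (hU1 : ContDiffOn ℝ 1 U (Ico (1 - δ) (1 : ℝ)))
    (hU0 : ContinuousOn U (Icc (1 - δ) (1 : ℝ)))
    (hV1 : ContDiffOn ℝ 1 V (Ico (1 - δ) (1 : ℝ)))
    (hV0 : ContinuousOn V (Icc (1 - δ) (1 : ℝ)))
    (hineq : ∀ x ∈ Ioo (1 - δ) (1 : ℝ),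
      (1 - x ^ 2) * deriv V x + 2 * x * V x + (1 / 2) * (V x) ^ 2 ≤
      (1 - x ^ 2) * deriv U x + 2 * x * U x + (1 / 2) * (U x) ^ 2)
    (hcond :
      -- (i) U(1) ≤ Ũ(1) < -2
      (U 1 ≤ V 1 ∧ V 1 < -2) ∨
      -- (ii) U(1) = Ũ(1) = -2 and limsup_{x→1⁻} ∫_{1-δ}^x (U(s)+2)/(1-s²) ds < +∞
      (U 1 = -2 ∧ V 1 = -2 ∧
        Filter.IsBoundedUnder (· ≤ ·) (𝓝[<] (1 : ℝ))
          (fun x : ℝ => ∫ s in (1 - δ)..x, (U s + 2) / (1 - s ^ 2)))) :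
    (∀ x ∈ Ioo (1 - δ) (1 : ℝ), U x < V x) ∨
    (∃ δ' : ℝ, δ' ∈ Ioo (0 : ℝ) δ ∧ EqOn U V (Ioo (1 - δ') (1 : ℝ))) := by
  by_cases hlt : ∀ x ∈ Ioo (1 - δ) (1 : ℝ), U x < V x
  · exact Or.inl hlt
  right
  push_neg at hlt
  obtain ⟨x₀, hx₀, hx₀le⟩ := hlt
  obtain ⟨hx₀l, hx₀r⟩ := hx₀
  have hm1 : (-1 : ℝ) < 1 - δ := by linarith
  set w : ℝ → ℝ := fun x => V x - U x with hw_def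
  set q : ℝ → ℝ := fun s => (2 * s + (U s + V s) / 2) / (1 - s ^ 2) with hq_def
  set F : ℝ → ℝ := fun x => ∫ s in x₀..x, q s with hF_def
  set g : ℝ → ℝ := fun x => w x * Real.exp (F x) with hg_def
  have hIooIcc : Ioo (1 - δ) (1 : ℝ) ⊆ Icc (1 - δ) 1 := Ioo_subset_Icc_self
  have hIooIco : Ioo (1 - δ) (1 : ℝ) ⊆ Ico (1 - δ) 1 := Ioo_subset_Ico_self
  have hdenpos : ∀ s ∈ Ioo (1 - δ) (1 : ℝ), 0 < 1 - s ^ 2 := by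
    intro s hs
    have h1 : -1 < s := lt_of_lt_of_le hm1 hs.1.le
    nlinarith [hs.2]
  have hq_cont : ContinuousOn q (Ioo (1 - δ) (1 : ℝ)) := by
    apply ContinuousOn.div
    · exact (continuousOn_const.mul continuousOn_id).add
        (((hU0.mono hIooIcc).add (hV0.mono hIooIcc)).div_const 2)
    · fun_prop
    · intro s hs; exact ne_of_gt (hdenpos s hs)
  have hsubIoo : Ico x₀ (1 : ℝ) ⊆ Ioo (1 - δ) 1 := fun x hx => ⟨lt_of_lt_of_le hx₀l hx.1, hx.2⟩
  have hnhds : ∀ x ∈ Ioo (1 - δ) (1 : ℝ), Ico (1 - δ) (1 : ℝ) ∈ 𝓝 x := fun x hx =>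
    Filter.mem_of_superset (isOpen_Ioo.mem_nhds hx) hIooIco
  have hUd : ∀ x ∈ Ioo (1 - δ) (1 : ℝ), HasDerivAt U (deriv U x) x := fun x hx =>
    ((hU1.contDiffAt (hnhds x hx)).differentiableAt one_ne_zero).hasDerivAt
  have hVd : ∀ x ∈ Ioo (1 - δ) (1 : ℝ), HasDerivAt V (deriv V x) x := fun x hx =>
    ((hV1.contDiffAt (hnhds x hx)).differentiableAt one_ne_zero).hasDerivAt
  have hq_int : ∀ x ∈ Ico x₀ (1 : ℝ), IntervalIntegrable q MeasureTheory.volume x₀ x := by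
    intro x hx
    apply ContinuousOn.intervalIntegrable
    apply hq_cont.mono
    rw [uIcc_of_le hx.1]
    exact fun s hs => ⟨lt_of_lt_of_le hx₀l hs.1, lt_of_le_of_lt hs.2 hx.2⟩
  have hF_deriv : ∀ x ∈ Ico x₀ (1 : ℝ), HasDerivAt F (q x) x := by
    intro x hx
    exact intervalIntegral.integral_hasDerivAt_right (hq_int x hx)
      (hq_cont.stronglyMeasurableAtFilter isOpen_Ioo x (hsubIoo hx))
      (hq_cont.continuousAt (isOpen_Ioo.mem_nhds (hsubIoo hx)))
  have hg_deriv : ∀ x ∈ Ico x₀ (1 : ℝ),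
      HasDerivAt g ((deriv V x - deriv U x + q x * w x) * Real.exp (F x)) x := by
    intro x hx
    have hwd : HasDerivAt w (deriv V x - deriv U x) x :=
      (hVd x (hsubIoo hx)).sub (hUd x (hsubIoo hx))
    have hed : HasDerivAt (fun y => Real.exp (F y)) (Real.exp (F x) * q x) x :=
      (Real.hasDerivAt_exp (F x)).comp x (hF_deriv x hx)
    have h : HasDerivAt (fun y => w y * Real.exp (F y)) _ x := hwd.mul hed
    convert h using 1
    ring
  have hkey : ∀ x ∈ Ioo x₀ (1 : ℝ), deriv V x - deriv U x + q x * w x ≤ 0 := by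
    intro x hx
    have hx' : x ∈ Ioo (1 - δ) 1 := hsubIoo (Ioo_subset_Ico_self hx)
    have hpos := hdenpos x hx'
    have hkey2 := hineq x hx'
    have hqx : q x * (1 - x ^ 2) = 2 * x + (U x + V x) / 2 := by
      rw [hq_def]; field_simp
    have hmul : (deriv V x - deriv U x + q x * w x) * (1 - x ^ 2) ≤ 0 := by
      have heq : (deriv V x - deriv U x + q x * w x) * (1 - x ^ 2)
          = (1 - x ^ 2) * (deriv V x - deriv U x) + (q x * (1 - x ^ 2)) * w x := by ring
      rw [heq, hqx]
      simp only [hw_def]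
      nlinarith [hkey2]
    nlinarith [hmul, hpos]
  have hg_anti : AntitoneOn g (Ico x₀ 1) := by
    apply antitoneOn_of_deriv_nonpos (convex_Ico x₀ 1)
    · exact fun x hx => (hg_deriv x hx).continuousAt.continuousWithinAt
    · rw [interior_Ico]
      exact fun x hx =>
        (hg_deriv x (Ioo_subset_Ico_self hx)).differentiableAt.differentiableWithinAt
    · rw [interior_Ico]
      intro x hx
      rw [(hg_deriv x (Ioo_subset_Ico_self hx)).deriv]
      exact mul_nonpos_of_nonpos_of_nonneg (hkey x hx) (Real.exp_pos _).le
  have hgx₀ : g x₀ ≤ 0 := by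
    simp only [hg_def, hF_def, hw_def, intervalIntegral.integral_same, Real.exp_zero, mul_one]
    linarith
  have hx₀mem : x₀ ∈ Ico x₀ (1 : ℝ) := ⟨le_rfl, hx₀r⟩
  have hw_nonpos : ∀ x ∈ Ico x₀ (1 : ℝ), w x ≤ 0 := by
    intro x hx
    have hgle : g x ≤ g x₀ := hg_anti hx₀mem hx hx.1
    have h0 : w x * Real.exp (F x) ≤ 0 := le_trans hgle hgx₀
    by_contra hwpos
    push_neg at hwpos
    nlinarith [Real.exp_pos (F x), h0, hwpos]
  set L : Filter ℝ := 𝓝[Ioo (1 - δ) 1] (1 : ℝ) with hL_def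
  have hL_neBot : L.NeBot := by
    rw [hL_def]
    apply mem_closure_iff_nhdsWithin_neBot.1
    rw [closure_Ioo (by linarith : (1 : ℝ) - δ ≠ 1)]
    exact ⟨by linarith, le_rfl⟩
  have hL_le : L ≤ 𝓝[<] (1 : ℝ) := nhdsWithin_mono 1 (fun x hx => hx.2)
  have hw_tendsto : Filter.Tendsto w L (𝓝 (w 1)) := by
    have hcw : ContinuousWithinAt w (Icc (1 - δ) 1) 1 :=
      ((hV0.sub hU0) 1 ⟨by linarith, le_rfl⟩)
    exact (hcw.mono hIooIcc).tendsto
  have hIooL : ∀ a : ℝ, a < 1 → ∀ᶠ x in L, x ∈ Ioo a (1 : ℝ) := by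
    intro a ha
    exact hL_le (Ioo_mem_nhdsLT_of_mem ⟨ha, le_rfl⟩)
  have hw1_le : w 1 ≤ 0 := by
    apply le_of_tendsto hw_tendsto
    filter_upwards [hIooL x₀ hx₀r] with x hx
    exact hw_nonpos x (Ioo_subset_Ico_self hx)
  have hw1 : w 1 = 0 := by
    rcases hcond with ⟨h1, _⟩ | ⟨h1, h2, _⟩
    · refine le_antisymm hw1_le ?_
      simp only [hw_def]
      linarith
    · simp only [hw_def]; rw [h1, h2]; ring
  have hU1V1 : U 1 = V 1 := by
    simp only [hw_def] at hw1; linarith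
  -- F is eventually bounded above near 1
  have hFbdd : ∃ M : ℝ, ∀ᶠ x in L, F x ≤ M := by
    rcases hcond with ⟨h1, h2⟩ | ⟨h1, h2, h3⟩
    · -- case (i)
      have hnum_cont : ContinuousWithinAt (fun s => 2 * s + (U s + V s) / 2) (Icc (1 - δ) 1) 1 := by
        apply ContinuousWithinAt.add
        · exact (continuous_const.mul continuous_id).continuousWithinAt
        · exact ((hU0 1 ⟨by linarith, le_rfl⟩).add (hV0 1 ⟨by linarith, le_rfl⟩)).div_const 2
      have hval : 2 * (1 : ℝ) + (U 1 + V 1) / 2 < 0 := by rw [hU1V1]; linarith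
      have hev : ∀ᶠ s in L, (2 * s + (U s + V s) / 2) < 0 := by
        have ht : Filter.Tendsto (fun s => 2 * s + (U s + V s) / 2) L
            (𝓝 (2 * 1 + (U 1 + V 1) / 2)) := (hnum_cont.mono hIooIcc).tendsto
        exact ht.eventually_lt_const hval
      rw [hL_def, eventually_nhdsWithin_iff, Metric.eventually_nhds_iff] at hev
      obtain ⟨ε, hε, hball⟩ := hev
      set x₂ : ℝ := max x₀ (1 - ε / 2) with hx₂_def
      have hx₂lt : x₂ < 1 := by
        rw [hx₂_def]; apply max_lt hx₀r; linarith
      have hx₂ge : x₀ ≤ x₂ := le_max_left _ _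
      have hx₂mem : x₂ ∈ Ico x₀ (1 : ℝ) := ⟨hx₂ge, hx₂lt⟩
      have hqneg : ∀ s ∈ Ico x₂ (1 : ℝ), q s ≤ 0 := by
        intro s hs
        have hs' : s ∈ Ioo (1 - δ) 1 := hsubIoo ⟨le_trans hx₂ge hs.1, hs.2⟩
        have hb : dist s 1 < ε := by
          rw [Real.dist_eq, abs_lt]
          constructor
          · have hh : 1 - ε / 2 ≤ x₂ := le_max_right _ _
            linarith [hs.1]
          · linarith [hs.2]
        have hnum := hball hb hs'
        exact div_nonpos_of_nonpos_of_nonneg hnum.le (hdenpos s hs').le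
      refine ⟨F x₂, ?_⟩
      filter_upwards [hIooL x₂ hx₂lt] with x hx
      have hxmem : x ∈ Ico x₀ (1 : ℝ) := ⟨le_trans hx₂ge hx.1.le, hx.2⟩
      have hint1 : IntervalIntegrable q MeasureTheory.volume x₀ x₂ := hq_int x₂ hx₂mem
      have hint2 : IntervalIntegrable q MeasureTheory.volume x₂ x := by
        apply ContinuousOn.intervalIntegrable
        apply hq_cont.mono
        rw [uIcc_of_le hx.1.le]
        exact fun s hs => hsubIoo ⟨le_trans hx₂ge hs.1, lt_of_le_of_lt hs.2 hx.2⟩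
      have hsplit : F x₂ + ∫ s in x₂..x, q s = F x :=
        intervalIntegral.integral_add_adjacent_intervals hint1 hint2
      have hle : (∫ s in x₂..x, q s) ≤ 0 := by
        have hz : (∫ s in x₂..x, (0 : ℝ)) = 0 := by simp
        rw [← hz]
        apply intervalIntegral.integral_mono_on hx.1.le hint2 intervalIntegrable_const
        intro u hu
        exact hqneg u ⟨hu.1, lt_of_le_of_lt hu.2 hx.2⟩
      linarith [hsplit, hle]
    · -- case (ii)
      obtain ⟨M, hM⟩ := h3
      rw [Filter.eventually_map] at hM
      set k : ℝ → ℝ := fun s => (U s + 2) / (1 - s ^ 2) with hk_def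
      have hk_cont : ContinuousOn k (Ico (1 - δ) (1 : ℝ)) := by
        apply ContinuousOn.div
        · exact (hU0.mono Ico_subset_Icc_self).add continuousOn_const
        · fun_prop
        · intro s hs
          have hsm : -1 < s := lt_of_lt_of_le hm1 hs.1
          have hs2 := hs.2
          nlinarith
      have hk_int : ∀ a b : ℝ, 1 - δ ≤ a → a ≤ b → b < 1 →
          IntervalIntegrable k MeasureTheory.volume a b := by
        intro a b ha hab hb
        apply ContinuousOn.intervalIntegrable
        apply hk_cont.mono
        rw [uIcc_of_le hab]
        exact fun s hs => ⟨le_trans ha hs.1, lt_of_le_of_lt hs.2 hb⟩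
      refine ⟨M - ∫ s in (1 - δ)..x₀, k s, ?_⟩
      filter_upwards [hIooL x₀ hx₀r, hM.filter_mono hL_le] with x hx hMx
      have hxmem : x ∈ Ico x₀ (1 : ℝ) := ⟨hx.1.le, hx.2⟩
      have hqk : ∀ s ∈ Icc x₀ x, q s ≤ k s := by
        intro s hs
        have hs' : s ∈ Ico x₀ (1 : ℝ) := ⟨hs.1, lt_of_le_of_lt hs.2 hx.2⟩
        have hsIoo : s ∈ Ioo (1 - δ) 1 := hsubIoo hs'
        have hVU : V s ≤ U s := by
          have hwn := hw_nonpos s hs'; simp only [hw_def] at hwn; linarith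
        have hnum : 2 * s + (U s + V s) / 2 ≤ U s + 2 := by
          have := hsIoo.2; linarith
        exact div_le_div_of_nonneg_right hnum (hdenpos s hsIoo).le
      have hFk : F x ≤ ∫ s in x₀..x, k s := by
        apply intervalIntegral.integral_mono_on hx.1.le (hq_int x hxmem)
          (hk_int x₀ x hx₀l.le hx.1.le hx.2) hqk
      have hsplit : (∫ s in (1 - δ)..x₀, k s) + (∫ s in x₀..x, k s)
          = ∫ s in (1 - δ)..x, k s :=
        intervalIntegral.integral_add_adjacent_intervals
          (hk_int (1 - δ) x₀ le_rfl hx₀l.le hx₀r)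
          (hk_int x₀ x hx₀l.le hx.1.le hx.2)
      have hMx' : (∫ s in (1 - δ)..x, k s) ≤ M := hMx
      linarith [hFk, hsplit, hMx']
  -- conclude w ≡ 0 on (x₀, 1)
  obtain ⟨M, hFM⟩ := hFbdd
  have hweq : ∀ x ∈ Ioo x₀ (1 : ℝ), w x = 0 := by
    intro x₁ hx₁
    by_contra hne
    have hwlt : w x₁ < 0 := lt_of_le_of_ne (hw_nonpos x₁ (Ioo_subset_Ico_self hx₁)) hne
    have hgx₁ : g x₁ < 0 := mul_neg_of_neg_of_pos hwlt (Real.exp_pos _)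
    have hev : ∀ᶠ x in L, w x ≤ g x₁ / Real.exp M := by
      filter_upwards [hIooL x₁ hx₁.2, hFM] with x hx hFx
      have hxmem : x ∈ Ico x₀ (1 : ℝ) := ⟨le_trans hx₁.1.le hx.1.le, hx.2⟩
      have hgle : g x ≤ g x₁ :=
        hg_anti ⟨hx₁.1.le, hx₁.2⟩ hxmem hx.1.le
      have h1 : w x * Real.exp (F x) ≤ g x₁ := hgle
      have heF : Real.exp (F x) ≤ Real.exp M := Real.exp_le_exp.2 hFx
      have e1 : w x ≤ g x₁ / Real.exp (F x) := (le_div_iff₀ (Real.exp_pos _)).2 h1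
      have e2 : g x₁ / Real.exp (F x) ≤ g x₁ / Real.exp M := by
        rw [div_le_div_iff₀ (Real.exp_pos _) (Real.exp_pos _)]
        nlinarith [heF, hgx₁]
      linarith
    have hlim : w 1 ≤ g x₁ / Real.exp M := le_of_tendsto hw_tendsto hev
    have : g x₁ / Real.exp M < 0 := div_neg_of_neg_of_pos hgx₁ (Real.exp_pos _)
    linarith [hw1]
  refine ⟨1 - x₀, ⟨by linarith, by linarith⟩, ?_⟩
  have h11 : (1 : ℝ) - (1 - x₀) = x₀ := by ring
  rw [h11]
  intro x hx
  have hwx := hweq x hx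
  simp only [hw_def] at hwx
  linarith
end
end

section
/- Let c₁ > -1, c₂, c₃ ∈ ℝ, and 0 < δ < 2. Then there exists at most one C¹ solution U of (★) on (-1,-1+δ) satisfying lim_{x→-1⁺} U(x) = τ₂(c₁). -/
open Set Filter Real Topology

noncomputable section

/-- uniqueness of the solution with boundary value `τ₂(c₁)` at `-1`. -/
theorem statement15 (c₁ c₂ c₃ δ : ℝ) (h1 : -1 < c₁) (hδ1 : 0 < δ) (hδ2 : δ < 2)
    (U V : ℝ → ℝ)
    (hU : IsSolOn c₁ c₂ c₃ U (Ioo (-1 : ℝ) (-1 + δ)))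
    (hUl : Tendsto U (𝓝[>] (-1 : ℝ)) (𝓝 (tau2 c₁)))
    (hV : IsSolOn c₁ c₂ c₃ V (Ioo (-1 : ℝ) (-1 + δ)))
    (hVl : Tendsto V (𝓝[>] (-1 : ℝ)) (𝓝 (tau2 c₁))) :
    EqOn U V (Ioo (-1 : ℝ) (-1 + δ)) := by
  obtain ⟨hUc, hUe⟩ := hU
  obtain ⟨hVc, hVe⟩ := hV
  set I : Set ℝ := Ioo (-1 : ℝ) (-1 + δ) with hIdef
  -- basic facts about points in I
  have hden : ∀ x ∈ I, (0:ℝ) < 1 - x ^ 2 := by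
    rintro x ⟨hx1, hx2⟩
    nlinarith
  -- the difference W and its derivative
  set W : ℝ → ℝ := fun t => U t - V t with hWdef
  have key : ∀ x ∈ I, HasDerivAt W
      (-(2 * x + (U x + V x) / 2) / (1 - x ^ 2) * W x) x := by
    intro x hx
    have hxI : I ∈ 𝓝 x := isOpen_Ioo.mem_nhds hx
    have hdU : HasDerivAt U (deriv U x) x :=
      ((hUc.contDiffAt hxI).differentiableAt one_ne_zero).hasDerivAt
    have hdV : HasDerivAt V (deriv V x) x :=
      ((hVc.contDiffAt hxI).differentiableAt one_ne_zero).hasDerivAt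
    have h1 := hUe x hx
    have h2 := hVe x hx
    unfold StarEq at h1 h2
    have hne : (1 - x ^ 2) ≠ 0 := ne_of_gt (hden x hx)
    have hval : deriv U x - deriv V x
        = -(2 * x + (U x + V x) / 2) / (1 - x ^ 2) * W x := by
      rw [div_mul_eq_mul_div, eq_div_iff hne]
      simp only [hWdef]
      linear_combination h1 - h2
    have := hdU.sub hdV
    rw [hval] at this
    exact this
  -- near -1 the coefficient numerator is positive
  have hsq : 0 < Real.sqrt (1 + c₁) := Real.sqrt_pos.mpr (by linarith)
  have htend : Tendsto (fun x => 2 * x + (U x + V x) / 2) (𝓝[>] (-1 : ℝ))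
      (𝓝 (2 * Real.sqrt (1 + c₁))) := by
    have hx : Tendsto (fun x : ℝ => 2 * x) (𝓝[>] (-1 : ℝ)) (𝓝 (2 * (-1))) :=
      ((continuous_const.mul continuous_id).tendsto _).mono_left nhdsWithin_le_nhds
    have h := hx.add ((hUl.add hVl).div_const 2)
    have heq : 2 * (-1) + (tau2 c₁ + tau2 c₁) / 2 = 2 * Real.sqrt (1 + c₁) := by
      unfold tau2; ring
    rwa [heq] at h
  have hev : ∀ᶠ x in 𝓝[>] (-1 : ℝ), 0 < 2 * x + (U x + V x) / 2 :=
    htend.eventually (eventually_gt_nhds (by positivity))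
  have hevI : ∀ᶠ x in 𝓝[>] (-1 : ℝ), x ∈ I :=
    Ioo_mem_nhdsGT_of_mem ⟨le_rfl, by linarith⟩
  obtain ⟨u, hu, husub⟩ := mem_nhdsGT_iff_exists_Ioo_subset.mp (hev.and hevI)
  have hu1 : (-1 : ℝ) < u := hu
  -- W vanishes on (-1, u)
  have hzero : ∀ y ∈ Ioo (-1 : ℝ) u, W y = 0 := by
    have hganti : AntitoneOn (fun t => (W t) ^ 2) (Ioo (-1 : ℝ) u) := by
      apply antitoneOn_of_deriv_nonpos (convex_Ioo _ _)
      · intro t ht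
        exact (((key t (husub ht).2).pow 2).continuousAt).continuousWithinAt
      · rw [interior_Ioo]
        intro t ht
        exact ((key t (husub ht).2).pow 2).differentiableAt.differentiableWithinAt
      · rw [interior_Ioo]
        intro t ht
        have hpos := (husub ht).1
        have hdenpos := hden t (husub ht).2
        have h1 : 0 ≤ (2 * t + (U t + V t) / 2) / (1 - t ^ 2) :=
          div_nonneg hpos.le hdenpos.le
        have hd : HasDerivAt (fun y => W y ^ 2)
            (-((2 * t + (U t + V t) / 2) / (1 - t ^ 2) * (2 * W t ^ 2))) t := by
          have h := (key t (husub ht).2).fun_pow 2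
          refine h.congr_deriv ?_
          push_cast
          ring
        rw [hd.deriv]
        exact neg_nonpos.mpr (mul_nonneg h1 (by positivity))
    intro y hy
    have htend0 : Tendsto (fun t => (W t) ^ 2) (𝓝[>] (-1 : ℝ)) (𝓝 0) := by
      have h := (hUl.sub hVl).pow 2
      simpa using h
    have hle : ∀ᶠ x in 𝓝[>] (-1 : ℝ), (W y) ^ 2 ≤ (W x) ^ 2 := by
      filter_upwards [Ioo_mem_nhdsGT_of_mem (⟨le_rfl, hy.1⟩ : (-1:ℝ) ∈ Ico (-1) y)]
        with x hx
      exact hganti ⟨hx.1, hx.2.trans hy.2⟩ hy (le_of_lt hx.2)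
    have h0 : (W y) ^ 2 ≤ 0 := ge_of_tendsto htend0 hle
    have := le_antisymm h0 (sq_nonneg (W y))
    exact pow_eq_zero_iff two_ne_zero |>.mp this
  -- conclude on all of I
  intro x hx
  have goal : W x = 0 := by
    by_cases hxu : x < u
    · exact hzero x ⟨hx.1, hxu⟩
    push_neg at hxu
    set p : ℝ := (-1 + u) / 2 with hpdef
    have hp1 : (-1 : ℝ) < p := by simp only [hpdef]; linarith
    have hpu : p < u := by simp only [hpdef]; linarith
    have hpx : p ≤ x := le_trans hpu.le hxu
    have hIcc : Icc p x ⊆ I := by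
      intro t ht
      exact ⟨lt_of_lt_of_le hp1 ht.1, lt_of_le_of_lt ht.2 hx.2⟩
    -- continuity of the coefficient on Icc p x
    set A : ℝ → ℝ := fun t => -(2 * t + (U t + V t) / 2) / (1 - t ^ 2) with hAdef
    have hAcont : ContinuousOn A (Icc p x) := by
      apply ContinuousOn.div
      · exact ((continuous_const.mul continuous_id).continuousOn.add
          (((hUc.continuousOn.mono hIcc).add (hVc.continuousOn.mono hIcc)).div_const 2)).neg
      · exact (continuous_const.sub (continuous_pow 2)).continuousOn
      · intro t ht
        exact ne_of_gt (hden t (hIcc ht))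
    obtain ⟨K, hK⟩ := isCompact_Icc.exists_bound_of_continuousOn hAcont
    have hgron := norm_le_gronwallBound_of_norm_deriv_right_le
      (f := W) (f' := fun t => A t * W t) (δ := 0) (K := K) (ε := 0) (a := p) (b := x)
      ?_ ?_ ?_ ?_ x ⟨hpx, le_rfl⟩
    · rw [gronwallBound_ε0, zero_mul] at hgron
      exact norm_le_zero_iff.mp hgron
    · intro t ht
      exact ((key t (hIcc ht)).continuousAt).continuousWithinAt
    · intro t ht
      exact (key t (hIcc ⟨ht.1, ht.2.le⟩)).hasDerivWithinAt
    · rw [hzero p ⟨hp1, hpu⟩]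
      simp
    · intro t ht
      have htI : t ∈ Icc p x := ⟨ht.1, ht.2.le⟩
      rw [norm_mul, add_zero]
      exact mul_le_mul_of_nonneg_right (hK t htI) (norm_nonneg _)
  exact sub_eq_zero.mp goal
end
end

section
/- Let c₁ ≥ -1, c₂ ≥ -1, and c₃ = c̄₃(c₁,c₂). Then U*(x) := (1+√(1+c₁))(1-x) + (-1-√(1+c₂))(1+x) is the unique C¹ solution of (★) on (-1,1); in particular U*(-1) = τ₂(c₁) and U*(1) = τ₁'(c₂). -/
open Set Filter Real Topology

noncomputable section

section StarAux

open Real Set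

private lemma hasDerivAt_G (a b : ℝ) (V : ℝ → ℝ) {x : ℝ} (hx : x ∈ Ioo (-1:ℝ) 1)
    (hV : HasDerivAt V (deriv V x) x) (hVx : V x ≠ 0)
    (hode : (1 - x^2) * deriv V x + ((a - b) - (a+b)*x) * V x + (1/2) * V x ^ 2 = 0) :
    HasDerivAt (fun y => (1-y) ^ (-b) * (1+y) ^ (-a) / V y)
      (1/2 * (1-x) ^ (-b-1) * (1+x) ^ (-a-1)) x := by
  have h1p : (0:ℝ) < 1 - x := by linarith [hx.2]
  have h2p : (0:ℝ) < 1 + x := by linarith [hx.1]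
  have hd1 : HasDerivAt (fun y : ℝ => 1 - y) (-1) x := by
    simpa using (hasDerivAt_id x).const_sub 1
  have hd2 : HasDerivAt (fun y : ℝ => 1 + y) 1 x := by
    simpa using (hasDerivAt_id x).const_add 1
  have hr1 : HasDerivAt (fun y : ℝ => (1-y) ^ (-b)) ((-b * (1-x) ^ (-b-1)) * (-1)) x := by
    have := (Real.hasDerivAt_rpow_const (x := 1 - x) (p := -b) (Or.inl h1p.ne')).comp x hd1
    exact this
  have hr2 : HasDerivAt (fun y : ℝ => (1+y) ^ (-a)) ((-a * (1+x) ^ (-a-1)) * 1) x := by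
    have := (Real.hasDerivAt_rpow_const (x := 1 + x) (p := -a) (Or.inl h2p.ne')).comp x hd2
    exact this
  have hdiv := (hr1.mul hr2).div hV hVx
  refine hdiv.congr_deriv ?_
  simp only [Pi.mul_apply]
  have hb1 : (1-x) ^ (-b) = (1-x) * (1-x) ^ (-b-1) := by
    have h := Real.rpow_add h1p 1 (-b-1)
    rw [Real.rpow_one] at h
    rw [show (1:ℝ) + (-b-1) = -b from by ring] at h
    exact h
  have ha1 : (1+x) ^ (-a) = (1+x) * (1+x) ^ (-a-1) := by
    have h := Real.rpow_add h2p 1 (-a-1)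
    rw [Real.rpow_one] at h
    rw [show (1:ℝ) + (-a-1) = -a from by ring] at h
    exact h
  rw [hb1, ha1]
  have h12 : (1:ℝ) - x^2 ≠ 0 := by nlinarith
  have hV' : deriv V x = -(((a - b) - (a+b)*x) * V x + (1/2) * V x ^ 2) / (1-x^2) := by
    field_simp
    linarith [hode]
  rw [hV']
  field_simp
  ring

private lemma mono_on_aux {f : ℝ → ℝ} {u v : ℝ}
    (h : ∀ x ∈ Icc u v, ∃ d, 0 ≤ d ∧ HasDerivAt f d x) : MonotoneOn f (Icc u v) := by
  apply monotoneOn_of_deriv_nonneg (convex_Icc u v)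
  · intro x hx; obtain ⟨d, _, hd⟩ := h x hx; exact hd.continuousAt.continuousWithinAt
  · intro x hx
    rw [interior_Icc] at hx
    obtain ⟨d, _, hd⟩ := h x (Ioo_subset_Icc_self hx)
    exact hd.differentiableAt.differentiableWithinAt
  · intro x hx
    rw [interior_Icc] at hx
    obtain ⟨d, hd0, hd⟩ := h x (Ioo_subset_Icc_self hx)
    rw [hd.deriv]; exact hd0

private lemma pos_case (a b : ℝ) (ha : 0 ≤ a) (hb : 0 ≤ b) (V : ℝ → ℝ)
    (hV : ContDiffOn ℝ 1 V (Ioo (-1:ℝ) 1))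
    (hode : ∀ x ∈ Ioo (-1:ℝ) 1,
      (1 - x^2) * deriv V x + ((a - b) - (a+b)*x) * V x + (1/2) * V x ^ 2 = 0)
    (x₀ : ℝ) (hx₀ : x₀ ∈ Ioo (-1:ℝ) 1) (hpos : 0 < V x₀) : False := by
  have hVd : ∀ x ∈ Ioo (-1:ℝ) 1, HasDerivAt V (deriv V x) x := fun x hx =>
    ((hV.contDiffAt (isOpen_Ioo.mem_nhds hx)).differentiableAt one_ne_zero).hasDerivAt
  have hVc : ∀ x ∈ Ioo (-1:ℝ) 1, ContinuousAt V x := fun x hx => (hVd x hx).continuousAt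
  set G : ℝ → ℝ := fun y => (1-y) ^ (-b) * (1+y) ^ (-a) / V y with hGdef
  have hG : ∀ x ∈ Ioo (-1:ℝ) 1, V x ≠ 0 →
      HasDerivAt G (1/2 * (1-x) ^ (-b-1) * (1+x) ^ (-a-1)) x := fun x hx hVx =>
    hasDerivAt_G a b V hx (hVd x hx) hVx (hode x hx)
  have hGpos : ∀ x ∈ Ioo (-1:ℝ) 1, 0 < V x → 0 < G x := by
    intro x hx hVx
    have h1p : (0:ℝ) < 1 - x := by linarith [hx.2]
    have h2p : (0:ℝ) < 1 + x := by linarith [hx.1]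
    exact div_pos (mul_pos (Real.rpow_pos_of_pos h1p _) (Real.rpow_pos_of_pos h2p _)) hVx
  have hderiv_pos : ∀ x ∈ Ioo (-1:ℝ) 1, 0 < 1/2 * (1-x) ^ (-b-1) * (1+x) ^ (-a-1) := by
    intro x hx
    have h1p : (0:ℝ) < 1 - x := by linarith [hx.2]
    have h2p : (0:ℝ) < 1 + x := by linarith [hx.1]
    positivity
  by_cases hP : ∀ x ∈ Ioo (-1:ℝ) x₀, 0 < V x
  · -- V > 0 on (-1, x₀]
    have hVpos : ∀ x, -1 < x → x ≤ x₀ → 0 < V x := by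
      intro x h1 h2
      rcases lt_or_eq_of_le h2 with h | h
      · exact hP x ⟨h1, h⟩
      · rw [h]; exact hpos
    set x₁ : ℝ := min x₀ 0 with hx₁def
    have hx₁m : x₁ ∈ Ioo (-1:ℝ) 1 := ⟨lt_min hx₀.1 (by norm_num), lt_of_le_of_lt (min_le_left _ _) hx₀.2⟩
    have hx₁0 : x₁ ≤ 0 := min_le_right _ _
    have hx₁x₀ : x₁ ≤ x₀ := min_le_left _ _
    set κ : ℝ := 1/2 * (2:ℝ) ^ (-b-1) with hκdef
    have hκpos : 0 < κ := by positivity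
    set φ : ℝ → ℝ := fun y => G y - κ * Real.log (1+y) with hφdef
    have hφd : ∀ x, -1 < x → x ≤ x₁ →
        ∃ d, 0 ≤ d ∧ HasDerivAt φ d x := by
      intro x h1 h2
      have hxm : x ∈ Ioo (-1:ℝ) 1 := ⟨h1, lt_of_le_of_lt h2 hx₁m.2⟩
      have h1p : (0:ℝ) < 1 - x := by linarith [hxm.2]
      have h2p : (0:ℝ) < 1 + x := by linarith [hxm.1]
      have hVx := hVpos x h1 (le_trans h2 hx₁x₀)
      have hlog : HasDerivAt (fun y : ℝ => Real.log (1+y)) ((1+x)⁻¹) x := by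
        have hd2 : HasDerivAt (fun y : ℝ => 1 + y) 1 x := by
          simpa using (hasDerivAt_id x).const_add 1
        exact ((Real.hasDerivAt_log h2p.ne').comp x hd2).congr_deriv (mul_one _)
      refine ⟨1/2 * (1-x) ^ (-b-1) * (1+x) ^ (-a-1) - κ * (1+x)⁻¹, ?_, ?_⟩
      · -- nonneg of derivative
        have hA : (2:ℝ) ^ (-b-1) ≤ (1-x) ^ (-b-1) :=
          Real.rpow_le_rpow_of_nonpos h1p (by linarith) (by linarith)
        have hB : (1+x)⁻¹ ≤ (1+x) ^ (-a-1) := by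
          rw [← Real.rpow_neg_one]
          exact Real.rpow_le_rpow_of_exponent_ge h2p (by linarith) (by linarith)
        have hApos : (0:ℝ) < (2:ℝ) ^ (-b-1) := by positivity
        have hBpos : (0:ℝ) < (1+x)⁻¹ := by positivity
        rw [hκdef]
        nlinarith [mul_le_mul hA hB (le_of_lt hBpos) (le_of_lt (lt_of_lt_of_le hApos hA))]
      · exact ((hG x hxm hVx.ne').sub (hlog.const_mul κ))
    have hmono : ∀ u, -1 < u → u ≤ x₁ → φ u ≤ φ x₁ := by
      intro u h1 h2
      have := mono_on_aux (f := φ) (u := u) (v := x₁)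
        (fun x hx => hφd x (lt_of_lt_of_le h1 hx.1) hx.2)
      exact this ⟨le_refl u, h2⟩ ⟨h2, le_refl x₁⟩ h2
    -- choose u near -1
    set t : ℝ := min ((1+x₁)/2) (Real.exp (-(φ x₁ + 1)/κ)) with htdef
    have htpos : 0 < t := lt_min (by linarith [hx₁m.1]) (Real.exp_pos _)
    set u : ℝ := -1 + t with hudef
    have hu1 : -1 < u := by linarith
    have hu2 : u ≤ x₁ := by
      have : t ≤ (1+x₁)/2 := min_le_left _ _
      have : u ≤ -1 + (1+x₁)/2 := by linarith
      linarith [hx₁m.1]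
    have hum : u ∈ Ioo (-1:ℝ) 1 := ⟨hu1, lt_of_le_of_lt hu2 hx₁m.2⟩
    have hGu : 0 < G u := hGpos u hum (hVpos u hu1 (le_trans hu2 hx₁x₀))
    have hlogu : Real.log (1+u) ≤ -(φ x₁ + 1)/κ := by
      have h1 : (1:ℝ) + u = t := by rw [hudef]; ring
      rw [h1]
      calc Real.log t ≤ Real.log (Real.exp (-(φ x₁ + 1)/κ)) :=
            Real.log_le_log htpos (min_le_right _ _)
        _ = -(φ x₁ + 1)/κ := Real.log_exp _
    have := hmono u hu1 hu2
    have hφu : φ u = G u - κ * Real.log (1+u) := rfl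
    have hφx₁ : φ x₁ = G x₁ - κ * Real.log (1+x₁) := rfl
    have hineq : G u ≤ φ x₁ + κ * Real.log (1+u) := by
      linarith [this, hφx₁, hφu]
    have : κ * Real.log (1+u) ≤ κ * (-(φ x₁ + 1)/κ) :=
      mul_le_mul_of_nonneg_left hlogu (le_of_lt hκpos)
    have hfin : κ * (-(φ x₁ + 1)/κ) = -(φ x₁ + 1) := by field_simp
    linarith
  · -- there is a zero to the left
    push_neg at hP
    obtain ⟨z, hz, hVz⟩ := hP
    have hzx₀ : z ≤ x₀ := le_of_lt hz.2
    have hzm : z ∈ Ioo (-1:ℝ) 1 := ⟨hz.1, lt_trans hz.2 hx₀.2⟩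
    have hsub : Icc z x₀ ⊆ Ioo (-1:ℝ) 1 := fun x hx =>
      ⟨lt_of_lt_of_le hzm.1 hx.1, lt_of_le_of_lt hx.2 hx₀.2⟩
    have hVcont : ContinuousOn V (Icc z x₀) := fun x hx =>
      (hVc x (hsub hx)).continuousWithinAt
    -- zero set
    set S : Set ℝ := {x ∈ Icc z x₀ | V x = 0} with hSdef
    have hSne : S.Nonempty := by
      have h0 : (0:ℝ) ∈ Icc (V z) (V x₀) := ⟨hVz, le_of_lt hpos⟩
      obtain ⟨y, hy, hVy⟩ := intermediate_value_Icc hzx₀ hVcont h0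
      exact ⟨y, hy, hVy⟩
    have hSclosed : IsClosed S := by
      have : S = Icc z x₀ ∩ V ⁻¹' {0} := by ext x; simp [hSdef]
      rw [this]
      exact hVcont.preimage_isClosed_of_isClosed isClosed_Icc isClosed_singleton
    have hScomp : IsCompact S := isCompact_Icc.of_isClosed_subset hSclosed (fun x hx => hx.1)
    set y : ℝ := sSup S with hydef
    have hyS : y ∈ S := hScomp.sSup_mem hSne
    have hyIcc : y ∈ Icc z x₀ := hyS.1
    have hVy : V y = 0 := hyS.2
    have hyx₀ : y < x₀ := lt_of_le_of_ne hyIcc.2 (fun h => by rw [h] at hVy; linarith)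
    have hym : y ∈ Ioo (-1:ℝ) 1 := hsub hyIcc
    have hVpos2 : ∀ x, y < x → x ≤ x₀ → 0 < V x := by
      intro x h1 h2
      by_contra h
      push_neg at h
      have hxm : x ∈ Icc z x₀ := ⟨le_trans hyIcc.1 (le_of_lt h1), h2⟩
      have h0 : (0:ℝ) ∈ Icc (V x) (V x₀) := ⟨h, le_of_lt hpos⟩
      obtain ⟨w, hw, hVw⟩ := intermediate_value_Icc h2 (hVcont.mono (Icc_subset_Icc hxm.1 le_rfl)) h0
      have hwS : w ∈ S := ⟨⟨le_trans hxm.1 hw.1, hw.2⟩, hVw⟩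
      have : w ≤ y := le_csSup hScomp.bddAbove hwS
      linarith [lt_of_lt_of_le h1 hw.1]
    -- min of μ on Icc y x₀
    set μ : ℝ → ℝ := fun w => (1-w) ^ (-b) * (1+w) ^ (-a) with hμdef
    have hμc : ContinuousOn μ (Icc y x₀) := by
      intro w hw
      have hwm := hsub (Icc_subset_Icc hyIcc.1 le_rfl hw)
      have h1p : (0:ℝ) < 1 - w := by linarith [hwm.2]
      have h2p : (0:ℝ) < 1 + w := by linarith [hwm.1]
      apply ContinuousAt.continuousWithinAt
      apply ContinuousAt.mul
      · exact (Real.continuousAt_rpow_const _ _ (Or.inl h1p.ne')).comp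
          (by fun_prop : ContinuousAt (fun w : ℝ => 1 - w) w)
      · exact (Real.continuousAt_rpow_const _ _ (Or.inl h2p.ne')).comp
          (by fun_prop : ContinuousAt (fun w : ℝ => 1 + w) w)
    obtain ⟨w₀, hw₀, hmin⟩ := isCompact_Icc.exists_isMinOn (nonempty_Icc.mpr (le_of_lt hyx₀)) hμc
    set m : ℝ := μ w₀ with hmdef
    have hmpos : 0 < m := by
      have hwm := hsub (Icc_subset_Icc hyIcc.1 le_rfl hw₀)
      have h1p : (0:ℝ) < 1 - w₀ := by linarith [hwm.2]
      have h2p : (0:ℝ) < 1 + w₀ := by linarith [hwm.1]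
      exact mul_pos (Real.rpow_pos_of_pos h1p _) (Real.rpow_pos_of_pos h2p _)
    have hμm : ∀ x ∈ Icc y x₀, m ≤ μ x := fun x hx => hmin hx
    -- monotone: G u ≤ G x₀ for u ∈ (y, x₀]
    have hGmono : ∀ u, y < u → u ≤ x₀ → G u ≤ G x₀ := by
      intro u h1 h2
      have := mono_on_aux (f := G) (u := u) (v := x₀) (fun x hx => by
        have hx1 : y < x := lt_of_lt_of_le h1 hx.1
        have hxm : x ∈ Ioo (-1:ℝ) 1 := ⟨lt_of_lt_of_le hym.1 (le_of_lt hx1), lt_of_le_of_lt hx.2 hx₀.2⟩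
        exact ⟨_, le_of_lt (hderiv_pos x hxm), hG x hxm (hVpos2 x hx1 hx.2).ne'⟩)
      exact this ⟨le_refl u, h2⟩ ⟨h2, le_refl x₀⟩ h2
    have hGx₀ : 0 < G x₀ := hGpos x₀ hx₀ hpos
    set ε : ℝ := m / (G x₀ + 1) with hεdef
    have hεpos : 0 < ε := div_pos hmpos (by linarith)
    -- continuity of V at y
    obtain ⟨δ, hδpos, hδ⟩ := Metric.continuousAt_iff.mp (hVc y hym) ε hεpos
    set u : ℝ := min (y + δ/2) x₀ with hudef
    have hu1 : y < u := lt_min (by linarith) hyx₀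
    have hu2 : u ≤ x₀ := min_le_right _ _
    have hud : dist u y < δ := by
      rw [Real.dist_eq, abs_of_pos (by linarith : (0:ℝ) < u - y)]
      have : u ≤ y + δ/2 := min_le_left _ _
      linarith
    have hVu : |V u| < ε := by
      have := hδ hud
      rw [hVy, Real.dist_eq, sub_zero] at this
      exact this
    have hVupos : 0 < V u := hVpos2 u hu1 hu2
    have hVuε : V u < ε := lt_of_le_of_lt (le_abs_self _) hVu
    have huIcc : u ∈ Icc y x₀ := ⟨le_of_lt hu1, hu2⟩
    have hμu : m ≤ μ u := hμm u huIcc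
    have hGu : G u = μ u / V u := rfl
    have h1 : m / V u ≤ G u := by
      rw [hGu]; gcongr
    have h2 : m / ε < m / V u := div_lt_div_of_pos_left hmpos hVupos hVuε
    have h3 : m / ε = G x₀ + 1 := by
      rw [hεdef]; field_simp
    linarith [hGmono u hu1 hu2, h1, h2, h3]

private lemma sol_zero (a b : ℝ) (ha : 0 ≤ a) (hb : 0 ≤ b) (V : ℝ → ℝ)
    (hV : ContDiffOn ℝ 1 V (Ioo (-1:ℝ) 1))
    (hode : ∀ x ∈ Ioo (-1:ℝ) 1,
      (1 - x^2) * deriv V x + ((a - b) - (a+b)*x) * V x + (1/2) * V x ^ 2 = 0) :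
    ∀ x ∈ Ioo (-1:ℝ) 1, V x = 0 := by
  intro x₀ hx₀
  by_contra hne
  rcases lt_or_gt_of_ne hne with hneg | hpos
  swap
  · exact pos_case a b ha hb V hV hode x₀ hx₀ hpos
  · -- use W x = -V(-x)
    set W : ℝ → ℝ := fun x => -V (-x) with hWdef
    have hmaps : MapsTo (fun x : ℝ => -x) (Ioo (-1:ℝ) 1) (Ioo (-1:ℝ) 1) := by
      intro x hx; constructor <;> simp <;> [linarith [hx.2]; linarith [hx.1]]
    have hWc : ContDiffOn ℝ 1 W (Ioo (-1:ℝ) 1) :=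
      (hV.comp (contDiff_neg.contDiffOn) hmaps).neg
    have hWd : ∀ x ∈ Ioo (-1:ℝ) 1, HasDerivAt W (deriv V (-x)) x := by
      intro x hx
      have hmx : -x ∈ Ioo (-1:ℝ) 1 := hmaps hx
      have hVd : HasDerivAt V (deriv V (-x)) (-x) :=
        ((hV.contDiffAt (isOpen_Ioo.mem_nhds hmx)).differentiableAt one_ne_zero).hasDerivAt
      have h1 : HasDerivAt (fun y : ℝ => V (-y)) (deriv V (-x) * (-1)) x :=
        hVd.comp x (hasDerivAt_neg x)
      have := h1.neg
      exact this.congr_deriv (by ring)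
    have hodeW : ∀ x ∈ Ioo (-1:ℝ) 1,
        (1 - x^2) * deriv W x + ((b - a) - (b+a)*x) * W x + (1/2) * W x ^ 2 = 0 := by
      intro x hx
      have hmx : -x ∈ Ioo (-1:ℝ) 1 := hmaps hx
      have hWx : W x = -V (-x) := rfl
      rw [(hWd x hx).deriv, hWx]
      have h := hode (-x) hmx
      ring_nf
      ring_nf at h
      linarith
    have hmx₀ : -x₀ ∈ Ioo (-1:ℝ) 1 := hmaps hx₀
    have hWpos : 0 < W (-x₀) := by simp [hWdef]; linarith
    exact pos_case b a hb ha W hWc hodeW (-x₀) hmx₀ hWpos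

end StarAux

/-- `U*` is the unique C¹ solution of (★) on (-1,1) when `c₃ = c̄₃(c₁,c₂)`. -/
theorem statement16 (c₁ c₂ c₃ : ℝ) (h1 : -1 ≤ c₁) (h2 : -1 ≤ c₂) (h3 : c₃ = cbar c₁ c₂) :
    IsSolOn c₁ c₂ c₃
      (fun x : ℝ => (1 + Real.sqrt (1 + c₁)) * (1 - x) + (-1 - Real.sqrt (1 + c₂)) * (1 + x))
      (Ioo (-1 : ℝ) 1) ∧
    (∀ U : ℝ → ℝ, IsSolOn c₁ c₂ c₃ U (Ioo (-1 : ℝ) 1) →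
      EqOn U
        (fun x : ℝ => (1 + Real.sqrt (1 + c₁)) * (1 - x) + (-1 - Real.sqrt (1 + c₂)) * (1 + x))
        (Ioo (-1 : ℝ) 1)) ∧
    (1 + Real.sqrt (1 + c₁)) * (1 - (-1 : ℝ)) + (-1 - Real.sqrt (1 + c₂)) * (1 + (-1 : ℝ))
      = tau2 c₁ ∧
    (1 + Real.sqrt (1 + c₁)) * (1 - (1 : ℝ)) + (-1 - Real.sqrt (1 + c₂)) * (1 + (1 : ℝ))
      = tau1' c₂ := by
  set a : ℝ := Real.sqrt (1 + c₁) with hadef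
  set b : ℝ := Real.sqrt (1 + c₂) with hbdef
  have ha : 0 ≤ a := Real.sqrt_nonneg _
  have hb : 0 ≤ b := Real.sqrt_nonneg _
  have ha2 : a ^ 2 = 1 + c₁ := Real.sq_sqrt (by linarith)
  have hb2 : b ^ 2 = 1 + c₂ := Real.sq_sqrt (by linarith)
  set Us : ℝ → ℝ := fun x : ℝ => (1 + a) * (1 - x) + (-1 - b) * (1 + x) with hUsdef
  have hUsd : ∀ x : ℝ, HasDerivAt Us (-2 - a - b) x := by
    intro x
    have h1 : HasDerivAt (fun x : ℝ => (1 + a) * (1 - x)) ((1+a) * (-1)) x :=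
      (((hasDerivAt_id x).const_sub 1).const_mul (1+a)).congr_deriv (by ring)
    have h2 : HasDerivAt (fun x : ℝ => (-1 - b) * (1 + x)) ((-1-b) * 1) x :=
      (((hasDerivAt_id x).const_add 1).const_mul (-1-b)).congr_deriv (by ring)
    exact (h1.add h2).congr_deriv (by ring)
  have hUsc : ContDiffOn ℝ 1 Us (Ioo (-1:ℝ) 1) := by
    apply ContDiff.contDiffOn
    fun_prop
  have hUseq : ∀ x ∈ Ioo (-1:ℝ) 1, StarEq c₁ c₂ c₃ Us x := by
    intro x hx
    unfold StarEq
    rw [(hUsd x).deriv, h3]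
    unfold cbar
    rw [← hadef, ← hbdef]
    simp only [hUsdef]
    linear_combination (1 - x) * ha2 + (1 + x) * hb2
  refine ⟨⟨hUsc, hUseq⟩, ?_, ?_, ?_⟩
  · -- uniqueness
    intro U hU x hx
    have hVc : ContDiffOn ℝ 1 (fun y => U y - Us y) (Ioo (-1:ℝ) 1) := hU.1.sub hUsc
    have hode : ∀ y ∈ Ioo (-1:ℝ) 1,
        (1 - y^2) * deriv (fun y => U y - Us y) y
          + ((a - b) - (a+b)*y) * (U y - Us y) + (1/2) * (U y - Us y) ^ 2 = 0 := by
      intro y hy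
      have hUd : HasDerivAt U (deriv U y) y :=
        ((hU.1.contDiffAt (isOpen_Ioo.mem_nhds hy)).differentiableAt one_ne_zero).hasDerivAt
      have hVd : HasDerivAt (fun y => U y - Us y) (deriv U y - (-2 - a - b)) y :=
        hUd.sub (hUsd y)
      rw [hVd.deriv]
      have hUeq := hU.2 y hy
      have hUseqy := hUseq y hy
      unfold StarEq at hUeq hUseqy
      rw [(hUsd y).deriv] at hUseqy
      simp only [hUsdef] at *
      linear_combination hUeq - hUseqy
    have := sol_zero a b ha hb (fun y => U y - Us y) hVc hode x hx
    have : U x - Us x = 0 := this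
    simp only [hUsdef] at this ⊢
    linarith
  · unfold tau2; rw [← hadef]; ring
  · unfold tau1'; rw [← hbdef]; ring
end
end
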